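/- arXiv:1104.0829 — 8 statements merged into one kernel-verified Lean document; each statement's English description precedes it below -/
import Mathlib

section
/- With notation as in the geodesic flow (u,v) for Christoffel symbols Γ on U' ⊆ ℝⁿ: for x ∈ U' and t in the domain J(x,0), one has u(t,x,0) = x and v(t,x,0) = 0, and the first derivatives with respect to the initial data (x,w) in direction (ξ,η) ∈ ℝⁿ × ℝⁿ are u'(t,x,0)·(ξ,η) = ξ + tη and v'(t,x,0)·(ξ,η) = η. -/
noncomputable section

open Set Metric

section AuxiliaryLemmas

variable {E' : Type*} [NormedAddCommGroup E'] [NormedSpace ℝ E'] [CompleteSpace E']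
  {U' : Set E'} {Γ : E' → E' →L[ℝ] E' →L[ℝ] E'}
  {J : E' → E' → Set ℝ} {u v : ℝ → E' → E' → E'}

open ODE in
theorem pl_exists_mem' {E : Type*} [NormedAddCommGroup E] [NormedSpace ℝ E] [CompleteSpace E]
    {f : ℝ → E → E} {tmin tmax : ℝ} {t₀ : Icc tmin tmax} {x₀ : E} {a L K : NNReal}
    (hf : IsPicardLindelof f t₀ x₀ a 0 L K) :
    ∃ α : ℝ → E, α t₀ = x₀ ∧ ∀ t ∈ Set.Icc tmin tmax,
      α t ∈ Metric.closedBall x₀ a ∧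
      HasDerivWithinAt α (f t (α t)) (Set.Icc tmin tmax) t := by
  have hx : x₀ ∈ closedBall x₀ (0 : NNReal) := mem_closedBall_self le_rfl
  obtain ⟨α, hα⟩ := FunSpace.exists_isFixedPt_next hf hx
  refine ⟨α.compProj, by rw [FunSpace.compProj_val, ← hα, FunSpace.next_apply₀], fun t ht ↦
    ⟨α.compProj_mem_closedBall hf.mul_max_le, ?_⟩⟩
  apply hasDerivWithinAt_picard_Icc t₀.2 hf.continuousOn_uncurry
    α.continuous_compProj.continuousOn (fun _ ht' ↦ α.compProj_mem_closedBall hf.mul_max_le)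
    x₀ ht |>.congr_of_mem _ ht
  intro t' ht'
  nth_rw 1 [← hα]
  rw [FunSpace.compProj_of_mem ht', FunSpace.next_apply]

theorem geo_const
    (hmax : ∀ x ∈ U', ∀ w : E', ∀ (I : Set ℝ)
      (u₁ v₁ : ℝ → E'),
      IsOpen I → I.OrdConnected → 0 ∈ I → u₁ 0 = x → v₁ 0 = w →
      (∀ t ∈ I, u₁ t ∈ U' ∧ HasDerivAt u₁ (v₁ t) t ∧
        HasDerivAt v₁ (-(Γ (u₁ t) (v₁ t) (v₁ t))) t) →
      I ⊆ J x w ∧ ∀ t ∈ I, u₁ t = u t x w ∧ v₁ t = v t x w)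
    {y : E'} (hy : y ∈ U') :
    univ ⊆ J y 0 ∧ ∀ t : ℝ, u t y 0 = y ∧ v t y 0 = 0 := by
  have h := hmax y hy 0 univ (fun _ => y) (fun _ => 0) isOpen_univ Set.ordConnected_univ
    (mem_univ _) rfl rfl (fun t _ => ⟨hy, hasDerivAt_const _ _, by
      simpa using hasDerivAt_const t (0 : E')⟩)
  exact ⟨h.1, fun t => ⟨(h.2 t (mem_univ _)).1.symm, (h.2 t (mem_univ _)).2.symm⟩⟩

theorem geo_rescale
    (hJ : ∀ x ∈ U', ∀ w : E',
      0 ∈ J x w ∧ IsOpen (J x w) ∧ (J x w).OrdConnected)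
    (hinit : ∀ x ∈ U', ∀ w : E', u 0 x w = x ∧ v 0 x w = w)
    (hsol : ∀ x ∈ U', ∀ w : E', ∀ t ∈ J x w,
      u t x w ∈ U' ∧ HasDerivAt (fun τ => u τ x w) (v t x w) t ∧
      HasDerivAt (fun τ => v τ x w) (-(Γ (u t x w) (v t x w) (v t x w))) t)
    (hmax : ∀ x ∈ U', ∀ w : E', ∀ (I : Set ℝ)
      (u₁ v₁ : ℝ → E'),
      IsOpen I → I.OrdConnected → 0 ∈ I → u₁ 0 = x → v₁ 0 = w →
      (∀ t ∈ I, u₁ t ∈ U' ∧ HasDerivAt u₁ (v₁ t) t ∧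
        HasDerivAt v₁ (-(Γ (u₁ t) (v₁ t) (v₁ t))) t) →
      I ⊆ J x w ∧ ∀ t ∈ I, u₁ t = u t x w ∧ v₁ t = v t x w)
    {y : E'} (hy : y ∈ U') (η : E') (s : ℝ) :
    ∀ τ : ℝ, s * τ ∈ J y η → τ ∈ J y (s • η) ∧
      u τ y (s • η) = u (s * τ) y η ∧ v τ y (s • η) = s • v (s * τ) y η := by
  set I : Set ℝ := (fun τ : ℝ => s * τ) ⁻¹' (J y η) with hI
  have hIopen : IsOpen I := (hJ y hy η).2.1.preimage (continuous_const.mul continuous_id)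
  have hIord : I.OrdConnected := by
    have key : ∀ a b c : ℝ, c ∈ Set.Icc a b → s * c ∈ Set.uIcc (s * a) (s * b) := by
      intro a b c hc
      rcases le_total 0 s with hs | hs
      · exact Set.mem_uIcc.2 (Or.inl ⟨mul_le_mul_of_nonneg_left hc.1 hs,
          mul_le_mul_of_nonneg_left hc.2 hs⟩)
      · exact Set.mem_uIcc.2 (Or.inr ⟨mul_le_mul_of_nonpos_left hc.2 hs,
          mul_le_mul_of_nonpos_left hc.1 hs⟩)
    exact ⟨fun a ha b hb c hc => (hJ y hy η).2.2.uIcc_subset ha hb (key a b c hc)⟩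
  have h0 : (0 : ℝ) ∈ I := by
    simp only [hI, Set.mem_preimage, mul_zero]
    exact (hJ y hy η).1
  set u₁ : ℝ → E' := fun τ => u (s * τ) y η with hu₁
  set v₁ : ℝ → E' := fun τ => s • v (s * τ) y η with hv₁
  have hu₁0 : u₁ 0 = y := by simp [hu₁, (hinit y hy η).1]
  have hv₁0 : v₁ 0 = s • η := by simp [hv₁, (hinit y hy η).2]
  have hkey : ∀ τ ∈ I, u₁ τ ∈ U' ∧ HasDerivAt u₁ (v₁ τ) τ ∧
      HasDerivAt v₁ (-(Γ (u₁ τ) (v₁ τ) (v₁ τ))) τ := by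
    intro τ hτ
    have hτ' : s * τ ∈ J y η := hτ
    obtain ⟨hmem, hdu, hdv⟩ := hsol y hy η (s * τ) hτ'
    have hlin : HasDerivAt (fun σ : ℝ => s * σ) s τ := by
      simpa using (hasDerivAt_id τ).const_mul s
    have hdu' : HasDerivAt u₁ (s • v (s * τ) y η) τ := hdu.scomp τ hlin
    have hdv' : HasDerivAt (fun σ : ℝ => v (s * σ) y η)
        (s • -(Γ (u (s * τ) y η) (v (s * τ) y η) (v (s * τ) y η))) τ := hdv.scomp τ hlin
    refine ⟨hmem, hdu', ?_⟩
    have := hdv'.const_smul s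
    convert this using 1
    show -(Γ (u (s * τ) y η) (s • v (s * τ) y η) (s • v (s * τ) y η)) = _
    simp only [map_smul, ContinuousLinearMap.smul_apply, smul_neg, smul_smul]
    rfl
  have h := hmax y hy (s • η) I u₁ v₁ hIopen hIord h0 hu₁0 hv₁0 hkey
  intro τ hτ
  exact ⟨h.1 hτ, (h.2 τ hτ).1.symm, (h.2 τ hτ).2.symm⟩


theorem geo_uniform [ProperSpace E'] (hU' : IsOpen U') (hΓ : ContDiffOn ℝ (⊤ : ℕ∞) Γ U')
    (hmax : ∀ x ∈ U', ∀ w : E', ∀ (I : Set ℝ)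
      (u₁ v₁ : ℝ → E'),
      IsOpen I → I.OrdConnected → 0 ∈ I → u₁ 0 = x → v₁ 0 = w →
      (∀ t ∈ I, u₁ t ∈ U' ∧ HasDerivAt u₁ (v₁ t) t ∧
        HasDerivAt v₁ (-(Γ (u₁ t) (v₁ t) (v₁ t))) t) →
      I ⊆ J x w ∧ ∀ t ∈ I, u₁ t = u t x w ∧ v₁ t = v t x w)
    {x : E'} (hx : x ∈ U') :
    ∃ r > (0:ℝ), ∃ a > (0:ℝ), Metric.ball x r ⊆ U' ∧
      ∀ y ∈ Metric.closedBall x r, ∀ η : E', ‖η‖ ≤ 2 →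
        Set.Ioo (-a) a ⊆ J y η := by
  classical
  set F : E' × E' → E' × E' := fun p => (p.2, -(Γ p.1 p.2 p.2)) with hF
  obtain ⟨ε, hε, hballU⟩ : ∃ ε > 0, Metric.ball x ε ⊆ U' := Metric.isOpen_iff.1 hU' x hx
  set r : ℝ := min 1 (ε/4) with hrdef
  have hr : 0 < r := lt_min one_pos (by linarith)
  have hr1 : r ≤ 1 := min_le_left _ _
  have hrε : r ≤ ε / 4 := min_le_right _ _
  have hsub3 : Metric.closedBall x (3*r) ⊆ U' :=
    (Metric.closedBall_subset_ball (by linarith)).trans hballU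
  have hsubU : Metric.closedBall x r ⊆ U' :=
    (Metric.closedBall_subset_ball (by linarith)).trans hballU
  have hopen : IsOpen (U' ×ˢ (univ : Set E')) := hU'.prod isOpen_univ
  have hFs : ContDiffOn ℝ (⊤ : ℕ∞) F (U' ×ˢ (univ : Set E')) := by
    refine ContDiffOn.prodMk ?_ (ContDiffOn.neg ?_)
    · exact contDiff_snd.contDiffOn
    · have h1 : ContDiffOn ℝ (⊤ : ℕ∞) (fun p : E' × E' => Γ p.1) (U' ×ˢ (univ : Set E')) :=
        hΓ.comp contDiff_fst.contDiffOn (fun p hp => hp.1)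
      exact (h1.clm_apply contDiff_snd.contDiffOn).clm_apply contDiff_snd.contDiffOn
  set D : Set (E' × E') := Metric.closedBall x (2*r) ×ˢ Metric.closedBall (0:E') 3 with hD
  have hDsub : D ⊆ U' ×ˢ (univ : Set E') := by
    refine Set.prod_mono ?_ (Set.subset_univ _)
    exact (Metric.closedBall_subset_closedBall (by linarith)).trans hsub3
  have hDcompact : IsCompact D :=
    (isCompact_closedBall _ _).prod (isCompact_closedBall _ _)
  have hcontfd : ContinuousOn (fderiv ℝ F) (U' ×ˢ (univ : Set E')) :=
    hFs.continuousOn_fderiv_of_isOpen hopen (by exact_mod_cast le_top)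
  obtain ⟨K, hK⟩ := hDcompact.exists_bound_of_continuousOn (hcontfd.mono hDsub)
  set L : NNReal := K.toNNReal with hLdef
  obtain ⟨C0, hC0⟩ := hDcompact.exists_bound_of_continuousOn (hFs.continuousOn.mono hDsub)
  set C : ℝ := max C0 1 with hCdef
  have hC : 0 < C := lt_of_lt_of_le one_pos (le_max_right _ _)
  set a : ℝ := r / C with hadef
  have ha : 0 < a := div_pos hr hC
  refine ⟨r, hr, a, ha, (Metric.ball_subset_ball (by linarith)).trans hballU, ?_⟩
  intro y hy η hη
  have hyU : y ∈ U' := hsubU hy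
  -- the Picard-Lindelöf ball around (y, η) sits inside D
  have hball : Metric.closedBall ((y, η) : E' × E') r ⊆ D := by
    intro p hp
    rw [Metric.mem_closedBall, Prod.dist_eq, max_le_iff] at hp
    constructor
    · rw [Metric.mem_closedBall]
      calc dist p.1 x ≤ dist p.1 y + dist y x := dist_triangle _ _ _
        _ ≤ r + r := add_le_add hp.1 hy
        _ = 2 * r := by ring
    · rw [Metric.mem_closedBall]
      calc dist p.2 0 ≤ dist p.2 η + dist η 0 := dist_triangle _ _ _
        _ ≤ r + 2 := add_le_add hp.2 (by simpa [dist_eq_norm] using hη)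
        _ ≤ 3 := by linarith
  -- Lipschitz bound on that ball
  have hlip : LipschitzOnWith L F (Metric.closedBall ((y, η) : E' × E') r) := by
    refine (convex_closedBall _ _).lipschitzOnWith_of_nnnorm_hasFDerivWithin_le
      (f' := fun p => fderiv ℝ F p) (fun p hp => ?_) (fun p hp => ?_)
    · have hdiff : DifferentiableAt ℝ F p := by
        have := (hFs.contDiffAt (hopen.mem_nhds (hDsub (hball hp))))
        exact this.differentiableAt (by simp)
      exact hdiff.hasFDerivAt.hasFDerivWithinAt
    · have h1 := hK p (hball hp)
      rw [← NNReal.coe_le_coe, coe_nnnorm, Real.coe_toNNReal']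
      exact h1.trans (le_max_left _ _)
  -- Picard–Lindelöf data
  have hpl : IsPicardLindelof (fun _ p => F p) (tmin := -a) (tmax := a)
      ⟨0, by constructor <;> [linarith; linarith]⟩ (y, η) ⟨r, hr.le⟩ 0 ⟨C, hC.le⟩ L :=
    IsPicardLindelof.of_time_independent
      (fun p hp => (hC0 p (hball hp)).trans (le_max_left _ _)) hlip (by
        show C * max (a - 0) (0 - -a) ≤ r - 0
        simp only [sub_zero, zero_sub, neg_neg, max_self]
        rw [hadef, mul_div_cancel₀ _ hC.ne'])
  obtain ⟨α, hα0, hαsol⟩ := pl_exists_mem' hpl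
  have hα0' : α 0 = (y, η) := hα0
  set u₁ : ℝ → E' := fun τ => (α τ).1 with hu₁
  set v₁ : ℝ → E' := fun τ => (α τ).2 with hv₁
  have hkey : ∀ τ ∈ Set.Ioo (-a) a, u₁ τ ∈ U' ∧ HasDerivAt u₁ (v₁ τ) τ ∧
      HasDerivAt v₁ (-(Γ (u₁ τ) (v₁ τ) (v₁ τ))) τ := by
    intro τ hτ
    obtain ⟨hmem, hder⟩ := hαsol τ (Set.Ioo_subset_Icc_self hτ)
    have hd : HasDerivAt α (F (α τ)) τ := hder.hasDerivAt (Icc_mem_nhds hτ.1 hτ.2)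
    have hmemD : α τ ∈ D := hball hmem
    refine ⟨?_, ?_, ?_⟩
    · exact hsub3 ((Metric.closedBall_subset_closedBall (by linarith)) hmemD.1)
    · have := ((ContinuousLinearMap.fst ℝ E' E').hasFDerivAt).comp_hasDerivAt τ hd
      exact this
    · have := ((ContinuousLinearMap.snd ℝ E' E').hasFDerivAt).comp_hasDerivAt τ hd
      exact this
  have h := hmax y hyU η (Set.Ioo (-a) a) u₁ v₁ isOpen_Ioo Set.ordConnected_Ioo
    (by constructor <;> [linarith; linarith])
    (by simp [hu₁, hα0']) (by simp [hv₁, hα0']) hkey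
  exact h.1

end AuxiliaryLemmas

/-- For the geodesic flow `(u,v)` of smooth Christoffel symbols `Γ` on an open
`U' ⊆ ℝⁿ`: for `x ∈ U'` and `t ∈ J(x,0)` one has `u(t,x,0) = x`, `v(t,x,0) = 0`, and the first
derivatives with respect to the initial data `(x,w)` in direction `(ξ,η)` are
`u'(t,x,0)·(ξ,η) = ξ + t·η` and `v'(t,x,0)·(ξ,η) = η`. -/
theorem geodesic_flow_first_derivatives
    {n : ℕ} (U' : Set (EuclideanSpace ℝ (Fin n))) (hU' : IsOpen U')
    (Γ : EuclideanSpace ℝ (Fin n) →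
      EuclideanSpace ℝ (Fin n) →L[ℝ] EuclideanSpace ℝ (Fin n) →L[ℝ] EuclideanSpace ℝ (Fin n))
    (hΓ : ContDiffOn ℝ (⊤ : ℕ∞) Γ U')
    (J : EuclideanSpace ℝ (Fin n) → EuclideanSpace ℝ (Fin n) → Set ℝ)
    (u v : ℝ → EuclideanSpace ℝ (Fin n) → EuclideanSpace ℝ (Fin n) → EuclideanSpace ℝ (Fin n))
    (hJ : ∀ x ∈ U', ∀ w : EuclideanSpace ℝ (Fin n),
      0 ∈ J x w ∧ IsOpen (J x w) ∧ (J x w).OrdConnected)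
    (hinit : ∀ x ∈ U', ∀ w : EuclideanSpace ℝ (Fin n), u 0 x w = x ∧ v 0 x w = w)
    (hsol : ∀ x ∈ U', ∀ w : EuclideanSpace ℝ (Fin n), ∀ t ∈ J x w,
      u t x w ∈ U' ∧ HasDerivAt (fun τ => u τ x w) (v t x w) t ∧
      HasDerivAt (fun τ => v τ x w) (-(Γ (u t x w) (v t x w) (v t x w))) t)
    (hmax : ∀ x ∈ U', ∀ w : EuclideanSpace ℝ (Fin n), ∀ (I : Set ℝ)
      (u₁ v₁ : ℝ → EuclideanSpace ℝ (Fin n)),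
      IsOpen I → I.OrdConnected → 0 ∈ I → u₁ 0 = x → v₁ 0 = w →
      (∀ t ∈ I, u₁ t ∈ U' ∧ HasDerivAt u₁ (v₁ t) t ∧
        HasDerivAt v₁ (-(Γ (u₁ t) (v₁ t) (v₁ t))) t) →
      I ⊆ J x w ∧ ∀ t ∈ I, u₁ t = u t x w ∧ v₁ t = v t x w)
    -- `(u,v)` is smooth on its (open) domain of definition
    (hsmooth : ContDiffOn ℝ (⊤ : ℕ∞)
      (fun p : ℝ × EuclideanSpace ℝ (Fin n) × EuclideanSpace ℝ (Fin n) =>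
        (u p.1 p.2.1 p.2.2, v p.1 p.2.1 p.2.2))
      {p : ℝ × EuclideanSpace ℝ (Fin n) × EuclideanSpace ℝ (Fin n) |
        p.2.1 ∈ U' ∧ p.1 ∈ J p.2.1 p.2.2}) :
    ∀ x ∈ U', ∀ t ∈ J x 0,
      u t x 0 = x ∧ v t x 0 = 0 ∧
      ∀ ξ η : EuclideanSpace ℝ (Fin n),
        fderiv ℝ (fun q : EuclideanSpace ℝ (Fin n) × EuclideanSpace ℝ (Fin n) =>
          u t q.1 q.2) (x, 0) (ξ, η) = ξ + t • η ∧
        fderiv ℝ (fun q : EuclideanSpace ℝ (Fin n) × EuclideanSpace ℝ (Fin n) =>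
          v t q.1 q.2) (x, 0) (ξ, η) = η := by
  intro x hx t ht
  let E := EuclideanSpace ℝ (Fin n)
  obtain ⟨hJuniv, hconst⟩ := geo_const hmax hx
  refine ⟨(hconst t).1, (hconst t).2, ?_⟩
  -- a neighbourhood of `(t, x, 0)` inside the domain of the flow
  obtain ⟨r, hr, a, ha, hballU, hexist⟩ := geo_uniform hU' hΓ hmax hx
  set T : ℝ := |t| + 1 with hT
  have hT1 : (1:ℝ) ≤ T := by rw [hT]; linarith [abs_nonneg t]
  have hT0 : (0:ℝ) < T := by linarith
  set δ : ℝ := a / T with hδ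
  have hδ0 : 0 < δ := div_pos ha hT0
  set S : Set (ℝ × E × E) :=
    {p : ℝ × E × E | p.2.1 ∈ U' ∧ p.1 ∈ J p.2.1 p.2.2} with hS
  have hWsub : (Set.Ioo (-T) T ×ˢ (Metric.ball x r ×ˢ Metric.ball (0:E) δ)) ⊆ S := by
    rintro ⟨τ, y, w⟩ ⟨hτ, hy, hw⟩
    have hyU : y ∈ U' := hballU hy
    refine ⟨hyU, ?_⟩
    rcases eq_or_ne w 0 with rfl | hw0
    · exact (geo_const hmax hyU).1 (Set.mem_univ _)
    · have hwn : 0 < ‖w‖ := norm_pos_iff.2 hw0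
      set η : E := ‖w‖⁻¹ • w with hη
      have hηn : ‖η‖ ≤ 2 := by
        rw [hη, norm_smul, norm_inv, norm_norm, inv_mul_cancel₀ hwn.ne']
        norm_num
      have hIoo := hexist y (Metric.ball_subset_closedBall hy) η hηn
      have hwδ : ‖w‖ < δ := by
        rw [Metric.mem_ball, dist_zero_right] at hw
        exact hw
      have hst : ‖w‖ * τ ∈ Set.Ioo (-a) a := by
        rw [Set.mem_Ioo, ← abs_lt, abs_mul, abs_norm]
        calc ‖w‖ * |τ| < δ * T := by
              rcases eq_or_lt_of_le (abs_nonneg τ) with h0 | h0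
              · rw [← h0, mul_zero]; positivity
              · apply mul_lt_mul'' hwδ _ (norm_nonneg w) (abs_nonneg τ)
                rw [abs_lt]
                exact ⟨hτ.1, hτ.2⟩
          _ = a := by rw [hδ]; field_simp
      have := geo_rescale hJ hinit hsol hmax hyU η ‖w‖ τ (hIoo hst)
      rw [hη, smul_inv_smul₀ hwn.ne'] at this
      exact this.1
  have hSnhds : S ∈ nhds ((t, x, (0:E)) : ℝ × E × E) := by
    refine Filter.mem_of_superset ?_ hWsub
    refine IsOpen.mem_nhds (isOpen_Ioo.prod (Metric.isOpen_ball.prod Metric.isOpen_ball)) ?_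
    refine ⟨?_, Metric.mem_ball_self hr, Metric.mem_ball_self hδ0⟩
    constructor
    · have := neg_abs_le t; simp only [hT]; linarith
    · have := le_abs_self t; simp only [hT]; linarith
  -- differentiability of the flow at `(t, x, 0)`
  have hCD : ContDiffAt ℝ (⊤ : ℕ∞)
      (fun p : ℝ × E × E => (u p.1 p.2.1 p.2.2, v p.1 p.2.1 p.2.2)) (t, x, (0:E)) :=
    hsmooth.contDiffAt hSnhds
  have hΦdiff : DifferentiableAt ℝ
      (fun p : ℝ × E × E => (u p.1 p.2.1 p.2.2, v p.1 p.2.1 p.2.2)) (t, x, (0:E)) :=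
    hCD.differentiableAt (by simp)
  have hιdiff : DifferentiableAt ℝ (fun q : E × E => ((t, q) : ℝ × E × E)) (x, (0:E)) :=
    DifferentiableAt.prodMk (differentiableAt_const t) differentiableAt_id
  have hpair : DifferentiableAt ℝ
      (fun q : E × E => (u t q.1 q.2, v t q.1 q.2)) (x, (0:E)) := hΦdiff.comp _ hιdiff
  have hu_diff : DifferentiableAt ℝ (fun q : E × E => u t q.1 q.2) (x, (0:E)) := hpair.fst
  have hv_diff : DifferentiableAt ℝ (fun q : E × E => v t q.1 q.2) (x, (0:E)) := hpair.snd
  intro ξ η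
  set fu : E × E → E := fun q => u t q.1 q.2 with hfu
  set fv : E × E → E := fun q => v t q.1 q.2 with hfv
  set Du := fderiv ℝ fu ((x, (0:E)) : E × E) with hDu
  set Dv := fderiv ℝ fv ((x, (0:E)) : E × E) with hDv
  have hfuF : HasFDerivAt fu Du (x, (0:E)) := hu_diff.hasFDerivAt
  have hfvF : HasFDerivAt fv Dv (x, (0:E)) := hv_diff.hasFDerivAt
  have hdir : ∀ (f : E × E → E) (Df : E × E →L[ℝ] E), HasFDerivAt f Df ((x, (0:E)) : E × E) →
      ∀ d : E × E, HasDerivAt (fun σ : ℝ => f ((x, (0:E)) + σ • d)) (Df d) 0 := by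
    intro f Df hf d
    have hg : HasDerivAt (fun σ : ℝ => ((x, (0:E)) : E × E) + σ • d) d 0 := by
      simpa using ((hasDerivAt_id (0:ℝ)).smul_const d).const_add ((x, (0:E)) : E × E)
    have hf' : HasFDerivAt f Df (((x, (0:E)) : E × E) + (0:ℝ) • d) := by
      rw [zero_smul, add_zero]; exact hf
    exact hf'.comp_hasDerivAt 0 hg
  -- derivative in the `ξ` direction
  have hUnbhd : ∀ᶠ σ : ℝ in nhds 0, x + σ • ξ ∈ U' := by
    have hcont : Continuous (fun σ : ℝ => x + σ • ξ) :=
      continuous_const.add (continuous_id.smul continuous_const)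
    have : (fun σ : ℝ => x + σ • ξ) 0 ∈ U' := by simpa using hx
    exact hcont.continuousAt.eventually_mem (hU'.mem_nhds this)
  have hDuξ : Du (ξ, (0:E)) = ξ := by
    have h1 := hdir fu Du hfuF (ξ, (0:E))
    have h2 : HasDerivAt (fun σ : ℝ => fu ((x, (0:E)) + σ • ((ξ, (0:E)) : E × E))) ξ 0 := by
      have hknown : HasDerivAt (fun σ : ℝ => x + σ • ξ) ξ 0 := by
        simpa using ((hasDerivAt_id (0:ℝ)).smul_const ξ).const_add x
      refine hknown.congr_of_eventuallyEq ?_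
      filter_upwards [hUnbhd] with σ hσ
      have : ((x, (0:E)) : E × E) + σ • ((ξ, (0:E)) : E × E) = (x + σ • ξ, (0:E)) := by
        simp [Prod.ext_iff]
      rw [hfu]
      simp only [this]
      exact ((geo_const hmax hσ).2 t).1
    exact h1.unique h2
  have hDvξ : Dv (ξ, (0:E)) = 0 := by
    have h1 := hdir fv Dv hfvF (ξ, (0:E))
    have h2 : HasDerivAt (fun σ : ℝ => fv ((x, (0:E)) + σ • ((ξ, (0:E)) : E × E)))
        (0 : E) 0 := by
      refine (hasDerivAt_const (0:ℝ) (0:E)).congr_of_eventuallyEq ?_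
      filter_upwards [hUnbhd] with σ hσ
      have : ((x, (0:E)) : E × E) + σ • ((ξ, (0:E)) : E × E) = (x + σ • ξ, (0:E)) := by
        simp [Prod.ext_iff]
      rw [hfv]
      simp only [this]
      exact ((geo_const hmax hσ).2 t).2
    exact h1.unique h2
  -- derivative in the `η` direction
  have hJη := hJ x hx η
  have h0η : (0:ℝ) ∈ J x η := hJη.1
  have hOnbhd : ∀ᶠ σ : ℝ in nhds 0, σ * t ∈ J x η := by
    have hcont : Continuous (fun σ : ℝ => σ * t) := continuous_id.mul continuous_const
    have h00 : (fun σ : ℝ => σ * t) 0 ∈ J x η := by simpa using h0η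
    exact hcont.continuousAt.eventually_mem (hJη.2.1.mem_nhds h00)
  have hsol0 := hsol x hx η 0 h0η
  have hv0η : v 0 x η = η := (hinit x hx η).2
  have hlin : HasDerivAt (fun σ : ℝ => σ * t) t 0 := by
    simpa using (hasDerivAt_id (0:ℝ)).mul_const t
  have hu_time : HasDerivAt (fun τ => u τ x η) (v 0 x η) ((0:ℝ) * t) := by
    rw [zero_mul]; exact hsol0.2.1
  have hv_time : HasDerivAt (fun τ => v τ x η)
      (-(Γ (u 0 x η) (v 0 x η) (v 0 x η))) ((0:ℝ) * t) := by
    rw [zero_mul]; exact hsol0.2.2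
  have hcurve_u : HasDerivAt (fun σ : ℝ => u (σ * t) x η) (t • v 0 x η) 0 :=
    by have := hu_time.scomp 0 hlin; exact this
  have hcurve_v : HasDerivAt (fun σ : ℝ => v (σ * t) x η)
      (t • -(Γ (u 0 x η) (v 0 x η) (v 0 x η))) 0 := by
    have := hv_time.scomp 0 hlin; exact this
  have hDuη : Du ((0:E), η) = t • η := by
    have h1 := hdir fu Du hfuF ((0:E), η)
    have h2 : HasDerivAt (fun σ : ℝ => fu ((x, (0:E)) + σ • (((0:E), η) : E × E)))
        (t • η) 0 := by
      have hknown : HasDerivAt (fun σ : ℝ => u (σ * t) x η) (t • η) 0 := by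
        have h3 := hcurve_u
        rw [hv0η] at h3
        exact h3
      refine hknown.congr_of_eventuallyEq ?_
      filter_upwards [hOnbhd] with σ hσ
      have hpt : ((x, (0:E)) : E × E) + σ • (((0:E), η) : E × E) = (x, σ • η) := by
        simp [Prod.ext_iff]
      rw [hfu]
      simp only [hpt]
      exact (geo_rescale hJ hinit hsol hmax hx η σ t hσ).2.1
    exact h1.unique h2
  have hDvη : Dv ((0:E), η) = η := by
    have h1 := hdir fv Dv hfvF ((0:E), η)
    have h2 : HasDerivAt (fun σ : ℝ => fv ((x, (0:E)) + σ • (((0:E), η) : E × E))) η 0 := by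
      have hknown : HasDerivAt (fun σ : ℝ => σ • v (σ * t) x η)
          ((0:ℝ) • (t • -(Γ (u 0 x η) (v 0 x η) (v 0 x η))) + (1:ℝ) • v ((0:ℝ) * t) x η) 0 := by
        have hid : HasDerivAt (fun σ : ℝ => σ) (1:ℝ) 0 := hasDerivAt_id 0
        exact hid.smul hcurve_v
      have hknown' : HasDerivAt (fun σ : ℝ => σ • v (σ * t) x η) η 0 := by
        convert hknown using 1
        rw [zero_smul, one_smul, zero_mul, hv0η, zero_add]
      refine hknown'.congr_of_eventuallyEq ?_
      filter_upwards [hOnbhd] with σ hσ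
      have hpt : ((x, (0:E)) : E × E) + σ • (((0:E), η) : E × E) = (x, σ • η) := by
        simp [Prod.ext_iff]
      rw [hfv]
      simp only [hpt]
      exact (geo_rescale hJ hinit hsol hmax hx η σ t hσ).2.2
    exact h1.unique h2
  have hsplit : ((ξ, η) : E × E) = ((ξ, (0:E)) : E × E) + (((0:E), η) : E × E) := by
    simp [Prod.ext_iff]
  constructor
  · show Du (ξ, η) = ξ + t • η
    rw [hsplit, map_add, hDuξ, hDuη]
  · show Dv (ξ, η) = η
    rw [hsplit, map_add, hDvξ, hDvη, zero_add]
end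
end

section
/- With w(x,y) the initial-velocity map of the geodesic endpoint inverse as above, the second derivative of w at a diagonal point satisfies w''(x,x)·((ξ₁,η₁),(ξ₂,η₂)) = (1/2)·(Γ(x)(η₁−ξ₁, η₂−ξ₂) + Γ(x)(η₂−ξ₂, η₁−ξ₁)) for all ξᵢ, ηᵢ ∈ ℝⁿ. -/
noncomputable section

/-- With `wmap(x,y)` the initial-velocity map of the inverse of the geodesic
endpoint map `G(x,w) = (x, u1(x,w))` for a smooth Christoffel symbol `Γ`, the second derivative
at a diagonal point satisfies
`wmap''(x,x)·((ξ₁,η₁),(ξ₂,η₂)) = (1/2)(Γ(x)(η₁−ξ₁,η₂−ξ₂) + Γ(x)(η₂−ξ₂,η₁−ξ₁))`,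
given the first and second derivatives of `u1` at `(y,0)`:
`u1'(y,0)·(ξ,η) = ξ + η` and `u1''(y,0)·((ξ₁,η₁),(ξ₂,η₂)) = −(1/2)(Γ(y)(η₁,η₂)+Γ(y)(η₂,η₁))`. -/
theorem initial_velocity_second_derivative
    {n : ℕ} (V : Set (EuclideanSpace ℝ (Fin n))) (hV : IsOpen V)
    (x : EuclideanSpace ℝ (Fin n)) (hx : x ∈ V)
    (Γ : EuclideanSpace ℝ (Fin n) →
      EuclideanSpace ℝ (Fin n) →L[ℝ] EuclideanSpace ℝ (Fin n) →L[ℝ] EuclideanSpace ℝ (Fin n))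
    (u1 wmap : EuclideanSpace ℝ (Fin n) → EuclideanSpace ℝ (Fin n) → EuclideanSpace ℝ (Fin n))
    (W : Set (EuclideanSpace ℝ (Fin n) × EuclideanSpace ℝ (Fin n))) (hW : IsOpen W)
    (hmem : ∀ y ∈ V, ∀ z ∈ V, (y, wmap y z) ∈ W)
    (hu1smooth : ContDiffOn ℝ (⊤ : ℕ∞)
      (fun q : EuclideanSpace ℝ (Fin n) × EuclideanSpace ℝ (Fin n) => u1 q.1 q.2) W)
    (hval : ∀ y ∈ V, u1 y 0 = y)
    (hu1der : ∀ y ∈ V, ∀ ξ η : EuclideanSpace ℝ (Fin n),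
      fderiv ℝ (fun q : EuclideanSpace ℝ (Fin n) × EuclideanSpace ℝ (Fin n) =>
        u1 q.1 q.2) (y, 0) (ξ, η) = ξ + η)
    (hu1der2 : ∀ y ∈ V, ∀ ξ₁ η₁ ξ₂ η₂ : EuclideanSpace ℝ (Fin n),
      fderiv ℝ (fun q : EuclideanSpace ℝ (Fin n) × EuclideanSpace ℝ (Fin n) =>
          fderiv ℝ (fun q' : EuclideanSpace ℝ (Fin n) × EuclideanSpace ℝ (Fin n) =>
            u1 q'.1 q'.2) q) (y, 0) (ξ₁, η₁) (ξ₂, η₂)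
        = -((1 / 2 : ℝ) • (Γ y η₁ η₂ + Γ y η₂ η₁)))
    (hwsmooth : ContDiffOn ℝ (⊤ : ℕ∞)
      (fun q : EuclideanSpace ℝ (Fin n) × EuclideanSpace ℝ (Fin n) => wmap q.1 q.2) (V ×ˢ V))
    (hinv : ∀ y ∈ V, ∀ z ∈ V, u1 y (wmap y z) = z)
    (hdiag : ∀ y ∈ V, wmap y y = 0) :
    ∀ ξ₁ η₁ ξ₂ η₂ : EuclideanSpace ℝ (Fin n),
      fderiv ℝ (fun q : EuclideanSpace ℝ (Fin n) × EuclideanSpace ℝ (Fin n) =>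
          fderiv ℝ (fun q' : EuclideanSpace ℝ (Fin n) × EuclideanSpace ℝ (Fin n) =>
            wmap q'.1 q'.2) q) (x, x) (ξ₁, η₁) (ξ₂, η₂)
        = (1 / 2 : ℝ) • (Γ x (η₁ - ξ₁) (η₂ - ξ₂) + Γ x (η₂ - ξ₂) (η₁ - ξ₁)) := by
  intro ξ₁ η₁ ξ₂ η₂
  have hone : ((⊤ : ℕ∞) : WithTop ℕ∞) ≠ 0 := by simp
  set F : (EuclideanSpace ℝ (Fin n) × EuclideanSpace ℝ (Fin n)) → EuclideanSpace ℝ (Fin n) :=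
    fun q => u1 q.1 q.2 with hFdef
  set Wm : (EuclideanSpace ℝ (Fin n) × EuclideanSpace ℝ (Fin n)) → EuclideanSpace ℝ (Fin n) :=
    fun q => wmap q.1 q.2 with hWmdef
  set H : (EuclideanSpace ℝ (Fin n) × EuclideanSpace ℝ (Fin n)) →
      (EuclideanSpace ℝ (Fin n) × EuclideanSpace ℝ (Fin n)) :=
    fun q => (q.1, Wm q) with hHdef
  have hVV : IsOpen (V ×ˢ V) := hV.prod hV
  have hq0 : ((x, x) : EuclideanSpace ℝ (Fin n) × EuclideanSpace ℝ (Fin n)) ∈ V ×ˢ V := ⟨hx, hx⟩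
  have hHq0 : H (x, x) = (x, 0) := by simp [hHdef, hWmdef, hdiag x hx]
  have hWmq : ∀ q ∈ V ×ˢ V, ContDiffAt ℝ (⊤ : ℕ∞) Wm q := fun q hq =>
    hwsmooth.contDiffAt (hVV.mem_nhds hq)
  have hFq : ∀ q ∈ V ×ˢ V, ContDiffAt ℝ (⊤ : ℕ∞) F (H q) := by
    intro q hq
    exact hu1smooth.contDiffAt (hW.mem_nhds (hmem q.1 hq.1 q.2 hq.2))
  have hHdiff : ∀ q ∈ V ×ˢ V, HasFDerivAt H
      ((ContinuousLinearMap.fst ℝ (EuclideanSpace ℝ (Fin n)) (EuclideanSpace ℝ (Fin n))).prod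
        (fderiv ℝ Wm q)) q := by
    intro q hq
    exact HasFDerivAt.prodMk hasFDerivAt_fst (((hWmq q hq).differentiableAt hone).hasFDerivAt)
  have hFH : ∀ q ∈ V ×ˢ V, (fun p => F (H p)) =ᶠ[nhds q] Prod.snd := by
    intro q hq
    filter_upwards [hVV.mem_nhds hq] with p hp
    simpa [hFdef, hHdef, hWmdef] using hinv p.1 hp.1 p.2 hp.2
  have hchain : ∀ q ∈ V ×ˢ V,
      (fderiv ℝ F (H q)).comp (fderiv ℝ H q)
        = ContinuousLinearMap.snd ℝ (EuclideanSpace ℝ (Fin n)) (EuclideanSpace ℝ (Fin n)) := by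
    intro q hq
    have h1 : fderiv ℝ (fun p => F (H p)) q
        = (fderiv ℝ F (H q)).comp (fderiv ℝ H q) :=
      fderiv_comp q ((hFq q hq).differentiableAt hone) ((hHdiff q hq).differentiableAt)
    have h2 : fderiv ℝ (fun p => F (H p)) q = fderiv ℝ (Prod.snd) q :=
      (hFH q hq).fderiv_eq
    rw [← h1, h2, fderiv_snd]
  have hDH0 : fderiv ℝ H (x, x)
      = (ContinuousLinearMap.fst ℝ (EuclideanSpace ℝ (Fin n)) (EuclideanSpace ℝ (Fin n))).prod
        (fderiv ℝ Wm (x, x)) :=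
    (hHdiff _ hq0).fderiv
  have hDw : ∀ ξ η : EuclideanSpace ℝ (Fin n), fderiv ℝ Wm (x, x) (ξ, η) = η - ξ := by
    intro ξ η
    have h := congrFun (congrArg DFunLike.coe (hchain _ hq0)) (ξ, η)
    rw [hDH0, hHq0] at h
    simp only [ContinuousLinearMap.coe_comp', Function.comp_apply,
      ContinuousLinearMap.prod_apply, ContinuousLinearMap.coe_fst',
      ContinuousLinearMap.coe_snd'] at h
    have h' : ξ + fderiv ℝ Wm (x, x) (ξ, η) = η := by
      rw [← hu1der x hx ξ (fderiv ℝ Wm (x, x) (ξ, η))]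
      exact h
    exact eq_sub_of_add_eq' h'
  -- second order data
  have htop : ((⊤ : ℕ∞) : WithTop ℕ∞) + 1 ≤ ((⊤ : ℕ∞) : WithTop ℕ∞) := by
    exact_mod_cast le_top
  have hFat : ContDiffAt ℝ (⊤ : ℕ∞) F (x, 0) := by
    have := hFq _ hq0
    rwa [hHq0] at this
  have hB : HasFDerivAt (fderiv ℝ F)
      (fderiv ℝ (fun q => fderiv ℝ F q) (x, 0)) (x, 0) :=
    ((hFat.fderiv_right htop).differentiableAt hone).hasFDerivAt
  have hg : HasFDerivAt (fderiv ℝ Wm)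
      (fderiv ℝ (fun q => fderiv ℝ Wm q) (x, x)) (x, x) :=
    (((hWmq _ hq0).fderiv_right htop).differentiableAt hone).hasFDerivAt
  set B := fderiv ℝ (fun q => fderiv ℝ F q) (x, 0) with hBdef
  set g' := fderiv ℝ (fun q => fderiv ℝ Wm q) (x, x) with hg'def
  -- derivative of q ↦ fderiv F (H q)
  have hB' : HasFDerivAt (fderiv ℝ F) B (H (x, x)) := by rwa [hHq0]
  have hc : HasFDerivAt (fun q => fderiv ℝ F (H q))
      (B.comp (fderiv ℝ H (x, x))) (x, x) :=
    hB'.comp (x, x) (hHdiff _ hq0).differentiableAt.hasFDerivAt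
  -- derivative of q ↦ fderiv H q
  set R := ContinuousLinearMap.inr ℝ (EuclideanSpace ℝ (Fin n)) (EuclideanSpace ℝ (Fin n))
    with hRdef
  set K := (ContinuousLinearMap.inl ℝ (EuclideanSpace ℝ (Fin n)) (EuclideanSpace ℝ (Fin n))).comp
    (ContinuousLinearMap.fst ℝ (EuclideanSpace ℝ (Fin n)) (EuclideanSpace ℝ (Fin n))) with hKdef
  set compR := ContinuousLinearMap.compL ℝ
    (EuclideanSpace ℝ (Fin n) × EuclideanSpace ℝ (Fin n)) (EuclideanSpace ℝ (Fin n))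
    (EuclideanSpace ℝ (Fin n) × EuclideanSpace ℝ (Fin n)) R with hcompRdef
  have hprodeq : ∀ M : (EuclideanSpace ℝ (Fin n) × EuclideanSpace ℝ (Fin n)) →L[ℝ]
      EuclideanSpace ℝ (Fin n),
      (ContinuousLinearMap.fst ℝ (EuclideanSpace ℝ (Fin n)) (EuclideanSpace ℝ (Fin n))).prod M
        = K + R.comp M := by
    intro M
    refine ContinuousLinearMap.ext fun v => ?_
    simp [hKdef, hRdef, Prod.ext_iff]
  have h1 : HasFDerivAt (fun q => K + R.comp (fderiv ℝ Wm q)) (compR.comp g') (x, x) := by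
    exact (compR.hasFDerivAt.comp (x, x) hg).const_add K
  have heqd : (fun q => fderiv ℝ H q)
      =ᶠ[nhds ((x, x) : EuclideanSpace ℝ (Fin n) × EuclideanSpace ℝ (Fin n))]
      (fun q => K + R.comp (fderiv ℝ Wm q)) := by
    filter_upwards [hVV.mem_nhds hq0] with p hp
    rw [(hHdiff p hp).fderiv, hprodeq]
  have hd : HasFDerivAt (fun q => fderiv ℝ H q) (compR.comp g') (x, x) :=
    h1.congr_of_eventuallyEq heqd
  -- product rule
  have hΦ := hc.clm_comp hd
  have heqΦ : (fun q => (fderiv ℝ F (H q)).comp (fderiv ℝ H q))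
      =ᶠ[nhds ((x, x) : EuclideanSpace ℝ (Fin n) × EuclideanSpace ℝ (Fin n))]
      (fun _ => ContinuousLinearMap.snd ℝ (EuclideanSpace ℝ (Fin n))
        (EuclideanSpace ℝ (Fin n))) := by
    filter_upwards [hVV.mem_nhds hq0] with p hp
    exact hchain p hp
  have hzero := (hΦ.congr_of_eventuallyEq heqΦ.symm).unique
    (hasFDerivAt_const _ _)
  have key := congrFun (congrArg DFunLike.coe
    (congrFun (congrArg DFunLike.coe hzero) (ξ₁, η₁))) (ξ₂, η₂)
  simp only [ContinuousLinearMap.add_apply, ContinuousLinearMap.coe_comp',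
    Function.comp_apply, ContinuousLinearMap.compL_apply, ContinuousLinearMap.flip_apply,
    ContinuousLinearMap.zero_apply] at key
  rw [hDH0] at key
  simp only [ContinuousLinearMap.prod_apply, ContinuousLinearMap.coe_fst',
    ContinuousLinearMap.inr_apply, hDw] at key
  rw [hHq0] at key
  rw [hcompRdef, hRdef] at key
  simp only [ContinuousLinearMap.compL_apply, ContinuousLinearMap.coe_comp',
    Function.comp_apply, ContinuousLinearMap.inr_apply] at key
  -- identify the two terms
  have t1 : fderiv ℝ F (x, 0) ((0 : EuclideanSpace ℝ (Fin n)), g' (ξ₁, η₁) (ξ₂, η₂))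
      = g' (ξ₁, η₁) (ξ₂, η₂) := by
    rw [hu1der x hx 0 (g' (ξ₁, η₁) (ξ₂, η₂)), zero_add]
  have t2 : B (ξ₁, η₁ - ξ₁) (ξ₂, η₂ - ξ₂)
      = -((1 / 2 : ℝ) • (Γ x (η₁ - ξ₁) (η₂ - ξ₂) + Γ x (η₂ - ξ₂) (η₁ - ξ₁))) :=
    hu1der2 x hx ξ₁ (η₁ - ξ₁) ξ₂ (η₂ - ξ₂)
  rw [t1, t2] at key
  exact add_neg_eq_zero.mp key
end
end

section
/- Let σ(t,x,y) = u(t,x,w(x,y)) be the geodesic from x to y parametrized on [0,1]. Then at diagonal points: σ(t,x,x) = x, σ'(t,x,x)·(ξ,η) = ξ + t(η−ξ), and σ''(t,x,x)·((ξ₁,η₁),(ξ₂,η₂)) = ((t−t²)/2)·(Γ(x)(η₁−ξ₁, η₂−ξ₂) + Γ(x)(η₂−ξ₂, η₁−ξ₁)). -/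
noncomputable section
noncomputable section

open ContinuousLinearMap in
theorem second_fderiv_comp_apply
    {E F G : Type*} [NormedAddCommGroup E] [NormedSpace ℝ E]
    [NormedAddCommGroup F] [NormedSpace ℝ F]
    [NormedAddCommGroup G] [NormedSpace ℝ G]
    (f : F → G) (g : E → F) (s : Set E) (hs : IsOpen s)
    (t : Set F) (ht : IsOpen t)
    (x : E) (hx : x ∈ s) (hmap : Set.MapsTo g s t)
    (hg : ContDiffOn ℝ (⊤ : ℕ∞) g s) (hf : ContDiffOn ℝ (⊤ : ℕ∞) f t)
    (v₁ v₂ : E) :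
    fderiv ℝ (fun y => fderiv ℝ (fun z => f (g z)) y) x v₁ v₂
      = fderiv ℝ (fderiv ℝ f) (g x) (fderiv ℝ g x v₁) (fderiv ℝ g x v₂)
        + fderiv ℝ f (g x) (fderiv ℝ (fderiv ℝ g) x v₁ v₂) := by
  have hgc : ∀ y ∈ s, ContDiffAt ℝ (⊤ : ℕ∞) g y := fun y hy => hg.contDiffAt (hs.mem_nhds hy)
  have hfc : ∀ y ∈ t, ContDiffAt ℝ (⊤ : ℕ∞) f y := fun y hy => hf.contDiffAt (ht.mem_nhds hy)
  have hO : IsOpen (s ∩ g ⁻¹' t) := hg.continuousOn.isOpen_inter_preimage hs ht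
  have hxO : x ∈ s ∩ g ⁻¹' t := ⟨hx, hmap hx⟩
  have heq : (fun y => fderiv ℝ (fun z => f (g z)) y)
      =ᶠ[nhds x] (fun y => (fderiv ℝ f (g y)).comp (fderiv ℝ g y)) := by
    filter_upwards [hO.mem_nhds hxO] with y hy
    exact fderiv_comp y ((hfc (g y) hy.2).differentiableAt (by simp))
      ((hgc y hy.1).differentiableAt (by simp))
  have hdf : HasFDerivAt (fderiv ℝ f) (fderiv ℝ (fderiv ℝ f) (g x)) (g x) :=
    (((hfc (g x) (hmap hx)).fderiv_right (m := (⊤ : ℕ∞)) (by exact_mod_cast le_top)).differentiableAt (by simp)).hasFDerivAt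
  have hgd : HasFDerivAt g (fderiv ℝ g x) x :=
    ((hgc x hx).differentiableAt (by simp)).hasFDerivAt
  have hc : HasFDerivAt (fun y => fderiv ℝ f (g y))
      ((fderiv ℝ (fderiv ℝ f) (g x)).comp (fderiv ℝ g x)) x := hdf.comp x hgd
  have hd : HasFDerivAt (fun y => fderiv ℝ g y) (fderiv ℝ (fderiv ℝ g) x) x :=
    (((hgc x hx).fderiv_right (m := (⊤ : ℕ∞)) (by exact_mod_cast le_top)).differentiableAt (by simp)).hasFDerivAt
  have hH := hc.clm_comp hd
  rw [heq.fderiv_eq, hH.fderiv]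
  simp [ContinuousLinearMap.add_apply, ContinuousLinearMap.comp_apply,
    ContinuousLinearMap.flip_apply, ContinuousLinearMap.compL_apply]
  abel

open ContinuousLinearMap in

/-- Let `σ(t,x,y) = u(t,x,wmap(x,y))` be the geodesic from `x` to `y`
parametrized on `[0,1]`. Then at diagonal points: `σ(t,x,x) = x`,
`σ'(t,x,x)·(ξ,η) = ξ + t(η−ξ)`, and
`σ''(t,x,x)·((ξ₁,η₁),(ξ₂,η₂)) = ((t−t²)/2)(Γ(x)(η₁−ξ₁,η₂−ξ₂) + Γ(x)(η₂−ξ₂,η₁−ξ₁))`,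
given the diagonal derivatives of `u(t,·,·)` at `(y,0)` and of `wmap` at `(y,y)`. -/
theorem geodesic_sigma_diagonal_derivatives
    {n : ℕ} (V : Set (EuclideanSpace ℝ (Fin n))) (hV : IsOpen V)
    (x : EuclideanSpace ℝ (Fin n)) (hx : x ∈ V)
    (Γ : EuclideanSpace ℝ (Fin n) →
      EuclideanSpace ℝ (Fin n) →L[ℝ] EuclideanSpace ℝ (Fin n) →L[ℝ] EuclideanSpace ℝ (Fin n))
    (u : ℝ → EuclideanSpace ℝ (Fin n) → EuclideanSpace ℝ (Fin n) → EuclideanSpace ℝ (Fin n))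
    (wmap : EuclideanSpace ℝ (Fin n) → EuclideanSpace ℝ (Fin n) → EuclideanSpace ℝ (Fin n))
    (W : Set (EuclideanSpace ℝ (Fin n) × EuclideanSpace ℝ (Fin n))) (hW : IsOpen W)
    (hmem : ∀ y ∈ V, ∀ z ∈ V, (y, wmap y z) ∈ W)
    -- smoothness and diagonal derivatives of the geodesic flow `u` (in the initial data)
    (husmooth : ∀ t : ℝ, ContDiffOn ℝ (⊤ : ℕ∞)
      (fun q : EuclideanSpace ℝ (Fin n) × EuclideanSpace ℝ (Fin n) => u t q.1 q.2) W)
    (hu0 : ∀ t : ℝ, ∀ y ∈ V, u t y 0 = y)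
    (huder : ∀ t : ℝ, ∀ y ∈ V, ∀ ξ η : EuclideanSpace ℝ (Fin n),
      fderiv ℝ (fun q : EuclideanSpace ℝ (Fin n) × EuclideanSpace ℝ (Fin n) =>
        u t q.1 q.2) (y, 0) (ξ, η) = ξ + t • η)
    (huder2 : ∀ t : ℝ, ∀ y ∈ V, ∀ ξ₁ η₁ ξ₂ η₂ : EuclideanSpace ℝ (Fin n),
      fderiv ℝ (fun q : EuclideanSpace ℝ (Fin n) × EuclideanSpace ℝ (Fin n) =>
          fderiv ℝ (fun q' : EuclideanSpace ℝ (Fin n) × EuclideanSpace ℝ (Fin n) =>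
            u t q'.1 q'.2) q) (y, 0) (ξ₁, η₁) (ξ₂, η₂)
        = -((t ^ 2 / 2) • (Γ y η₁ η₂ + Γ y η₂ η₁)))
    -- smoothness and diagonal derivatives of the initial-velocity map `wmap`
    (hwsmooth : ContDiffOn ℝ (⊤ : ℕ∞)
      (fun q : EuclideanSpace ℝ (Fin n) × EuclideanSpace ℝ (Fin n) => wmap q.1 q.2) (V ×ˢ V))
    (hwdiag : ∀ y ∈ V, wmap y y = 0)
    (hwder : ∀ y ∈ V, ∀ ξ η : EuclideanSpace ℝ (Fin n),
      fderiv ℝ (fun q : EuclideanSpace ℝ (Fin n) × EuclideanSpace ℝ (Fin n) =>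
        wmap q.1 q.2) (y, y) (ξ, η) = η - ξ)
    (hwder2 : ∀ y ∈ V, ∀ ξ₁ η₁ ξ₂ η₂ : EuclideanSpace ℝ (Fin n),
      fderiv ℝ (fun q : EuclideanSpace ℝ (Fin n) × EuclideanSpace ℝ (Fin n) =>
          fderiv ℝ (fun q' : EuclideanSpace ℝ (Fin n) × EuclideanSpace ℝ (Fin n) =>
            wmap q'.1 q'.2) q) (y, y) (ξ₁, η₁) (ξ₂, η₂)
        = (1 / 2 : ℝ) • (Γ y (η₁ - ξ₁) (η₂ - ξ₂) + Γ y (η₂ - ξ₂) (η₁ - ξ₁))) :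
    ∀ t : ℝ,
      u t x (wmap x x) = x ∧
      (∀ ξ η : EuclideanSpace ℝ (Fin n),
        fderiv ℝ (fun q : EuclideanSpace ℝ (Fin n) × EuclideanSpace ℝ (Fin n) =>
          u t q.1 (wmap q.1 q.2)) (x, x) (ξ, η) = ξ + t • (η - ξ)) ∧
      (∀ ξ₁ η₁ ξ₂ η₂ : EuclideanSpace ℝ (Fin n),
        fderiv ℝ (fun q : EuclideanSpace ℝ (Fin n) × EuclideanSpace ℝ (Fin n) =>
            fderiv ℝ (fun q' : EuclideanSpace ℝ (Fin n) × EuclideanSpace ℝ (Fin n) =>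
              u t q'.1 (wmap q'.1 q'.2)) q) (x, x) (ξ₁, η₁) (ξ₂, η₂)
          = ((t - t ^ 2) / 2) • (Γ x (η₁ - ξ₁) (η₂ - ξ₂) + Γ x (η₂ - ξ₂) (η₁ - ξ₁))) := by
  intro t
  have hxx : wmap x x = 0 := hwdiag x hx
  have hxW : ((x, (0 : EuclideanSpace ℝ (Fin n))) :
      EuclideanSpace ℝ (Fin n) × EuclideanSpace ℝ (Fin n)) ∈ W := by
    have h := hmem x hx x hx; rwa [hxx] at h
  have hVV : (V ×ˢ V : Set (EuclideanSpace ℝ (Fin n) × EuclideanSpace ℝ (Fin n))) ∈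
      nhds ((x, x) : EuclideanSpace ℝ (Fin n) × EuclideanSpace ℝ (Fin n)) :=
    (hV.prod hV).mem_nhds ⟨hx, hx⟩
  have hwc : ContDiffAt ℝ (⊤ : ℕ∞)
      (fun q : EuclideanSpace ℝ (Fin n) × EuclideanSpace ℝ (Fin n) => wmap q.1 q.2) (x, x) :=
    hwsmooth.contDiffAt hVV
  have hwdiff : DifferentiableAt ℝ
      (fun q : EuclideanSpace ℝ (Fin n) × EuclideanSpace ℝ (Fin n) => wmap q.1 q.2) (x, x) :=
    hwc.differentiableAt (by simp)
  have hFdiff : DifferentiableAt ℝ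
      (fun q : EuclideanSpace ℝ (Fin n) × EuclideanSpace ℝ (Fin n) => u t q.1 q.2) (x, 0) :=
    ((husmooth t).contDiffAt (hW.mem_nhds hxW)).differentiableAt (by simp)
  have hGdiff : DifferentiableAt ℝ
      (fun q : EuclideanSpace ℝ (Fin n) × EuclideanSpace ℝ (Fin n) => (q.1, wmap q.1 q.2))
      (x, x) := differentiableAt_fst.prodMk hwdiff
  have hfst : ∀ q : EuclideanSpace ℝ (Fin n) × EuclideanSpace ℝ (Fin n),
      fderiv ℝ (fun p : EuclideanSpace ℝ (Fin n) × EuclideanSpace ℝ (Fin n) => p.1) q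
        = ContinuousLinearMap.fst ℝ _ _ := fun q => fderiv_fst
  have hGfder : ∀ ξ η : EuclideanSpace ℝ (Fin n),
      fderiv ℝ (fun q : EuclideanSpace ℝ (Fin n) × EuclideanSpace ℝ (Fin n) =>
        (q.1, wmap q.1 q.2)) (x, x) (ξ, η) = (ξ, η - ξ) := by
    intro ξ η
    rw [differentiableAt_fst.fderiv_prodMk hwdiff]
    simp [ContinuousLinearMap.prod_apply, hfst, hwder x hx]
  have h2 : fderiv ℝ (fun q : EuclideanSpace ℝ (Fin n) × EuclideanSpace ℝ (Fin n) =>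
        u t q.1 (wmap q.1 q.2)) (x, x)
      = (fderiv ℝ (fun q : EuclideanSpace ℝ (Fin n) × EuclideanSpace ℝ (Fin n) =>
          u t q.1 q.2) (x, 0)).comp
        (fderiv ℝ (fun q : EuclideanSpace ℝ (Fin n) × EuclideanSpace ℝ (Fin n) =>
          (q.1, wmap q.1 q.2)) (x, x)) := by
    have hF' : DifferentiableAt ℝ
        (fun q : EuclideanSpace ℝ (Fin n) × EuclideanSpace ℝ (Fin n) => u t q.1 q.2)
        ((fun q : EuclideanSpace ℝ (Fin n) × EuclideanSpace ℝ (Fin n) =>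
          (q.1, wmap q.1 q.2)) (x, x)) := by simpa [hxx] using hFdiff
    have h := fderiv_comp (𝕜 := ℝ) (x, x) hF' hGdiff
    simpa [Function.comp_def, hxx] using h
  refine ⟨by rw [hxx]; exact hu0 t x hx, ?_, ?_⟩
  · intro ξ η
    rw [h2, ContinuousLinearMap.comp_apply, hGfder ξ η, huder t x hx ξ (η - ξ)]
  · intro ξ₁ η₁ ξ₂ η₂
    -- second derivative of wmap composite, as an actual HasFDerivAt
    have hwfd2 : HasFDerivAt
        (fderiv ℝ (fun q : EuclideanSpace ℝ (Fin n) × EuclideanSpace ℝ (Fin n) => wmap q.1 q.2))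
        (fderiv ℝ (fderiv ℝ (fun q : EuclideanSpace ℝ (Fin n) × EuclideanSpace ℝ (Fin n) =>
          wmap q.1 q.2)) (x, x)) (x, x) :=
      (((hwc.fderiv_right (m := (⊤ : ℕ∞)) (by exact_mod_cast le_top))).differentiableAt
        (by simp)).hasFDerivAt
    -- second derivative of G = (fst, wmap)
    have hD2G : fderiv ℝ (fderiv ℝ
          (fun q : EuclideanSpace ℝ (Fin n) × EuclideanSpace ℝ (Fin n) => (q.1, wmap q.1 q.2)))
          (x, x) (ξ₁, η₁) (ξ₂, η₂)
        = ((0 : EuclideanSpace ℝ (Fin n)),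
            fderiv ℝ (fderiv ℝ (fun q : EuclideanSpace ℝ (Fin n) × EuclideanSpace ℝ (Fin n) =>
              wmap q.1 q.2)) (x, x) (ξ₁, η₁) (ξ₂, η₂)) := by
      have heqG : (fun q => fderiv ℝ
            (fun q' : EuclideanSpace ℝ (Fin n) × EuclideanSpace ℝ (Fin n) =>
              (q'.1, wmap q'.1 q'.2)) q)
          =ᶠ[nhds ((x, x) : EuclideanSpace ℝ (Fin n) × EuclideanSpace ℝ (Fin n))]
          (fun q =>
            (ContinuousLinearMap.inl ℝ (EuclideanSpace ℝ (Fin n)) (EuclideanSpace ℝ (Fin n))).comp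
              (ContinuousLinearMap.fst ℝ (EuclideanSpace ℝ (Fin n)) (EuclideanSpace ℝ (Fin n)))
            + (ContinuousLinearMap.compL ℝ
                (EuclideanSpace ℝ (Fin n) × EuclideanSpace ℝ (Fin n))
                (EuclideanSpace ℝ (Fin n))
                (EuclideanSpace ℝ (Fin n) × EuclideanSpace ℝ (Fin n))
                (ContinuousLinearMap.inr ℝ (EuclideanSpace ℝ (Fin n)) (EuclideanSpace ℝ (Fin n))))
              (fderiv ℝ (fun q' : EuclideanSpace ℝ (Fin n) × EuclideanSpace ℝ (Fin n) =>
                wmap q'.1 q'.2) q)) := by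
        filter_upwards [hVV] with q hq
        have hwq : DifferentiableAt ℝ
            (fun q' : EuclideanSpace ℝ (Fin n) × EuclideanSpace ℝ (Fin n) => wmap q'.1 q'.2) q :=
          (hwsmooth.contDiffAt ((hV.prod hV).mem_nhds hq)).differentiableAt
            (by simp)
        rw [differentiableAt_fst.fderiv_prodMk hwq]
        refine ContinuousLinearMap.ext fun v => ?_
        simp [ContinuousLinearMap.prod_apply, hfst, Prod.ext_iff]
      have hder : HasFDerivAt (fun q =>
            (ContinuousLinearMap.inl ℝ (EuclideanSpace ℝ (Fin n)) (EuclideanSpace ℝ (Fin n))).comp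
              (ContinuousLinearMap.fst ℝ (EuclideanSpace ℝ (Fin n)) (EuclideanSpace ℝ (Fin n)))
            + (ContinuousLinearMap.compL ℝ
                (EuclideanSpace ℝ (Fin n) × EuclideanSpace ℝ (Fin n))
                (EuclideanSpace ℝ (Fin n))
                (EuclideanSpace ℝ (Fin n) × EuclideanSpace ℝ (Fin n))
                (ContinuousLinearMap.inr ℝ (EuclideanSpace ℝ (Fin n)) (EuclideanSpace ℝ (Fin n))))
              (fderiv ℝ (fun q' : EuclideanSpace ℝ (Fin n) × EuclideanSpace ℝ (Fin n) =>
                wmap q'.1 q'.2) q))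
          ((0 : _) + (ContinuousLinearMap.compL ℝ
                (EuclideanSpace ℝ (Fin n) × EuclideanSpace ℝ (Fin n))
                (EuclideanSpace ℝ (Fin n))
                (EuclideanSpace ℝ (Fin n) × EuclideanSpace ℝ (Fin n))
                (ContinuousLinearMap.inr ℝ (EuclideanSpace ℝ (Fin n)) (EuclideanSpace ℝ (Fin n)))).comp
              (fderiv ℝ (fderiv ℝ (fun q' : EuclideanSpace ℝ (Fin n) × EuclideanSpace ℝ (Fin n) =>
                wmap q'.1 q'.2)) (x, x))) (x, x) :=
        (hasFDerivAt_const _ _).add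
          ((ContinuousLinearMap.hasFDerivAt _).comp (x, x) hwfd2)
      rw [heqG.fderiv_eq, hder.fderiv]
      simp [ContinuousLinearMap.compL_apply]
    have hGsmooth : ContDiffOn ℝ (⊤ : ℕ∞)
        (fun q : EuclideanSpace ℝ (Fin n) × EuclideanSpace ℝ (Fin n) => (q.1, wmap q.1 q.2))
        (V ×ˢ V) := (contDiff_fst.contDiffOn).prodMk hwsmooth
    have hmap : Set.MapsTo
        (fun q : EuclideanSpace ℝ (Fin n) × EuclideanSpace ℝ (Fin n) => (q.1, wmap q.1 q.2))
        (V ×ˢ V) W := fun q hq => hmem q.1 hq.1 q.2 hq.2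
    have key : fderiv ℝ (fun q : EuclideanSpace ℝ (Fin n) × EuclideanSpace ℝ (Fin n) =>
            fderiv ℝ (fun q' : EuclideanSpace ℝ (Fin n) × EuclideanSpace ℝ (Fin n) =>
              u t q'.1 (wmap q'.1 q'.2)) q) (x, x) (ξ₁, η₁) (ξ₂, η₂)
        = fderiv ℝ (fderiv ℝ (fun q : EuclideanSpace ℝ (Fin n) × EuclideanSpace ℝ (Fin n) =>
              u t q.1 q.2)) (x, wmap x x)
            (fderiv ℝ (fun q : EuclideanSpace ℝ (Fin n) × EuclideanSpace ℝ (Fin n) =>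
              (q.1, wmap q.1 q.2)) (x, x) (ξ₁, η₁))
            (fderiv ℝ (fun q : EuclideanSpace ℝ (Fin n) × EuclideanSpace ℝ (Fin n) =>
              (q.1, wmap q.1 q.2)) (x, x) (ξ₂, η₂))
          + fderiv ℝ (fun q : EuclideanSpace ℝ (Fin n) × EuclideanSpace ℝ (Fin n) =>
              u t q.1 q.2) (x, wmap x x)
            (fderiv ℝ (fderiv ℝ (fun q : EuclideanSpace ℝ (Fin n) × EuclideanSpace ℝ (Fin n) =>
              (q.1, wmap q.1 q.2))) (x, x) (ξ₁, η₁) (ξ₂, η₂)) :=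
      second_fderiv_comp_apply
        (fun q : EuclideanSpace ℝ (Fin n) × EuclideanSpace ℝ (Fin n) => u t q.1 q.2)
        (fun q : EuclideanSpace ℝ (Fin n) × EuclideanSpace ℝ (Fin n) => (q.1, wmap q.1 q.2))
        (V ×ˢ V) (hV.prod hV) W hW (x, x) ⟨hx, hx⟩ hmap hGsmooth (husmooth t) (ξ₁, η₁) (ξ₂, η₂)
    rw [key, hxx, hGfder ξ₁ η₁, hGfder ξ₂ η₂, hD2G,
      huder2 t x hx ξ₁ (η₁ - ξ₁) ξ₂ (η₂ - ξ₂),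
      hwder2 x hx ξ₁ η₁ ξ₂ η₂,
      huder t x hx 0 ((1 / 2 : ℝ) • (Γ x (η₁ - ξ₁) (η₂ - ξ₂) + Γ x (η₂ - ξ₂) (η₁ - ξ₁)))]
    match_scalars <;> ring
end
end
end

section
/- With a(x,y) the parallel transport operator along geodesics as above, the second derivative at the diagonal satisfies: 2·a''(x,x)((ξ₁,η₁),(ξ₂,η₂))·ζ = −(Γ'(x)·(η₁+ξ₁))(η₂−ξ₂, ζ) − (Γ'(x)·(η₂+ξ₂))(η₁−ξ₁, ζ) + Γ(x)(η₁−ξ₁, Γ(x)(η₂−ξ₂, ζ)) + Γ(x)(η₂−ξ₂, Γ(x)(η₁−ξ₁, ζ)). -/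
noncomputable section



open Set Filter Topology ContinuousLinearMap

noncomputable section

variable {F G : Type*} [NormedAddCommGroup F] [NormedSpace ℝ F]
  [NormedAddCommGroup G] [NormedSpace ℝ G]

def Lin (F : Type*) [NormedAddCommGroup F] [NormedSpace ℝ F] : F →L[ℝ] ℝ × F :=
  (0 : F →L[ℝ] ℝ).prod (ContinuousLinearMap.id ℝ F)

lemma hasFDerivAt_incl (t : ℝ) (q : F) :
    HasFDerivAt (fun q' : F => ((t, q') : ℝ × F)) (Lin F) q :=
  (hasFDerivAt_const t q).prodMk (hasFDerivAt_id q)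

lemma hasDerivAt_incl (t : ℝ) (q : F) :
    HasDerivAt (fun τ : ℝ => ((τ, q) : ℝ × F)) ((1, 0) : ℝ × F) t :=
  (hasDerivAt_id t).prodMk (hasDerivAt_const t q)

lemma HasFDerivAt.comp_line {N : F → G} {N' : F →L[ℝ] G} {p v : F}
    (h : HasFDerivAt N N' p) : HasDerivAt (fun a : ℝ => N (p + a • v)) (N' v) 0 := by
  have hline : HasDerivAt (fun a : ℝ => p + a • v) v 0 := by
    simpa using ((hasDerivAt_id (0:ℝ)).smul_const v).const_add p
  have h' : HasFDerivAt N N' (p + (0:ℝ) • v) := by simpa using h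
  simpa [Function.comp_def] using h'.comp_hasDerivAt 0 hline

section swap

variable {f : ℝ × F → G} {U : Set F} (hU : IsOpen U)
  (hf : ContDiffOn ℝ (⊤ : ℕ∞) f (univ ×ˢ U))

include hU hf

lemma joint_fderivAt {t : ℝ} {q : F} (hq : q ∈ U) :
    HasFDerivAt f (fderiv ℝ f (t, q)) (t, q) := by
  have hΩ : IsOpen ((univ : Set ℝ) ×ˢ U) := isOpen_univ.prod hU
  have hmem : ((t, q) : ℝ × F) ∈ (univ : Set ℝ) ×ˢ U := ⟨trivial, hq⟩
  exact ((hf.differentiableOn (by simp)).differentiableAt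
    (hΩ.mem_nhds hmem)).hasFDerivAt

lemma partial2_eq {t : ℝ} {q : F} (hq : q ∈ U) :
    fderiv ℝ (fun q' => f (t, q')) q = (fderiv ℝ f (t, q)).comp (Lin F) :=
  ((joint_fderivAt hU hf hq).comp q (hasFDerivAt_incl t q)).fderiv

lemma partial2_hasFDerivAt {t : ℝ} {q : F} (hq : q ∈ U) :
    HasFDerivAt (fun q' => f (t, q')) (fderiv ℝ (fun q' => f (t, q')) q) q :=
  ((joint_fderivAt hU hf hq).comp q (hasFDerivAt_incl t q)).differentiableAt.hasFDerivAt

lemma partial1_hasDerivAt {t : ℝ} {q : F} (hq : q ∈ U) :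
    HasDerivAt (fun τ => f (τ, q)) (fderiv ℝ f (t, q) (1, 0)) t :=
  (joint_fderivAt hU hf hq).comp_hasDerivAt t (hasDerivAt_incl t q)

lemma contDiffOn_partial_fderiv :
    ContDiffOn ℝ (⊤ : ℕ∞) (fun p : ℝ × F => fderiv ℝ (fun q => f (p.1, q)) p.2)
      (univ ×ˢ U) := by
  have h1 : ContDiffOn ℝ (⊤ : ℕ∞) (fderiv ℝ f) (univ ×ˢ U) :=
    hf.fderiv_of_isOpen (isOpen_univ.prod hU) (by exact_mod_cast le_top)
  have h2 : ContDiffOn ℝ (⊤ : ℕ∞) (fun p : ℝ × F => (fderiv ℝ f p).comp (Lin F))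
      (univ ×ˢ U) :=
    (((ContinuousLinearMap.compL ℝ F (ℝ × F) G).flip (Lin F)).contDiff).comp_contDiffOn h1
  refine h2.congr fun p hp => ?_
  obtain ⟨p₁, p₂⟩ := p
  exact partial2_eq hU hf hp.2

lemma partial2_fderiv_differentiableAt {t : ℝ} {q₀ : F} (hq₀ : q₀ ∈ U) :
    DifferentiableAt ℝ (fun q => fderiv ℝ (fun q' => f (t, q')) q) q₀ := by
  have h := contDiffOn_partial_fderiv hU hf
  have hΩ : IsOpen ((univ : Set ℝ) ×ˢ U) := isOpen_univ.prod hU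
  have hmem : ((t, q₀) : ℝ × F) ∈ (univ : Set ℝ) ×ˢ U := ⟨trivial, hq₀⟩
  have h2 : DifferentiableAt ℝ
      (fun p : ℝ × F => fderiv ℝ (fun q => f (p.1, q)) p.2) (t, q₀) :=
    (h.differentiableOn (by simp)).differentiableAt (hΩ.mem_nhds hmem)
  exact (h2.hasFDerivAt.comp q₀ (hasFDerivAt_incl t q₀)).differentiableAt

variable {A : ℝ → F → G}
  (hA : ∀ t : ℝ, ∀ q ∈ U, HasDerivAt (fun τ => f (τ, q)) (A t q) t)

include hA

lemma partialt_eq {t : ℝ} {q : F} (hq : q ∈ U) :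
    A t q = fderiv ℝ f (t, q) (1, 0) :=
  (hA t q hq).unique (partial1_hasDerivAt hU hf hq)

lemma partialt_eventuallyEq (t : ℝ) {q : F} (hq : q ∈ U) :
    (fun q' => A t q') =ᶠ[𝓝 q] fun q' => fderiv ℝ f (t, q') (1, 0) :=
  Filter.eventually_of_mem (hU.mem_nhds hq) fun q' hq' => partialt_eq hU hf hA hq'

lemma partialt_hasFDerivAt {t : ℝ} {q : F} (hq : q ∈ U) :
    HasFDerivAt (fun q' => A t q')
      (((fderiv ℝ (fderiv ℝ f) (t, q)).comp (Lin F)).flip (1, 0)) q := by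
  have h1 : ContDiffOn ℝ (⊤ : ℕ∞) (fderiv ℝ f) (univ ×ˢ U) :=
    hf.fderiv_of_isOpen (isOpen_univ.prod hU) (by exact_mod_cast le_top)
  have hΩ : IsOpen ((univ : Set ℝ) ×ˢ U) := isOpen_univ.prod hU
  have hmem : ((t, q) : ℝ × F) ∈ (univ : Set ℝ) ×ˢ U := ⟨trivial, hq⟩
  have h2 : HasFDerivAt (fderiv ℝ f) (fderiv ℝ (fderiv ℝ f) (t, q)) (t, q) :=
    ((h1.differentiableOn (by simp)).differentiableAt
      (hΩ.mem_nhds hmem)).hasFDerivAt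
  have h3 : HasFDerivAt (fun q' => fderiv ℝ f (t, q') (1, 0))
      (((fderiv ℝ (fderiv ℝ f) (t, q)).comp (Lin F)).flip ((1 : ℝ), (0 : F))) q := by
    have h4 := (h2.comp q (hasFDerivAt_incl t q)).clm_apply
      (hasFDerivAt_const ((1 : ℝ), (0 : F)) q)
    simpa using h4
  exact h3.congr_of_eventuallyEq (partialt_eventuallyEq hU hf hA t hq)

lemma partialt_fderiv_hasFDerivAt {t : ℝ} {q₀ : F} (hq₀ : q₀ ∈ U) :
    HasFDerivAt (fun q => fderiv ℝ (fun q' => A t q') q)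
      (fderiv ℝ (fun q => fderiv ℝ (fun q' => A t q') q) q₀) q₀ := by
  have hΩ : IsOpen ((univ : Set ℝ) ×ˢ U) := isOpen_univ.prod hU
  have h1 : ContDiffOn ℝ (⊤ : ℕ∞) (fun q' : F => fderiv ℝ f (t, q')) U := by
    have h0 : ContDiffOn ℝ (⊤ : ℕ∞) (fderiv ℝ f) (univ ×ˢ U) :=
      hf.fderiv_of_isOpen hΩ (by exact_mod_cast le_top)
    have hincl : ContDiff ℝ (⊤ : ℕ∞) (fun q' : F => ((t, q') : ℝ × F)) :=
      (contDiff_const.prodMk contDiff_id)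
    exact h0.comp hincl.contDiffOn (fun q hq => ⟨trivial, hq⟩)
  have hrep : ContDiffOn ℝ (⊤ : ℕ∞) (fun q' : F => fderiv ℝ f (t, q') (1, 0)) U :=
    (ContinuousLinearMap.apply ℝ G ((1 : ℝ), (0 : F))).contDiff.comp_contDiffOn h1
  have hd : DifferentiableAt ℝ
      (fun q => fderiv ℝ (fun q' : F => fderiv ℝ f (t, q') (1, 0)) q) q₀ :=
    ((hrep.fderiv_of_isOpen (m := (⊤ : ℕ∞)) hU (by exact_mod_cast le_top)).differentiableOn
      (by simp)).differentiableAt (hU.mem_nhds hq₀)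
  have hev : (fun q => fderiv ℝ (fun q' => A t q') q)
      =ᶠ[𝓝 q₀] (fun q => fderiv ℝ (fun q' : F => fderiv ℝ f (t, q') (1, 0)) q) :=
    Filter.eventually_of_mem (hU.mem_nhds hq₀) fun q hq =>
      (partialt_eventuallyEq hU hf hA t hq).fderiv_eq
  exact ((hev.differentiableAt_iff).mpr hd).hasFDerivAt

lemma swap_ode {q₀ : F} (hq₀ : q₀ ∈ U) (t : ℝ) :
    HasDerivAt (fun τ => fderiv ℝ (fun q => f (τ, q)) q₀)
      (fderiv ℝ (fun q => A t q) q₀) t := by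
  have hΩ : IsOpen ((univ : Set ℝ) ×ˢ U) := isOpen_univ.prod hU
  have hmem : ((t, q₀) : ℝ × F) ∈ (univ : Set ℝ) ×ˢ U := ⟨trivial, hq₀⟩
  have h1 : ContDiffOn ℝ (⊤ : ℕ∞) (fderiv ℝ f) (univ ×ˢ U) :=
    hf.fderiv_of_isOpen hΩ (by exact_mod_cast le_top)
  set F2 := fderiv ℝ (fderiv ℝ f) (t, q₀) with hF2
  have h2 : HasFDerivAt (fderiv ℝ f) F2 (t, q₀) :=
    ((h1.differentiableOn (by simp)).differentiableAt
      (hΩ.mem_nhds hmem)).hasFDerivAt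
  have h3 : HasDerivAt (fun τ => fderiv ℝ f (τ, q₀)) (F2 (1, 0)) t :=
    h2.comp_hasDerivAt t (hasDerivAt_incl t q₀)
  have h4 : HasDerivAt (fun τ => (fderiv ℝ f (τ, q₀)).comp (Lin F))
      ((F2 (1, 0)).comp (Lin F)) t :=
    (((ContinuousLinearMap.compL ℝ F (ℝ × F) G).flip (Lin F)).hasFDerivAt).comp_hasDerivAt t h3
  have h5 : (fun τ => fderiv ℝ (fun q => f (τ, q)) q₀)
      = fun τ => (fderiv ℝ f (τ, q₀)).comp (Lin F) :=
    funext fun τ => partial2_eq hU hf hq₀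
  rw [h5]
  have h6 : fderiv ℝ (fun q => A t q) q₀ = (F2 (1, 0)).comp (Lin F) := by
    have h7 := (partialt_hasFDerivAt hU hf hA hq₀ (t := t) (q := q₀)).fderiv
    rw [h7]
    ext v
    have hsym : F2 (Lin F v) (1, 0) = F2 (1, 0) (Lin F v) := by
      apply second_derivative_symmetric_of_eventually
        (f := f) (f' := fderiv ℝ f) (x := ((t, q₀) : ℝ × F))
      · filter_upwards [hΩ.mem_nhds hmem] with p hp
        obtain ⟨p₁, p₂⟩ := p
        exact joint_fderivAt hU hf hp.2
      · exact h2
    simpa using hsym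
  rw [h6]
  exact h4

lemma swap_ode2 {q₀ : F} (hq₀ : q₀ ∈ U) (t : ℝ) :
    HasDerivAt (fun τ => fderiv ℝ (fun q => fderiv ℝ (fun q' => f (τ, q')) q) q₀)
      (fderiv ℝ (fun q => fderiv ℝ (fun q' => A t q') q) q₀) t :=
  swap_ode hU (contDiffOn_partial_fderiv hU hf)
    (fun t q hq => swap_ode hU hf hA hq t) hq₀ t

end swap


set_option maxHeartbeats 4000000 in
set_option synthInstance.maxHeartbeats 1000000 in
theorem main_aux {E : Type*} [NormedAddCommGroup E] [NormedSpace ℝ E]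
    (V : Set E) (hV : IsOpen V) (x : E) (hx : x ∈ V)
    (Γ : E → E →L[ℝ] E →L[ℝ] E) (hΓ : ContDiffOn ℝ (⊤ : ℕ∞) Γ V)
    (σ : ℝ → E → E → E) (ρ : ℝ → E → E → E → E)
    (hσsmooth : ContDiffOn ℝ (⊤ : ℕ∞)
      (fun p : ℝ × E × E => σ p.1 p.2.1 p.2.2) (Set.univ ×ˢ V ×ˢ V))
    (hσdiag : ∀ t : ℝ, ∀ y ∈ V, σ t y y = y)
    (hσdot : ∀ t : ℝ, ∀ y ∈ V, HasDerivAt (fun τ => σ τ y y) 0 t)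
    (hσder : ∀ t : ℝ, ∀ y ∈ V, ∀ ξ η : E,
      fderiv ℝ (fun q : E × E => σ t q.1 q.2) (y, y) (ξ, η) = ξ + t • (η - ξ))
    (hσder2 : ∀ t : ℝ, ∀ y ∈ V, ∀ ξ₁ η₁ ξ₂ η₂ : E,
      fderiv ℝ (fun q : E × E =>
          fderiv ℝ (fun q' : E × E => σ t q'.1 q'.2) q) (y, y) (ξ₁, η₁) (ξ₂, η₂)
        = ((t - t ^ 2) / 2) • (Γ y (η₁ - ξ₁) (η₂ - ξ₂) + Γ y (η₂ - ξ₂) (η₁ - ξ₁)))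
    (hρsmooth : ContDiffOn ℝ (⊤ : ℕ∞)
      (fun p : ℝ × E × E × E => ρ p.1 p.2.1 p.2.2.1 p.2.2.2)
      (Set.univ ×ˢ V ×ˢ V ×ˢ Set.univ))
    (hρinit : ∀ x' ∈ V, ∀ y' ∈ V, ∀ ζ : E, ρ 0 x' y' ζ = ζ)
    (hρODE : ∀ t : ℝ, ∀ x' ∈ V, ∀ y' ∈ V, ∀ ζ : E,
      HasDerivAt (fun τ => ρ τ x' y' ζ)
        (-(Γ (σ t x' y') (deriv (fun τ => σ τ x' y') t) (ρ t x' y' ζ))) t) :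
    ∀ ξ₁ η₁ ξ₂ η₂ ζ : E,
      (2 : ℝ) • fderiv ℝ (fun q : E × E =>
          fderiv ℝ (fun q' : E × E => ρ 1 q'.1 q'.2 ζ) q) (x, x) (ξ₁, η₁) (ξ₂, η₂)
        = -(fderiv ℝ Γ x (η₁ + ξ₁) (η₂ - ξ₂) ζ) - fderiv ℝ Γ x (η₂ + ξ₂) (η₁ - ξ₁) ζ
          + Γ x (η₁ - ξ₁) (Γ x (η₂ - ξ₂) ζ) + Γ x (η₂ - ξ₂) (Γ x (η₁ - ξ₁) ζ) := by
  intro ξ₁ η₁ ξ₂ η₂ ζ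
  have hU : IsOpen (V ×ˢ V) := hV.prod hV
  have hp : ((x, x) : E × E) ∈ V ×ˢ V := ⟨hx, hx⟩
  -- joint smoothness of g(t,q) = ρ t q.1 q.2 ζ
  have hg : ContDiffOn ℝ (⊤ : ℕ∞) (fun p : ℝ × (E × E) => ρ p.1 p.2.1 p.2.2 ζ)
      (Set.univ ×ˢ V ×ˢ V) := by
    have hmap : ContDiff ℝ (⊤ : ℕ∞)
        (fun p : ℝ × (E × E) => ((p.1, p.2.1, p.2.2, ζ) : ℝ × E × E × E)) :=
      contDiff_fst.prodMk ((contDiff_fst.comp contDiff_snd).prodMk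
        ((contDiff_snd.comp contDiff_snd).prodMk contDiff_const))
    exact hρsmooth.comp hmap.contDiffOn fun p hp => ⟨trivial, hp.2.1, hp.2.2, trivial⟩
  -- the ODE, in swap form
  have hAρ : ∀ t : ℝ, ∀ q ∈ V ×ˢ V,
      HasDerivAt (fun τ => (fun p : ℝ × (E × E) => ρ p.1 p.2.1 p.2.2 ζ) (τ, q))
        ((fun t (q : E × E) =>
          -(Γ (σ t q.1 q.2) (deriv (fun τ => σ τ q.1 q.2) t) (ρ t q.1 q.2 ζ))) t q) t :=
    fun t q hq => hρODE t q.1 hq.1 q.2 hq.2 ζ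
  have hAσ : ∀ t : ℝ, ∀ q ∈ V ×ˢ V,
      HasDerivAt (fun τ => (fun p : ℝ × (E × E) => σ p.1 p.2.1 p.2.2) (τ, q))
        ((fun t (q : E × E) => deriv (fun τ => σ τ q.1 q.2) t) t q) t :=
    fun t q hq => (partial1_hasDerivAt hU hσsmooth hq).differentiableAt.hasDerivAt
  -- diagonal facts
  have hsdiag : ∀ t : ℝ, deriv (fun τ => σ τ x x) t = 0 := fun t => (hσdot t x hx).deriv
  have hρconst : ∀ t : ℝ, ρ t x x ζ = ζ := by
    have hd : ∀ τ : ℝ, HasDerivAt (fun τ' => ρ τ' x x ζ) 0 τ := by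
      intro τ
      have h := hρODE τ x hx x hx ζ
      rw [(hσdot τ x hx).deriv] at h
      simpa using h
    intro t
    have hc := is_const_of_deriv_eq_zero (f := fun τ => ρ τ x x ζ)
      (fun τ => (hd τ).differentiableAt) (fun τ => (hd τ).deriv) t 0
    rw [hc, hρinit x hx x hx ζ]
  have hσxx : ∀ t : ℝ, σ t x x = x := fun t => hσdiag t x hx
  -- Γ is differentiable at x
  have hΓx : HasFDerivAt Γ (fderiv ℝ Γ x) x :=
    ((hΓ.differentiableOn (by simp)).differentiableAt
      (hV.mem_nhds hx)).hasFDerivAt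
  -- first derivative of σ at the diagonal, as a CLM
  have hCeq : ∀ τ : ℝ, fderiv ℝ (fun q : E × E => σ τ q.1 q.2) ((x, x) : E × E)
      = ContinuousLinearMap.fst ℝ E E
        + τ • (ContinuousLinearMap.snd ℝ E E - ContinuousLinearMap.fst ℝ E E) := by
    intro τ
    apply ContinuousLinearMap.ext
    rintro ⟨a, b⟩
    rw [hσder τ x hx a b]
    simp
  -- σ̇'s space derivative at the diagonal
  have hsfd : ∀ t : ℝ, HasFDerivAt (fun q : E × E => deriv (fun τ => σ τ q.1 q.2) t)
      (ContinuousLinearMap.snd ℝ E E - ContinuousLinearMap.fst ℝ E E) ((x, x) : E × E) := by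
    intro t
    have hsw : HasDerivAt (fun τ => fderiv ℝ (fun q : E × E => σ τ q.1 q.2) ((x, x) : E × E))
        (fderiv ℝ (fun q : E × E => deriv (fun τ' => σ τ' q.1 q.2) t) ((x, x) : E × E)) t :=
      swap_ode hU hσsmooth hAσ hp t
    rw [funext hCeq] at hsw
    have h3 : HasDerivAt (fun τ : ℝ => ContinuousLinearMap.fst ℝ E E
        + τ • (ContinuousLinearMap.snd ℝ E E - ContinuousLinearMap.fst ℝ E E))
        (ContinuousLinearMap.snd ℝ E E - ContinuousLinearMap.fst ℝ E E) t := by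
      simpa using ((hasDerivAt_id t).smul_const
        (ContinuousLinearMap.snd ℝ E E - ContinuousLinearMap.fst ℝ E E)).const_add
        (ContinuousLinearMap.fst ℝ E E)
    have h4 : fderiv ℝ (fun q : E × E => deriv (fun τ' => σ τ' q.1 q.2) t) ((x, x) : E × E)
        = ContinuousLinearMap.snd ℝ E E - ContinuousLinearMap.fst ℝ E E := hsw.unique h3
    have h5 : DifferentiableAt ℝ
        (fun q : E × E => deriv (fun τ' => σ τ' q.1 q.2) t) ((x, x) : E × E) :=
      (partialt_hasFDerivAt hU hσsmooth hAσ hp).differentiableAt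
    have h6 := h5.hasFDerivAt
    rwa [h4] at h6
  -- first space derivative of ρ at the diagonal
  have hu : ∀ t : ℝ, ∀ v : E × E,
      fderiv ℝ (fun q : E × E => ρ t q.1 q.2 ζ) ((x, x) : E × E) v
        = -(t • Γ x (v.2 - v.1) ζ) := by
    intro t v
    have hDv : ∀ τ : ℝ, fderiv ℝ (fun q : E × E =>
        -(Γ (σ τ q.1 q.2) (deriv (fun s => σ s q.1 q.2) τ) (ρ τ q.1 q.2 ζ))) ((x, x) : E × E) v
        = -(Γ x (v.2 - v.1) ζ) := by
      intro τ
      have hσt : HasFDerivAt (fun q : E × E => σ τ q.1 q.2)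
          (fderiv ℝ (fun q : E × E => σ τ q.1 q.2) ((x, x) : E × E)) ((x, x) : E × E) :=
        partial2_hasFDerivAt hU hσsmooth hp
      have hΓσpt : HasFDerivAt Γ (fderiv ℝ Γ x) (σ τ x x) := by rw [hσxx τ]; exact hΓx
      have hΓσ := hΓσpt.comp (g := Γ) (g' := fderiv ℝ Γ x) ((x, x) : E × E) hσt
      have hgt : HasFDerivAt (fun q : E × E => ρ τ q.1 q.2 ζ)
          (fderiv ℝ (fun q : E × E => ρ τ q.1 q.2 ζ) ((x, x) : E × E)) ((x, x) : E × E) :=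
        partial2_hasFDerivAt hU hg hp
      have hA := ((hΓσ.clm_apply (hsfd τ)).clm_apply hgt).neg
      have hA' : HasFDerivAt (fun q : E × E =>
          -(Γ (σ τ q.1 q.2) (deriv (fun s => σ s q.1 q.2) τ) (ρ τ q.1 q.2 ζ))) _
          ((x, x) : E × E) := hA
      rw [hA'.fderiv]
      simp [hσxx, hsdiag, hρconst]
    have hd : ∀ τ : ℝ, HasDerivAt
        (fun τ' => fderiv ℝ (fun q : E × E => ρ τ' q.1 q.2 ζ) ((x, x) : E × E) v)
        (-(Γ x (v.2 - v.1) ζ)) τ := by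
      intro τ
      have hsw : HasDerivAt
          (fun τ' => fderiv ℝ (fun q : E × E => ρ τ' q.1 q.2 ζ) ((x, x) : E × E))
          (fderiv ℝ (fun q : E × E =>
            -(Γ (σ τ q.1 q.2) (deriv (fun s => σ s q.1 q.2) τ)
              (ρ τ q.1 q.2 ζ))) ((x, x) : E × E)) τ :=
        swap_ode hU hg hAρ hp τ
      have happ := hsw.clm_apply (hasDerivAt_const τ v)
      simpa only [map_zero, add_zero, hDv τ] using happ
    have h0 : fderiv ℝ (fun q : E × E => ρ 0 q.1 q.2 ζ) ((x, x) : E × E) = 0 := by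
      have hev : (fun q : E × E => ρ 0 q.1 q.2 ζ) =ᶠ[𝓝 ((x, x) : E × E)] fun _ => ζ :=
        Filter.eventually_of_mem (hU.mem_nhds hp) fun q hq => hρinit q.1 hq.1 q.2 hq.2 ζ
      rw [hev.fderiv_eq]
      exact fderiv_const_apply ζ
    have hlin : ∀ τ : ℝ, HasDerivAt (fun τ' : ℝ =>
        fderiv ℝ (fun q : E × E => ρ τ' q.1 q.2 ζ) ((x, x) : E × E) v
          + τ' • Γ x (v.2 - v.1) ζ) 0 τ := by
      intro τ
      simpa [Pi.add_def] using (hd τ).add ((hasDerivAt_id τ).smul_const (Γ x (v.2 - v.1) ζ))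
    have hc := is_const_of_deriv_eq_zero (𝕜 := ℝ)
      (f := fun τ' : ℝ => fderiv ℝ (fun q : E × E => ρ τ' q.1 q.2 ζ) ((x, x) : E × E) v
        + τ' • Γ x (v.2 - v.1) ζ)
      (fun τ => (hlin τ).differentiableAt) (fun τ => (hlin τ).deriv) t 0
    simp only [h0, ContinuousLinearMap.zero_apply, zero_smul, add_zero, zero_add] at hc
    exact eq_neg_of_add_eq_zero_left hc
  -- second space derivative of σ̇ at the diagonal
  have hDs2 : ∀ t : ℝ,
      fderiv ℝ (fun q : E × E =>
          fderiv ℝ (fun q' : E × E => deriv (fun τ => σ τ q'.1 q'.2) t) q)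
        ((x, x) : E × E) (ξ₁, η₁) (ξ₂, η₂)
        = ((1 - 2 * t) / 2) • (Γ x (η₁ - ξ₁) (η₂ - ξ₂) + Γ x (η₂ - ξ₂) (η₁ - ξ₁)) := by
    intro t
    have hsw : HasDerivAt (fun τ => fderiv ℝ (fun q : E × E =>
          fderiv ℝ (fun q' : E × E => σ τ q'.1 q'.2) q) ((x, x) : E × E))
        (fderiv ℝ (fun q : E × E =>
          fderiv ℝ (fun q' : E × E => deriv (fun τ' => σ τ' q'.1 q'.2) t) q)
          ((x, x) : E × E)) t :=
      swap_ode2 hU hσsmooth hAσ hp t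
    have happ := (hsw.clm_apply (hasDerivAt_const t ((ξ₁, η₁) : E × E))).clm_apply
      (hasDerivAt_const t ((ξ₂, η₂) : E × E))
    simp only [map_zero, add_zero, ContinuousLinearMap.zero_apply] at happ
    have hcurve : (fun τ => fderiv ℝ (fun q : E × E =>
        fderiv ℝ (fun q' : E × E => σ τ q'.1 q'.2) q) ((x, x) : E × E) (ξ₁, η₁) (ξ₂, η₂))
        = fun τ : ℝ => ((τ - τ ^ 2) / 2)
            • (Γ x (η₁ - ξ₁) (η₂ - ξ₂) + Γ x (η₂ - ξ₂) (η₁ - ξ₁)) :=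
      funext fun τ => hσder2 τ x hx ξ₁ η₁ ξ₂ η₂
    rw [hcurve] at happ
    have hpoly : HasDerivAt (fun τ : ℝ => ((τ - τ ^ 2) / 2)
          • (Γ x (η₁ - ξ₁) (η₂ - ξ₂) + Γ x (η₂ - ξ₂) (η₁ - ξ₁)))
        (((1 - 2 * t) / 2) • (Γ x (η₁ - ξ₁) (η₂ - ξ₂) + Γ x (η₂ - ξ₂) (η₁ - ξ₁))) t := by
      have h : HasDerivAt (fun τ : ℝ => (τ - τ ^ 2) / 2) ((1 - 2 * t) / 2) t := by
        simpa using ((hasDerivAt_id t).sub (hasDerivAt_pow 2 t)).div_const 2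
      exact h.smul_const _
    exact happ.unique hpoly
  -- second derivative of the ODE right-hand side at the diagonal
  have hNval : ∀ t : ℝ, fderiv ℝ (fun q : E × E =>
      fderiv ℝ (fun q' : E × E =>
        -(Γ (σ t q'.1 q'.2) (deriv (fun s => σ s q'.1 q'.2) t) (ρ t q'.1 q'.2 ζ))) q)
      ((x, x) : E × E) (ξ₁, η₁) (ξ₂, η₂)
      = (-(fderiv ℝ Γ x ξ₂ (η₁ - ξ₁) ζ) - fderiv ℝ Γ x ξ₁ (η₂ - ξ₂) ζ
      - (2⁻¹ : ℝ) • Γ x (Γ x (η₁ - ξ₁) (η₂ - ξ₂) + Γ x (η₂ - ξ₂) (η₁ - ξ₁)) ζ) + t • (-(fderiv ℝ Γ x (η₂ - ξ₂) (η₁ - ξ₁) ζ) - fderiv ℝ Γ x (η₁ - ξ₁) (η₂ - ξ₂) ζ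
      + Γ x (Γ x (η₁ - ξ₁) (η₂ - ξ₂) + Γ x (η₂ - ξ₂) (η₁ - ξ₁)) ζ
      + Γ x (η₂ - ξ₂) (Γ x (η₁ - ξ₁) ζ) + Γ x (η₁ - ξ₁) (Γ x (η₂ - ξ₂) ζ)) := by
    intro t
    -- the function N q := fderiv (A t ·) q is differentiable at (x,x)
    have hNfd : HasFDerivAt (fun q : E × E => fderiv ℝ (fun q' : E × E =>
        -(Γ (σ t q'.1 q'.2) (deriv (fun s => σ s q'.1 q'.2) t) (ρ t q'.1 q'.2 ζ))) q)
        (fderiv ℝ (fun q : E × E => fderiv ℝ (fun q' : E × E =>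
        -(Γ (σ t q'.1 q'.2) (deriv (fun s => σ s q'.1 q'.2) t) (ρ t q'.1 q'.2 ζ))) q)
          ((x, x) : E × E)) ((x, x) : E × E) :=
      partialt_fderiv_hasFDerivAt hU hg hAρ hp
    have hchain := hNfd.comp_line (v := ((ξ₁, η₁) : E × E))
    have hchain2 := hchain.clm_apply (hasDerivAt_const (0 : ℝ) ((ξ₂, η₂) : E × E))
    simp only [map_zero, add_zero] at hchain2
    -- pieces at the diagonal
    have hσt_p : HasFDerivAt (fun q : E × E => σ t q.1 q.2)
        (fderiv ℝ (fun q : E × E => σ t q.1 q.2) ((x, x) : E × E)) ((x, x) : E × E) :=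
      partial2_hasFDerivAt hU hσsmooth hp
    have hΓσpt : HasFDerivAt Γ (fderiv ℝ Γ x) (σ t x x) := by rw [hσxx t]; exact hΓx
    have hC1 := (hΓσpt.comp (g := Γ) (g' := fderiv ℝ Γ x) ((x, x) : E × E) hσt_p).comp_line (v := ((ξ₁, η₁) : E × E))
    have hΓ2 : DifferentiableAt ℝ (fderiv ℝ Γ) x :=
      ((hΓ.fderiv_of_isOpen (m := (⊤ : ℕ∞)) hV (by exact_mod_cast le_top)).differentiableOn
        (by simp)).differentiableAt (hV.mem_nhds hx)
    have hΓ2pt : HasFDerivAt (fderiv ℝ Γ) (fderiv ℝ (fderiv ℝ Γ) x) (σ t x x) := by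
      rw [hσxx t]; exact hΓ2.hasFDerivAt
    letI : NormedAddCommGroup (E →L[ℝ] E →L[ℝ] E →L[ℝ] E) := ContinuousLinearMap.toNormedAddCommGroup (F := E →L[ℝ] E →L[ℝ] E) (E := E) (𝕜 := ℝ) (𝕜₂ := ℝ) (σ₁₂ := RingHom.id ℝ)
    letI : NormedSpace ℝ (E →L[ℝ] E →L[ℝ] E →L[ℝ] E) := ContinuousLinearMap.toNormedSpace (F := E →L[ℝ] E →L[ℝ] E) (E := E) (𝕜 := ℝ) (𝕜₂ := ℝ) (σ₁₂ := RingHom.id ℝ)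
    have hC2 := (hΓ2pt.comp (g := fderiv ℝ Γ) (g' := fderiv ℝ (fderiv ℝ Γ) x) ((x, x) : E × E) hσt_p).comp_line (v := ((ξ₁, η₁) : E × E))
    have hC3 := ((partial2_fderiv_differentiableAt hU hσsmooth hp
        (t := t)).hasFDerivAt.comp_line (v := ((ξ₁, η₁) : E × E))).clm_apply
      (hasDerivAt_const (0 : ℝ) ((ξ₂, η₂) : E × E))
    have hC4 := (hsfd t).comp_line (v := ((ξ₁, η₁) : E × E))
    have hC5' : HasFDerivAt (fun q : E × E => fderiv ℝ (fun q' : E × E =>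
        deriv (fun s => σ s q'.1 q'.2) t) q)
        (fderiv ℝ (fun q : E × E => fderiv ℝ (fun q' : E × E =>
        deriv (fun s => σ s q'.1 q'.2) t) q) ((x, x) : E × E)) ((x, x) : E × E) :=
      partialt_fderiv_hasFDerivAt hU hσsmooth hAσ hp
    have hC5 := (hC5'.comp_line (v := ((ξ₁, η₁) : E × E))).clm_apply
      (hasDerivAt_const (0 : ℝ) ((ξ₂, η₂) : E × E))
    have hg_p : HasFDerivAt (fun q : E × E => ρ t q.1 q.2 ζ)
        (fderiv ℝ (fun q : E × E => ρ t q.1 q.2 ζ) ((x, x) : E × E)) ((x, x) : E × E) :=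
      partial2_hasFDerivAt hU hg hp
    have hC6 := hg_p.comp_line (v := ((ξ₁, η₁) : E × E))
    have hC7 := ((partial2_fderiv_differentiableAt hU hg hp
        (t := t)).hasFDerivAt.comp_line (v := ((ξ₁, η₁) : E × E))).clm_apply
      (hasDerivAt_const (0 : ℝ) ((ξ₂, η₂) : E × E))
    -- Leibniz for the three terms
    have hX := (hC1.clm_apply hC4).clm_apply hC7
    have hY := (hC1.clm_apply hC5).clm_apply hC6
    have hZ1 := HasDerivAt.clm_apply (F := E) (G := E →L[ℝ] E →L[ℝ] E) hC2 hC3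
    have hZ2 := hZ1.clm_apply hC4
    have hZ := hZ2.clm_apply hC6
    have hφraw := (hX.add (hY.add hZ)).neg
    have hφ : HasDerivAt (fun a : ℝ =>
        -(Γ (σ t (((x, x) : E × E) + a • ((ξ₁, η₁) : E × E)).1 (((x, x) : E × E) + a • ((ξ₁, η₁) : E × E)).2)
            (deriv (fun s => σ s (((x, x) : E × E) + a • ((ξ₁, η₁) : E × E)).1 (((x, x) : E × E) + a • ((ξ₁, η₁) : E × E)).2) t)
            (fderiv ℝ (fun q' : E × E => ρ t q'.1 q'.2 ζ) (((x, x) : E × E) + a • ((ξ₁, η₁) : E × E)) (ξ₂, η₂))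
          + (Γ (σ t (((x, x) : E × E) + a • ((ξ₁, η₁) : E × E)).1 (((x, x) : E × E) + a • ((ξ₁, η₁) : E × E)).2)
              (fderiv ℝ (fun q' : E × E => deriv (fun s => σ s q'.1 q'.2) t) (((x, x) : E × E) + a • ((ξ₁, η₁) : E × E)) (ξ₂, η₂))
              (ρ t (((x, x) : E × E) + a • ((ξ₁, η₁) : E × E)).1 (((x, x) : E × E) + a • ((ξ₁, η₁) : E × E)).2 ζ)
            + fderiv ℝ Γ (σ t (((x, x) : E × E) + a • ((ξ₁, η₁) : E × E)).1 (((x, x) : E × E) + a • ((ξ₁, η₁) : E × E)).2)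
                (fderiv ℝ (fun q' : E × E => σ t q'.1 q'.2) (((x, x) : E × E) + a • ((ξ₁, η₁) : E × E)) (ξ₂, η₂))
                (deriv (fun s => σ s (((x, x) : E × E) + a • ((ξ₁, η₁) : E × E)).1 (((x, x) : E × E) + a • ((ξ₁, η₁) : E × E)).2) t)
                (ρ t (((x, x) : E × E) + a • ((ξ₁, η₁) : E × E)).1 (((x, x) : E × E) + a • ((ξ₁, η₁) : E × E)).2 ζ)))) _ 0 := hφraw
    -- eventual equality with the actual derivative curve
    have hcontline : Continuous (fun a : ℝ => ((x, x) : E × E) + a • ((ξ₁, η₁) : E × E)) := by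
      fun_prop
    have hmemU : ∀ᶠ a : ℝ in nhds 0, (((x, x) : E × E) + a • ((ξ₁, η₁) : E × E)) ∈ V ×ˢ V := by
      apply hcontline.continuousAt.eventually_mem
      simpa using hU.mem_nhds hp
    have hmemV : ∀ᶠ a : ℝ in nhds 0,
        σ t (((x, x) : E × E) + a • ((ξ₁, η₁) : E × E)).1 (((x, x) : E × E) + a • ((ξ₁, η₁) : E × E)).2 ∈ V := by
      have hσcurve := hσt_p.comp_line (v := ((ξ₁, η₁) : E × E))
      apply hσcurve.continuousAt.eventually_mem
      simpa [hσxx t] using hV.mem_nhds hx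
    have hev2 : (fun a : ℝ => fderiv ℝ (fun q' : E × E =>
        -(Γ (σ t q'.1 q'.2) (deriv (fun s => σ s q'.1 q'.2) t) (ρ t q'.1 q'.2 ζ)))
          (((x, x) : E × E) + a • ((ξ₁, η₁) : E × E)) (ξ₂, η₂)) =ᶠ[nhds 0]
        (fun a : ℝ =>
        -(Γ (σ t (((x, x) : E × E) + a • ((ξ₁, η₁) : E × E)).1 (((x, x) : E × E) + a • ((ξ₁, η₁) : E × E)).2)
            (deriv (fun s => σ s (((x, x) : E × E) + a • ((ξ₁, η₁) : E × E)).1 (((x, x) : E × E) + a • ((ξ₁, η₁) : E × E)).2) t)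
            (fderiv ℝ (fun q' : E × E => ρ t q'.1 q'.2 ζ) (((x, x) : E × E) + a • ((ξ₁, η₁) : E × E)) (ξ₂, η₂))
          + (Γ (σ t (((x, x) : E × E) + a • ((ξ₁, η₁) : E × E)).1 (((x, x) : E × E) + a • ((ξ₁, η₁) : E × E)).2)
              (fderiv ℝ (fun q' : E × E => deriv (fun s => σ s q'.1 q'.2) t) (((x, x) : E × E) + a • ((ξ₁, η₁) : E × E)) (ξ₂, η₂))
              (ρ t (((x, x) : E × E) + a • ((ξ₁, η₁) : E × E)).1 (((x, x) : E × E) + a • ((ξ₁, η₁) : E × E)).2 ζ)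
            + fderiv ℝ Γ (σ t (((x, x) : E × E) + a • ((ξ₁, η₁) : E × E)).1 (((x, x) : E × E) + a • ((ξ₁, η₁) : E × E)).2)
                (fderiv ℝ (fun q' : E × E => σ t q'.1 q'.2) (((x, x) : E × E) + a • ((ξ₁, η₁) : E × E)) (ξ₂, η₂))
                (deriv (fun s => σ s (((x, x) : E × E) + a • ((ξ₁, η₁) : E × E)).1 (((x, x) : E × E) + a • ((ξ₁, η₁) : E × E)).2) t)
                (ρ t (((x, x) : E × E) + a • ((ξ₁, η₁) : E × E)).1 (((x, x) : E × E) + a • ((ξ₁, η₁) : E × E)).2 ζ)))) := by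
      filter_upwards [hmemU, hmemV] with a haU haV
      have hσ_a : HasFDerivAt (fun q : E × E => σ t q.1 q.2)
          (fderiv ℝ (fun q : E × E => σ t q.1 q.2) (((x, x) : E × E) + a • ((ξ₁, η₁) : E × E))) (((x, x) : E × E) + a • ((ξ₁, η₁) : E × E)) :=
        partial2_hasFDerivAt hU hσsmooth haU
      have hΓ_a : HasFDerivAt Γ (fderiv ℝ Γ (σ t (((x, x) : E × E) + a • ((ξ₁, η₁) : E × E)).1 (((x, x) : E × E) + a • ((ξ₁, η₁) : E × E)).2))
          (σ t (((x, x) : E × E) + a • ((ξ₁, η₁) : E × E)).1 (((x, x) : E × E) + a • ((ξ₁, η₁) : E × E)).2) :=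
        ((hΓ.differentiableOn (by simp)).differentiableAt
          (hV.mem_nhds haV)).hasFDerivAt
      have hs_a : HasFDerivAt (fun q : E × E => deriv (fun s => σ s q.1 q.2) t)
          (fderiv ℝ (fun q : E × E => deriv (fun s => σ s q.1 q.2) t) (((x, x) : E × E) + a • ((ξ₁, η₁) : E × E))) (((x, x) : E × E) + a • ((ξ₁, η₁) : E × E)) :=
        (partialt_hasFDerivAt hU hσsmooth hAσ haU).differentiableAt.hasFDerivAt
      have hg_a : HasFDerivAt (fun q : E × E => ρ t q.1 q.2 ζ)
          (fderiv ℝ (fun q : E × E => ρ t q.1 q.2 ζ) (((x, x) : E × E) + a • ((ξ₁, η₁) : E × E))) (((x, x) : E × E) + a • ((ξ₁, η₁) : E × E)) :=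
        partial2_hasFDerivAt hU hg haU
      have hA_a := (((hΓ_a.comp (g := Γ) (((x, x) : E × E) + a • ((ξ₁, η₁) : E × E)) hσ_a).clm_apply hs_a).clm_apply hg_a).neg
      have hA'_a : HasFDerivAt (fun q' : E × E =>
          -(Γ (σ t q'.1 q'.2) (deriv (fun s => σ s q'.1 q'.2) t) (ρ t q'.1 q'.2 ζ))) _
          (((x, x) : E × E) + a • ((ξ₁, η₁) : E × E)) := hA_a
      rw [hA'_a.fderiv]
      simp [ContinuousLinearMap.add_apply]
    have hkey := hchain2.unique (hφ.congr_of_eventuallyEq hev2)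
    rw [hkey]
    simp [hσxx, hsdiag, hρconst, hu t, hCeq t, hDs2 t, (hsfd t).fderiv,
      ContinuousLinearMap.add_apply]
    module
  -- the second-derivative curve and its derivative
  have hw : ∀ t : ℝ, HasDerivAt (fun τ => fderiv ℝ (fun q : E × E =>
      fderiv ℝ (fun q' : E × E => ρ τ q'.1 q'.2 ζ) q) ((x, x) : E × E) (ξ₁, η₁) (ξ₂, η₂))
      ((-(fderiv ℝ Γ x ξ₂ (η₁ - ξ₁) ζ) - fderiv ℝ Γ x ξ₁ (η₂ - ξ₂) ζ
      - (2⁻¹ : ℝ) • Γ x (Γ x (η₁ - ξ₁) (η₂ - ξ₂) + Γ x (η₂ - ξ₂) (η₁ - ξ₁)) ζ) + t • (-(fderiv ℝ Γ x (η₂ - ξ₂) (η₁ - ξ₁) ζ) - fderiv ℝ Γ x (η₁ - ξ₁) (η₂ - ξ₂) ζ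
      + Γ x (Γ x (η₁ - ξ₁) (η₂ - ξ₂) + Γ x (η₂ - ξ₂) (η₁ - ξ₁)) ζ
      + Γ x (η₂ - ξ₂) (Γ x (η₁ - ξ₁) ζ) + Γ x (η₁ - ξ₁) (Γ x (η₂ - ξ₂) ζ))) t := by
    intro t
    have hsw : HasDerivAt (fun τ => fderiv ℝ (fun q : E × E =>
        fderiv ℝ (fun q' : E × E => ρ τ q'.1 q'.2 ζ) q) ((x, x) : E × E))
        (fderiv ℝ (fun q : E × E => fderiv ℝ (fun q' : E × E =>
          -(Γ (σ t q'.1 q'.2) (deriv (fun s => σ s q'.1 q'.2) t) (ρ t q'.1 q'.2 ζ))) q)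
          ((x, x) : E × E)) t := swap_ode2 hU hg hAρ hp t
    have happ := (hsw.clm_apply (hasDerivAt_const t ((ξ₁, η₁) : E × E))).clm_apply
      (hasDerivAt_const t ((ξ₂, η₂) : E × E))
    simp only [map_zero, add_zero, ContinuousLinearMap.zero_apply] at happ
    rw [hNval t] at happ
    exact happ
  -- vanishing at time zero
  have hw0 : fderiv ℝ (fun q : E × E =>
      fderiv ℝ (fun q' : E × E => ρ 0 q'.1 q'.2 ζ) q) ((x, x) : E × E) = 0 := by
    have hev : (fun q : E × E => fderiv ℝ (fun q' : E × E => ρ 0 q'.1 q'.2 ζ) q)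
        =ᶠ[nhds ((x, x) : E × E)] (fun _ => (0 : (E × E) →L[ℝ] E)) := by
      filter_upwards [hU.mem_nhds hp] with q hq
      have hev2 : (fun q' : E × E => ρ 0 q'.1 q'.2 ζ) =ᶠ[nhds q] fun _ => ζ :=
        Filter.eventually_of_mem (hU.mem_nhds hq) fun q' hq' => hρinit q'.1 hq'.1 q'.2 hq'.2 ζ
      rw [hev2.fderiv_eq]
      exact fderiv_const_apply ζ
    rw [hev.fderiv_eq]
    exact fderiv_const_apply (0 : (E × E) →L[ℝ] E)
  -- subtract the explicit antiderivative and use constancy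
  have hW : ∀ τ : ℝ, HasDerivAt (fun τ' : ℝ => fderiv ℝ (fun q : E × E =>
      fderiv ℝ (fun q' : E × E => ρ τ' q'.1 q'.2 ζ) q) ((x, x) : E × E) (ξ₁, η₁) (ξ₂, η₂)
      - (τ' • (-(fderiv ℝ Γ x ξ₂ (η₁ - ξ₁) ζ) - fderiv ℝ Γ x ξ₁ (η₂ - ξ₂) ζ
      - (2⁻¹ : ℝ) • Γ x (Γ x (η₁ - ξ₁) (η₂ - ξ₂) + Γ x (η₂ - ξ₂) (η₁ - ξ₁)) ζ) + (τ' ^ 2 / 2) • (-(fderiv ℝ Γ x (η₂ - ξ₂) (η₁ - ξ₁) ζ) - fderiv ℝ Γ x (η₁ - ξ₁) (η₂ - ξ₂) ζ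
      + Γ x (Γ x (η₁ - ξ₁) (η₂ - ξ₂) + Γ x (η₂ - ξ₂) (η₁ - ξ₁)) ζ
      + Γ x (η₂ - ξ₂) (Γ x (η₁ - ξ₁) ζ) + Γ x (η₁ - ξ₁) (Γ x (η₂ - ξ₂) ζ)))) 0 τ := by
    intro τ
    have ha := (hasDerivAt_id τ).smul_const (-(fderiv ℝ Γ x ξ₂ (η₁ - ξ₁) ζ) - fderiv ℝ Γ x ξ₁ (η₂ - ξ₂) ζ
      - (2⁻¹ : ℝ) • Γ x (Γ x (η₁ - ξ₁) (η₂ - ξ₂) + Γ x (η₂ - ξ₂) (η₁ - ξ₁)) ζ)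
    have hb' := ((hasDerivAt_pow 2 τ).div_const 2).smul_const (-(fderiv ℝ Γ x (η₂ - ξ₂) (η₁ - ξ₁) ζ) - fderiv ℝ Γ x (η₁ - ξ₁) (η₂ - ξ₂) ζ
      + Γ x (Γ x (η₁ - ξ₁) (η₂ - ξ₂) + Γ x (η₂ - ξ₂) (η₁ - ξ₁)) ζ
      + Γ x (η₂ - ξ₂) (Γ x (η₁ - ξ₁) ζ) + Γ x (η₁ - ξ₁) (Γ x (η₂ - ξ₂) ζ))
    have hb : HasDerivAt (fun τ' : ℝ => (τ' ^ 2 / 2) • (-(fderiv ℝ Γ x (η₂ - ξ₂) (η₁ - ξ₁) ζ) - fderiv ℝ Γ x (η₁ - ξ₁) (η₂ - ξ₂) ζ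
      + Γ x (Γ x (η₁ - ξ₁) (η₂ - ξ₂) + Γ x (η₂ - ξ₂) (η₁ - ξ₁)) ζ
      + Γ x (η₂ - ξ₂) (Γ x (η₁ - ξ₁) ζ) + Γ x (η₁ - ξ₁) (Γ x (η₂ - ξ₂) ζ)))
        (τ • (-(fderiv ℝ Γ x (η₂ - ξ₂) (η₁ - ξ₁) ζ) - fderiv ℝ Γ x (η₁ - ξ₁) (η₂ - ξ₂) ζ
      + Γ x (Γ x (η₁ - ξ₁) (η₂ - ξ₂) + Γ x (η₂ - ξ₂) (η₁ - ξ₁)) ζ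
      + Γ x (η₂ - ξ₂) (Γ x (η₁ - ξ₁) ζ) + Γ x (η₁ - ξ₁) (Γ x (η₂ - ξ₂) ζ))) τ := by
      convert hb' using 2
      norm_num
    have h1 := ha.add hb
    have h2 := (hw τ).sub h1
    simpa [Pi.add_def, Pi.sub_def] using h2
  have hconst := is_const_of_deriv_eq_zero (𝕜 := ℝ)
    (f := fun τ' : ℝ => fderiv ℝ (fun q : E × E =>
      fderiv ℝ (fun q' : E × E => ρ τ' q'.1 q'.2 ζ) q) ((x, x) : E × E) (ξ₁, η₁) (ξ₂, η₂)
      - (τ' • (-(fderiv ℝ Γ x ξ₂ (η₁ - ξ₁) ζ) - fderiv ℝ Γ x ξ₁ (η₂ - ξ₂) ζ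
      - (2⁻¹ : ℝ) • Γ x (Γ x (η₁ - ξ₁) (η₂ - ξ₂) + Γ x (η₂ - ξ₂) (η₁ - ξ₁)) ζ) + (τ' ^ 2 / 2) • (-(fderiv ℝ Γ x (η₂ - ξ₂) (η₁ - ξ₁) ζ) - fderiv ℝ Γ x (η₁ - ξ₁) (η₂ - ξ₂) ζ
      + Γ x (Γ x (η₁ - ξ₁) (η₂ - ξ₂) + Γ x (η₂ - ξ₂) (η₁ - ξ₁)) ζ
      + Γ x (η₂ - ξ₂) (Γ x (η₁ - ξ₁) ζ) + Γ x (η₁ - ξ₁) (Γ x (η₂ - ξ₂) ζ))))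
    (fun τ => (hW τ).differentiableAt) (fun τ => (hW τ).deriv) 1 0
  simp only [hw0, ContinuousLinearMap.zero_apply, zero_smul, add_zero, zero_add, sub_zero,
    zero_pow, ne_eq, OfNat.ofNat_ne_zero, not_false_eq_true, zero_div, sub_eq_zero,
    one_smul, one_pow] at hconst
  rw [hconst]
  simp only [map_add, map_sub, map_smul, ContinuousLinearMap.add_apply,
    ContinuousLinearMap.sub_apply, ContinuousLinearMap.smul_apply,
    ContinuousLinearMap.coe_smul', Pi.smul_apply, smul_sub, smul_add, smul_neg,
    smul_smul]
  module


/-- Let `a(x,y)·ζ := ρ(1,x,y,ζ)` be parallel transport from `x` to `y` along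
the short geodesic `σ`, where `ρ` solves `ρ(0) = ζ`, `ρ̇(t) = −Γ(σ(t,x,y))(σ̇(t,x,y), ρ(t))`.
Then the second derivative at the diagonal satisfies
`2·a''(x,x)((ξ₁,η₁),(ξ₂,η₂))·ζ = −(Γ'(x)·(η₁+ξ₁))(η₂−ξ₂,ζ) − (Γ'(x)·(η₂+ξ₂))(η₁−ξ₁,ζ)
 + Γ(x)(η₁−ξ₁, Γ(x)(η₂−ξ₂,ζ)) + Γ(x)(η₂−ξ₂, Γ(x)(η₁−ξ₁,ζ))`. -/
theorem parallel_transport_second_derivative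
    {n : ℕ} (V : Set (EuclideanSpace ℝ (Fin n))) (hV : IsOpen V)
    (x : EuclideanSpace ℝ (Fin n)) (hx : x ∈ V)
    (Γ : EuclideanSpace ℝ (Fin n) →
      EuclideanSpace ℝ (Fin n) →L[ℝ] EuclideanSpace ℝ (Fin n) →L[ℝ] EuclideanSpace ℝ (Fin n))
    (hΓ : ContDiffOn ℝ (⊤ : ℕ∞) Γ V)
    (σ : ℝ → EuclideanSpace ℝ (Fin n) → EuclideanSpace ℝ (Fin n) → EuclideanSpace ℝ (Fin n))
    (ρ : ℝ → EuclideanSpace ℝ (Fin n) → EuclideanSpace ℝ (Fin n) → EuclideanSpace ℝ (Fin n) →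
      EuclideanSpace ℝ (Fin n))
    -- smoothness of the geodesic `σ` and diagonal facts: `σ(t,x,x) = x`, `σ̇(t,x,x) = 0`,
    -- `σ'(t,x,x)·(ξ,η) = ξ + t(η−ξ)`
    (hσsmooth : ContDiffOn ℝ (⊤ : ℕ∞)
      (fun p : ℝ × EuclideanSpace ℝ (Fin n) × EuclideanSpace ℝ (Fin n) =>
        σ p.1 p.2.1 p.2.2) (Set.univ ×ˢ V ×ˢ V))
    (hσdiag : ∀ t : ℝ, ∀ y ∈ V, σ t y y = y)
    (hσdot : ∀ t : ℝ, ∀ y ∈ V, HasDerivAt (fun τ => σ τ y y) 0 t)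
    (hσder : ∀ t : ℝ, ∀ y ∈ V, ∀ ξ η : EuclideanSpace ℝ (Fin n),
      fderiv ℝ (fun q : EuclideanSpace ℝ (Fin n) × EuclideanSpace ℝ (Fin n) =>
        σ t q.1 q.2) (y, y) (ξ, η) = ξ + t • (η - ξ))
    (hσder2 : ∀ t : ℝ, ∀ y ∈ V, ∀ ξ₁ η₁ ξ₂ η₂ : EuclideanSpace ℝ (Fin n),
      fderiv ℝ (fun q : EuclideanSpace ℝ (Fin n) × EuclideanSpace ℝ (Fin n) =>
          fderiv ℝ (fun q' : EuclideanSpace ℝ (Fin n) × EuclideanSpace ℝ (Fin n) =>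
            σ t q'.1 q'.2) q) (y, y) (ξ₁, η₁) (ξ₂, η₂)
        = ((t - t ^ 2) / 2) • (Γ y (η₁ - ξ₁) (η₂ - ξ₂) + Γ y (η₂ - ξ₂) (η₁ - ξ₁)))
    -- `ρ` is smooth and solves the parallel transport ODE along `σ`
    (hρsmooth : ContDiffOn ℝ (⊤ : ℕ∞)
      (fun p : ℝ × EuclideanSpace ℝ (Fin n) × EuclideanSpace ℝ (Fin n) ×
          EuclideanSpace ℝ (Fin n) => ρ p.1 p.2.1 p.2.2.1 p.2.2.2)
      (Set.univ ×ˢ V ×ˢ V ×ˢ Set.univ))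
    (hρinit : ∀ x' ∈ V, ∀ y' ∈ V, ∀ ζ : EuclideanSpace ℝ (Fin n), ρ 0 x' y' ζ = ζ)
    (hρODE : ∀ t : ℝ, ∀ x' ∈ V, ∀ y' ∈ V, ∀ ζ : EuclideanSpace ℝ (Fin n),
      HasDerivAt (fun τ => ρ τ x' y' ζ)
        (-(Γ (σ t x' y') (deriv (fun τ => σ τ x' y') t) (ρ t x' y' ζ))) t) :
    ∀ ξ₁ η₁ ξ₂ η₂ ζ : EuclideanSpace ℝ (Fin n),
      (2 : ℝ) • fderiv ℝ (fun q : EuclideanSpace ℝ (Fin n) × EuclideanSpace ℝ (Fin n) =>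
          fderiv ℝ (fun q' : EuclideanSpace ℝ (Fin n) × EuclideanSpace ℝ (Fin n) =>
            ρ 1 q'.1 q'.2 ζ) q) (x, x) (ξ₁, η₁) (ξ₂, η₂)
        = -(fderiv ℝ Γ x (η₁ + ξ₁) (η₂ - ξ₂) ζ) - fderiv ℝ Γ x (η₂ + ξ₂) (η₁ - ξ₁) ζ
          + Γ x (η₁ - ξ₁) (Γ x (η₂ - ξ₂) ζ) + Γ x (η₂ - ξ₂) (Γ x (η₁ - ξ₁) ζ) :=
  main_aux V hV x hx Γ hΓ σ ρ hσsmooth hσdiag hσdot hσder hσder2 hρsmooth hρinit hρODE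
end
end
end

section
/- Let Γ be a smooth Christoffel symbol on an open U ⊆ ℝⁿ, a(x,y) the associated parallel transport with a(x,x)=id and a'(x,x)(ξ,η)ζ = −Γ(x)(η−ξ,ζ), and let X, Z be smooth vector fields with local flow α of X. Then the derivative at t = 0 of t ↦ α'(−t, α(t,x))·a(x, α(t,x))·Z(x) equals −X'(x)Z(x) − Γ(x)(X(x), Z(x)), i.e., minus the covariant derivative −(∇_Z X)(x) where the indices of the connection pair as in ∇ with Christoffel symbol Γ. -/
noncomputable section

theorem aux_lie_deriv
    {E : Type*} [NormedAddCommGroup E] [NormedSpace ℝ E]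
    (U : Set E) (hU : IsOpen U) (x : E) (hx : x ∈ U)
    (Γ : E → E →L[ℝ] E →L[ℝ] E)
    (a : E → E → E →L[ℝ] E)
    (hasmooth : ContDiffOn ℝ (⊤ : ℕ∞) (fun q : E × E => a q.1 q.2) (U ×ˢ U))
    (hadiag : ∀ y ∈ U, a y y = ContinuousLinearMap.id ℝ E)
    (hader : ∀ y ∈ U, ∀ ξ η ζ : E,
      fderiv ℝ (fun q : E × E => a q.1 q.2 ζ) (y, y) (ξ, η) = -(Γ y (η - ξ) ζ))
    (X Z : E → E) (hX : ContDiffOn ℝ (⊤ : ℕ∞) X U)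
    (D : Set (ℝ × E)) (hD : IsOpen D)
    (hD0 : ∀ y ∈ U, ((0 : ℝ), y) ∈ D)
    (α : ℝ → E → E)
    (hα : ContDiffOn ℝ (⊤ : ℕ∞) (fun p : ℝ × E => α p.1 p.2) D)
    (hα0 : ∀ y ∈ U, α 0 y = y)
    (hODE : ∀ p ∈ D, HasDerivAt (fun t => α t p.2) (X (α p.1 p.2)) p.1) :
    HasDerivAt (fun t => fderiv ℝ (fun y => α (-t) y) (α t x) (a x (α t x) (Z x)))
      (-(fderiv ℝ X x (Z x)) - Γ x (X x) (Z x)) 0 := by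
  set f : ℝ × E → E := fun p => α p.1 p.2 with hf_def
  have hp0 : ((0 : ℝ), x) ∈ D := hD0 x hx
  have hfc : ∀ p ∈ D, ContDiffAt ℝ (⊤ : ℕ∞) f p := fun p hp => hα.contDiffAt (hD.mem_nhds hp)
  have hfd : ∀ p ∈ D, DifferentiableAt ℝ f p := fun p hp =>
    (hfc p hp).differentiableAt (by simp)
  set A : ℝ × E → (ℝ × E) →L[ℝ] E := fderiv ℝ f with hA_def
  have hA_at : ContDiffAt ℝ 1 A ((0 : ℝ), x) :=
    (hfc _ hp0).fderiv_right (by exact_mod_cast ENat.natCast_le_of_coe_top_le_withTop le_rfl 2)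
  have hA_diff : DifferentiableAt ℝ A ((0 : ℝ), x) := hA_at.differentiableAt one_ne_zero
  set A' : (ℝ × E) →L[ℝ] (ℝ × E) →L[ℝ] E := fderiv ℝ A ((0 : ℝ), x) with hA'_def
  have hsymm : ∀ v w, A' v w = A' w v :=
    (hfc _ hp0).isSymmSndFDerivAt (by rw [minSmoothness_of_isRCLikeNormedField]; exact_mod_cast ENat.natCast_le_of_coe_top_le_withTop le_rfl 2)
  -- partial derivative in the second variable
  have hinr : ∀ (c : ℝ) (y : E),
      HasFDerivAt (fun z : E => ((c : ℝ), z)) (ContinuousLinearMap.inr ℝ ℝ E) y :=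
    fun c y => HasFDerivAt.prodMk (hasFDerivAt_const c y) (hasFDerivAt_id y)
  have hBA : ∀ p ∈ D, fderiv ℝ (fun y => α p.1 y) p.2
      = (A p).comp (ContinuousLinearMap.inr ℝ ℝ E) := by
    intro p hp
    exact ((hfd p hp).hasFDerivAt.comp p.2 (hinr p.1 p.2)).fderiv
  -- partial derivative in t
  have hApartial : ∀ p ∈ D, A p ((1 : ℝ), (0 : E)) = X (f p) := by
    intro p hp
    have h3 : HasDerivAt (fun s : ℝ => ((s : ℝ), p.2)) ((1 : ℝ), (0 : E)) p.1 :=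
      HasDerivAt.prodMk (hasDerivAt_id p.1) (hasDerivAt_const p.1 p.2)
    have h1 : HasDerivAt (fun s => f (s, p.2)) (A p ((1 : ℝ), (0 : E))) p.1 := by
      have := (hfd p hp).hasFDerivAt.comp_hasDerivAt p.1 h3
      simpa [Function.comp_def] using this
    exact h1.unique (hODE p hp)
  -- derivative of α 0 is the identity on U
  have hid : ∀ y ∈ U, fderiv ℝ (fun z => α 0 z) y = ContinuousLinearMap.id ℝ E := by
    intro y hy
    have hev : (fun z => α 0 z) =ᶠ[nhds y] id := by
      filter_upwards [hU.mem_nhds hy] with z hz using hα0 z hz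
    rw [hev.fderiv_eq, fderiv_id]
  have hA0 : ∀ y ∈ U, ∀ v : E, A ((0 : ℝ), y) ((0 : ℝ), v) = v := by
    intro y hy v
    have h1 := hBA ((0 : ℝ), y) (hD0 y hy)
    have h2 := congrArg (fun L : E →L[ℝ] E => L v) h1
    simp only [hid y hy] at h2
    simpa using h2.symm
  -- flow curve
  have hflow : HasDerivAt (fun t => α t x) (X x) 0 := by
    have h := hODE ((0 : ℝ), x) hp0
    simpa [hα0 x hx] using h
  have hc : HasDerivAt (fun t : ℝ => ((-t : ℝ), α t x)) ((-1 : ℝ), X x) 0 := by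
    exact HasDerivAt.prodMk ((hasDerivAt_id (0 : ℝ)).neg) hflow
  have hcmem : ∀ᶠ t in nhds (0 : ℝ), ((-t : ℝ), α t x) ∈ D := by
    have hcont : ContinuousAt (fun t : ℝ => ((-t : ℝ), α t x)) 0 := hc.continuousAt
    have hmem : D ∈ nhds ((fun t : ℝ => ((-t : ℝ), α t x)) 0) := by
      refine hD.mem_nhds ?_
      simpa [hα0 x hx] using hp0
    exact hcont.preimage_mem_nhds hmem
  -- derivative of t ↦ a x (α t x) (Z x)
  have hFaC : ContDiffOn ℝ (⊤ : ℕ∞) (fun q : E × E => a q.1 q.2 (Z x)) (U ×ˢ U) :=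
    hasmooth.clm_apply contDiffOn_const
  have hFa : DifferentiableAt ℝ (fun q : E × E => a q.1 q.2 (Z x)) (x, x) :=
    (hFaC.contDiffAt ((hU.prod hU).mem_nhds ⟨hx, hx⟩)).differentiableAt
      (by simp)
  have hva : HasDerivAt (fun t => a x (α t x) (Z x)) (-(Γ x (X x) (Z x))) 0 := by
    have hcurve : HasDerivAt (fun t : ℝ => ((x : E), α t x)) (((0 : E), X x)) 0 :=
      HasDerivAt.prodMk (hasDerivAt_const (0 : ℝ) x) hflow
    have hFa' : HasFDerivAt (fun q : E × E => a q.1 q.2 (Z x))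
        (fderiv ℝ (fun q : E × E => a q.1 q.2 (Z x)) (x, x))
        ((fun t : ℝ => ((x : E), α t x)) 0) := by
      simpa [hα0 x hx] using hFa.hasFDerivAt
    have h := hFa'.comp_hasDerivAt 0 hcurve
    have he := hader x hx 0 (X x) (Z x)
    rw [sub_zero] at he
    rw [← he]
    exact h
  -- key: A' (-1, X x) (0, Z x) = -(fderiv X x (Z x))
  have hkey : A' ((-1 : ℝ), X x) ((0 : ℝ), Z x) = -(fderiv ℝ X x (Z x)) := by
    have hχw : ∀ w : ℝ × E, HasFDerivAt (fun p : ℝ × E => A p w) (A'.flip w) ((0 : ℝ), x) := by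
      intro w
      have := hA_diff.hasFDerivAt.clm_apply (hasFDerivAt_const w ((0 : ℝ), x))
      simpa using this
    -- first: A' (0, X x) applied to vectors of the form (0, v) vanishes
    have hvanish : ∀ v : E, A' ((0 : ℝ), v) ((0 : ℝ), X x) = 0 := by
      intro v
      have hcomp : HasFDerivAt (fun y : E => A ((0 : ℝ), y) ((0 : ℝ), X x))
          ((A'.flip ((0 : ℝ), X x)).comp (ContinuousLinearMap.inr ℝ ℝ E)) x := by
        have h1 := (hχw ((0 : ℝ), X x)).comp x (hinr 0 x)
        simpa [Function.comp_def] using h1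
      have hev1 : (fun y : E => A ((0 : ℝ), y) ((0 : ℝ), X x)) =ᶠ[nhds x]
          (fun _ => X x) := by
        filter_upwards [hU.mem_nhds hx] with y hy
        have h1 := hBA ((0 : ℝ), y) (hD0 y hy)
        have h2 := congrArg (fun L : E →L[ℝ] E => L (X x)) h1
        simp only [hid y hy] at h2
        simpa using h2.symm
      have hf0 : fderiv ℝ (fun y : E => A ((0 : ℝ), y) ((0 : ℝ), X x)) x = 0 := by
        rw [hev1.fderiv_eq, fderiv_fun_const]
        rfl
      have := hcomp.fderiv
      rw [hf0] at this
      have h4 : A' ((0 : ℝ), v) ((0 : ℝ), X x)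
          = ((A'.flip ((0 : ℝ), X x)).comp (ContinuousLinearMap.inr ℝ ℝ E)) v := by
        simp [ContinuousLinearMap.inr_apply]
      rw [h4, ← this]
      rfl
    -- differentiability of X at x = f(0,x)
    have hXd : DifferentiableAt ℝ X x :=
      ((hX.contDiffAt (hU.mem_nhds hx)).differentiableAt (by simp))
    have hXf : HasFDerivAt X (fderiv ℝ X x) (f ((0 : ℝ), x)) := by
      rw [show f ((0 : ℝ), x) = x from hα0 x hx]
      exact hXd.hasFDerivAt
    have hχ2 : HasFDerivAt (fun p : ℝ × E => X (f p))
        ((fderiv ℝ X x).comp (A ((0 : ℝ), x))) ((0 : ℝ), x) :=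
      hXf.comp ((0 : ℝ), x) (hfd _ hp0).hasFDerivAt
    -- eventual equality
    have hevχ : (fun p : ℝ × E => A p ((-1 : ℝ), X x)) =ᶠ[nhds ((0 : ℝ), x)]
        (fun p : ℝ × E => A p ((0 : ℝ), X x) - X (f p)) := by
      filter_upwards [hD.mem_nhds hp0] with p hp
      have he : ((-1 : ℝ), X x) = (((0 : ℝ), X x) - ((1 : ℝ), (0 : E))) := by
        simp [Prod.ext_iff]
      rw [he, map_sub, hApartial p hp]
    have hsub : HasFDerivAt (fun p : ℝ × E => A p ((0 : ℝ), X x) - X (f p))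
        (A'.flip ((0 : ℝ), X x) - (fderiv ℝ X x).comp (A ((0 : ℝ), x))) ((0 : ℝ), x) :=
      (hχw ((0 : ℝ), X x)).sub hχ2
    have hfeq : fderiv ℝ (fun p : ℝ × E => A p ((-1 : ℝ), X x)) ((0 : ℝ), x)
        = A'.flip ((0 : ℝ), X x) - (fderiv ℝ X x).comp (A ((0 : ℝ), x)) := by
      rw [hevχ.fderiv_eq, hsub.fderiv]
    have hfeq' := (hχw ((-1 : ℝ), X x)).fderiv
    rw [hfeq'] at hfeq
    have h5 := congrArg (fun L : (ℝ × E) →L[ℝ] E => L ((0 : ℝ), Z x)) hfeq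
    simp only [ContinuousLinearMap.flip_apply, ContinuousLinearMap.sub_apply,
      ContinuousLinearMap.comp_apply] at h5
    rw [hsymm ((-1 : ℝ), X x) ((0 : ℝ), Z x), h5, hvanish (Z x), hA0 x hx (Z x), zero_sub]
  -- assemble
  have hAc : HasDerivAt (fun t : ℝ => A ((-t : ℝ), α t x)) (A' ((-1 : ℝ), X x)) 0 := by
    have hAf' : HasFDerivAt A A' ((fun t : ℝ => ((-t : ℝ), α t x)) 0) := by
      simpa [hα0 x hx] using hA_diff.hasFDerivAt
    exact hAf'.comp_hasDerivAt 0 hc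
  have hvv : HasDerivAt (fun t : ℝ => (((0 : ℝ), a x (α t x) (Z x)) : ℝ × E))
      (((0 : ℝ), -(Γ x (X x) (Z x)))) 0 :=
    HasDerivAt.prodMk (hasDerivAt_const (0 : ℝ) (0 : ℝ)) hva
  have h := hAc.clm_apply hvv
  have e1 : a x (α 0 x) (Z x) = Z x := by
    rw [hα0 x hx, hadiag x hx]; rfl
  simp only [neg_zero, hα0 x hx, hadiag x hx, ContinuousLinearMap.id_apply] at h
  rw [hkey, hA0 x hx] at h
  have heq : (fun t => fderiv ℝ (fun y => α (-t) y) (α t x) (a x (α t x) (Z x))) =ᶠ[nhds (0 : ℝ)]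
      (fun t => A ((-t : ℝ), α t x) (((0 : ℝ), a x (α t x) (Z x)) : ℝ × E)) := by
    filter_upwards [hcmem] with t ht
    rw [hBA ((-t : ℝ), α t x) ht]
    simp
  rw [sub_eq_add_neg]
  exact heq.hasDerivAt_iff.mpr h


/-- Let `a(x,y)` be the parallel transport associated to a smooth Christoffel
symbol `Γ`, with `a(x,x) = id` and `a'(x,x)(ξ,η)ζ = −Γ(x)(η−ξ,ζ)`, and let `X, Z` be smooth
vector fields with local flow `α` of `X`. Then the derivative at `t = 0` of
`t ↦ α'(−t, α(t,x))·a(x, α(t,x))·Z(x)` equals `−X'(x)Z(x) − Γ(x)(X(x), Z(x))`, i.e. minus the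
covariant derivative `−(∇_Z X)(x)`. -/
theorem lie_derivative_of_transported_field
    {n : ℕ} (U : Set (EuclideanSpace ℝ (Fin n))) (hU : IsOpen U)
    (x : EuclideanSpace ℝ (Fin n)) (hx : x ∈ U)
    (Γ : EuclideanSpace ℝ (Fin n) →
      EuclideanSpace ℝ (Fin n) →L[ℝ] EuclideanSpace ℝ (Fin n) →L[ℝ] EuclideanSpace ℝ (Fin n))
    (hΓ : ContDiffOn ℝ (⊤ : ℕ∞) Γ U)
    (a : EuclideanSpace ℝ (Fin n) → EuclideanSpace ℝ (Fin n) →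
      EuclideanSpace ℝ (Fin n) →L[ℝ] EuclideanSpace ℝ (Fin n))
    (hasmooth : ContDiffOn ℝ (⊤ : ℕ∞)
      (fun q : EuclideanSpace ℝ (Fin n) × EuclideanSpace ℝ (Fin n) => a q.1 q.2) (U ×ˢ U))
    (hadiag : ∀ y ∈ U, a y y = ContinuousLinearMap.id ℝ (EuclideanSpace ℝ (Fin n)))
    (hader : ∀ y ∈ U, ∀ ξ η ζ : EuclideanSpace ℝ (Fin n),
      fderiv ℝ (fun q : EuclideanSpace ℝ (Fin n) × EuclideanSpace ℝ (Fin n) =>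
        a q.1 q.2 ζ) (y, y) (ξ, η) = -(Γ y (η - ξ) ζ))
    (X Z : EuclideanSpace ℝ (Fin n) → EuclideanSpace ℝ (Fin n))
    (hX : ContDiffOn ℝ (⊤ : ℕ∞) X U) (hZ : ContDiffOn ℝ (⊤ : ℕ∞) Z U)
    -- `α` is the local flow of `X` on the open domain `D`
    (D : Set (ℝ × EuclideanSpace ℝ (Fin n))) (hD : IsOpen D)
    (hD0 : ∀ y ∈ U, ((0 : ℝ), y) ∈ D)
    (α : ℝ → EuclideanSpace ℝ (Fin n) → EuclideanSpace ℝ (Fin n))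
    (hα : ContDiffOn ℝ (⊤ : ℕ∞) (fun p : ℝ × EuclideanSpace ℝ (Fin n) => α p.1 p.2) D)
    (hα0 : ∀ y ∈ U, α 0 y = y)
    (hαU : ∀ p ∈ D, p.2 ∈ U ∧ α p.1 p.2 ∈ U)
    (hODE : ∀ p ∈ D, HasDerivAt (fun t => α t p.2) (X (α p.1 p.2)) p.1) :
    HasDerivAt (fun t => fderiv ℝ (fun y => α (-t) y) (α t x) (a x (α t x) (Z x)))
      (-(fderiv ℝ X x (Z x)) - Γ x (X x) (Z x)) 0 := by
  exact aux_lie_deriv U hU x hx Γ a hasmooth hadiag hader X Z hX D hD hD0 α hα hα0 hODE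
end
end

section
/- Suppose for every triple of smooth vector fields X, Y, Z on an open set U ⊆ ℝⁿ and every x ∈ U one has −X''(x)(Y(x),Z(x)) + X'(x)·Γ(x)(Y(x),Z(x)) − (Γ'(x)·X(x))(Y(x),Z(x)) − Γ(x)(X'(x)Y(x), Z(x)) − Γ(x)(Y(x), X'(x)Z(x)) = 0, where Γ : U → L²(ℝⁿ×ℝⁿ,ℝⁿ) is smooth. Then no such Γ exists; more precisely, the hypothesis leads to a contradiction: choosing X locally constant forces Γ' = 0, choosing X with X' = id near x forces Γ = 0, and then the remaining condition X''(x)(Y(x),Z(x)) = 0 for all X,Y,Z fails (e.g., for X a quadratic vector field). -/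
noncomputable section

set_option maxHeartbeats 1000000 in
/-- There is no smooth Christoffel symbol `Γ` on a nonempty open `U ⊆ ℝⁿ`
(`n ≥ 1`) such that for all smooth vector fields `X, Y, Z` and all `x ∈ U`
`−X''(x)(Y(x),Z(x)) + X'(x)·Γ(x)(Y(x),Z(x)) − (Γ'(x)·X(x))(Y(x),Z(x))
  − Γ(x)(X'(x)Y(x), Z(x)) − Γ(x)(Y(x), X'(x)Z(x)) = 0`:
the hypothesis leads to a contradiction. -/
theorem no_christoffel_kills_lie_derivative_obstruction
    {n : ℕ} (hn : 0 < n) (U : Set (EuclideanSpace ℝ (Fin n))) (hU : IsOpen U)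
    (hne : U.Nonempty)
    (Γ : EuclideanSpace ℝ (Fin n) →
      EuclideanSpace ℝ (Fin n) →L[ℝ] EuclideanSpace ℝ (Fin n) →L[ℝ] EuclideanSpace ℝ (Fin n))
    (hΓ : ContDiffOn ℝ (⊤ : ℕ∞) Γ U)
    (h : ∀ X Y Z : EuclideanSpace ℝ (Fin n) → EuclideanSpace ℝ (Fin n),
      ContDiffOn ℝ (⊤ : ℕ∞) X U → ContDiffOn ℝ (⊤ : ℕ∞) Y U → ContDiffOn ℝ (⊤ : ℕ∞) Z U →
      ∀ x ∈ U,
        -(fderiv ℝ (fun y => fderiv ℝ X y) x (Y x) (Z x))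
          + fderiv ℝ X x (Γ x (Y x) (Z x))
          - fderiv ℝ Γ x (X x) (Y x) (Z x)
          - Γ x (fderiv ℝ X x (Y x)) (Z x)
          - Γ x (Y x) (fderiv ℝ X x (Z x)) = 0) :
    False := by
  classical
  -- Step 1: Γ' vanishes on U (take X, Y, Z constant).
  have hΓ' : ∀ x ∈ U, ∀ v a b : EuclideanSpace ℝ (Fin n), fderiv ℝ Γ x v a b = 0 := by
    intro x hx v a b
    have := h (fun _ => v) (fun _ => a) (fun _ => b)
      contDiffOn_const contDiffOn_const contDiffOn_const x hx
    simpa using this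
  -- Step 2: Γ vanishes on U (take X = id).
  have hΓ0 : ∀ x ∈ U, ∀ a b : EuclideanSpace ℝ (Fin n), Γ x a b = 0 := by
    intro x hx a b
    have := h (fun y => y) (fun _ => a) (fun _ => b)
      contDiff_id.contDiffOn contDiffOn_const contDiffOn_const x hx
    simp only [fderiv_id', ContinuousLinearMap.coe_id', id_eq] at this
    have h2 : fderiv ℝ (fun _ : EuclideanSpace ℝ (Fin n) => ContinuousLinearMap.id ℝ (EuclideanSpace ℝ (Fin n))) x = 0 := fderiv_const_apply _
    rw [h2] at this
    rw [hΓ' x hx x a b] at this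
    simpa using this
  -- Step 3: a quadratic vector field contradicts this.
  obtain ⟨x₀, hx₀⟩ := hne
  set e : EuclideanSpace ℝ (Fin n) := EuclideanSpace.single ⟨0, hn⟩ 1 with he
  have hne' : ‖e‖ = 1 := by rw [he]; exact (by simpa using EuclideanSpace.norm_single (𝕜:=ℝ) (⟨0,hn⟩:Fin n) 1)
  set L : EuclideanSpace ℝ (Fin n) →L[ℝ] ℝ := innerSL ℝ e with hL
  have hLe : L e = 1 := by
    have : (inner ℝ e e : ℝ) = ‖e‖ ^ 2 := real_inner_self_eq_norm_sq e
    simp [hL, innerSL_apply_apply, this, hne']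
  set M : EuclideanSpace ℝ (Fin n) →L[ℝ] EuclideanSpace ℝ (Fin n) := L.smulRight e with hM
  set X : EuclideanSpace ℝ (Fin n) → EuclideanSpace ℝ (Fin n) := fun y => (L y * L y) • e with hX
  have hXd : ∀ y : EuclideanSpace ℝ (Fin n), HasFDerivAt X ((L y • L + L y • L).smulRight e) y := by
    intro y
    exact (L.hasFDerivAt.mul L.hasFDerivAt).smul_const e
  have hXf : ∀ y : EuclideanSpace ℝ (Fin n), fderiv ℝ X y = (2 * L y) • M := by
    intro y
    rw [(hXd y).fderiv]
    ext v
    simp only [hM, ContinuousLinearMap.smulRight_apply, ContinuousLinearMap.add_apply,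
      ContinuousLinearMap.smul_apply, smul_eq_mul, smul_smul]
    rw [show L y * L v + L y * L v = 2 * L y * L v by ring]
  have hX2 : HasFDerivAt (fun y => fderiv ℝ X y) (((2 : ℝ) • L).smulRight M) x₀ := by
    have : HasFDerivAt (fun y : EuclideanSpace ℝ (Fin n) => (2 * L y) • M) (((2 : ℝ) • L).smulRight M) x₀ :=
      (L.hasFDerivAt.const_mul (2 : ℝ)).smul_const M
    exact this.congr_of_eventuallyEq (by filter_upwards with y using (hXf y))
  have hXs : ContDiffOn ℝ (⊤ : ℕ∞) X U :=
    ((L.contDiff.mul L.contDiff).smul contDiff_const).contDiffOn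
  have key := h X (fun _ => e) (fun _ => e) hXs contDiffOn_const contDiffOn_const x₀ hx₀
  rw [hX2.fderiv, hΓ' x₀ hx₀ (X x₀) e e, hΓ0 x₀ hx₀ e e] at key
  rw [hΓ0 x₀ hx₀ _ e, hΓ0 x₀ hx₀ e _] at key
  simp only [ContinuousLinearMap.smulRight_apply, ContinuousLinearMap.smul_apply,
    map_zero, hLe, hM] at key
  have : (2 : ℝ) • e = 0 := by
    have := key
    simp [smul_smul] at this ⊢
    simpa [two_smul] using this
  have : e = 0 := by
    have h2 : ((2 : ℝ))⁻¹ • ((2 : ℝ) • e) = 0 := by rw [this, smul_zero]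
    simpa [smul_smul] using h2
  rw [this] at hne'
  simp at hne'
end
end

section
/- For every n ≥ 1 and every q ∈ ℕ there exists a smooth compactly supported function φ₁ on [0,∞), constant in a neighborhood of 0, such that ∫₀^∞ s^{j/n} φ₁(s) ds equals n/ωₙ for j = 0 and equals 0 for j = 1, 2, …, q, where ωₙ is the surface area of the unit sphere in ℝⁿ. Consequently φ(x) := φ₁(‖x‖ⁿ) is a smooth compactly supported function on ℝⁿ with ∫ φ = 1 and vanishing moments ∫ x^α φ(x) dx = 0 for all multi-indices α with 1 ≤ |α| ≤ q. -/
open MeasureTheory Set Metric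

noncomputable section

/-- The surface area `ωₙ` of the unit sphere in `ℝⁿ`, i.e. `n` times the volume of the unit
ball. -/
def sphereArea (n : ℕ) : ℝ :=
  n * (volume (Metric.ball (0 : EuclideanSpace ℝ (Fin n)) 1)).toReal

private lemma exists_u (A : ℝ) (q : ℕ) :
    ∃ u : ℝ → ℝ, ContDiff ℝ (⊤ : ℕ∞) u ∧ HasCompactSupport u ∧
      (∀ t : ℝ, t ∉ Set.Ioo (1:ℝ) 2 → u t = 0) ∧
      ∀ j : ℕ, j ≤ q → (∫ t in Set.Ioi (0:ℝ), t ^ j * u t) = if j = 0 then A else 0 := by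
  set ψb : ContDiffBump (3/2 : ℝ) := ⟨1/4, 1/2, by norm_num, by norm_num⟩ with hψb
  set ψ : ℝ → ℝ := fun t => ψb t with hψdef
  have hψs : Function.support ψ = Ioo (1:ℝ) 2 := by
    rw [hψdef]
    show Function.support ψb = _
    rw [ψb.support_eq, Real.ball_eq_Ioo]
    norm_num
  have hψ1 : ∀ t ∈ Icc (5/4:ℝ) (7/4), ψ t = 1 := by
    intro t ht
    apply ψb.one_of_mem_closedBall
    rw [Real.closedBall_eq_Icc]
    convert ht using 2 <;> norm_num
  have hint : ∀ F : ℝ → ℝ, Continuous F →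
      Integrable (fun t => F t * ψ t) (volume.restrict (Set.Ioi (0:ℝ))) := by
    intro F hF
    exact ((hF.mul ψb.continuous).integrable_of_hasCompactSupport
      ψb.hasCompactSupport.mul_left).restrict
  set M : Matrix (Fin (q+1)) (Fin (q+1)) ℝ :=
    fun j k => ∫ t in Set.Ioi (0:ℝ), t ^ ((j:ℕ)+(k:ℕ)) * ψ t with hM
  have key : ∀ c : Fin (q+1) → ℝ, M.mulVec c = 0 → c = 0 := by
    intro c hc
    set H : ℝ → ℝ := fun t => ∑ k : Fin (q+1), c k * t ^ (k:ℕ) with hH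
    have hHcont : Continuous H := by
      apply continuous_finset_sum
      intro k _
      exact continuous_const.mul (continuous_pow _)
    have hzero : (∫ t in Set.Ioi (0:ℝ), H t ^ 2 * ψ t) = 0 := by
      have expand : ∀ t : ℝ, H t ^ 2 * ψ t =
          ∑ j : Fin (q+1), ∑ k : Fin (q+1), (c j * c k) * (t ^ ((j:ℕ)+(k:ℕ)) * ψ t) := by
        intro t
        rw [hH, sq, Finset.sum_mul_sum, Finset.sum_mul]
        refine Finset.sum_congr rfl fun j _ => ?_
        rw [Finset.sum_mul]
        exact Finset.sum_congr rfl fun k _ => by ring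
      rw [MeasureTheory.integral_congr_ae (Filter.Eventually.of_forall expand)]
      rw [integral_finset_sum]
      case hf =>
        intro j _
        apply integrable_finset_sum
        intro k _
        exact (hint (fun t => t ^ ((j:ℕ)+(k:ℕ))) (continuous_pow _)).const_mul _
      have step : ∀ j : Fin (q+1), (∫ t in Set.Ioi (0:ℝ),
          ∑ k : Fin (q+1), (c j * c k) * (t ^ ((j:ℕ)+(k:ℕ)) * ψ t)) = c j * (M.mulVec c) j := by
        intro j
        rw [integral_finset_sum]
        case hf =>
          intro k _
          exact (hint (fun t => t ^ ((j:ℕ)+(k:ℕ))) (continuous_pow _)).const_mul _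
        simp only [Matrix.mulVec, dotProduct, Finset.mul_sum]
        refine Finset.sum_congr rfl fun k _ => ?_
        rw [integral_const_mul, hM]
        ring
      rw [Finset.sum_congr rfl fun j _ => step j]
      rw [hc]
      simp
    have hae : (fun t => H t ^ 2 * ψ t) =ᵐ[volume.restrict (Set.Ioi (0:ℝ))] 0 := by
      refine (integral_eq_zero_iff_of_nonneg ?_ ?_).mp hzero
      · intro t
        exact mul_nonneg (sq_nonneg _) ψb.nonneg
      · exact hint (fun t => H t ^ 2) (hHcont.pow 2)
    have heq : EqOn (fun t => H t ^ 2 * ψ t) 0 (Ioo (5/4:ℝ) (7/4)) := by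
      apply Measure.eqOn_of_ae_eq (μ := (volume : Measure ℝ))
      · exact ae_restrict_of_ae_restrict_of_subset
          (fun t ht => lt_trans (by norm_num) ht.1) hae
      · exact ((hHcont.pow 2).mul ψb.continuous).continuousOn
      · exact continuousOn_const
      · rw [interior_Ioo]
        exact subset_closure
    have hH0 : ∀ t ∈ Ioo (5/4:ℝ) (7/4), H t = 0 := by
      intro t ht
      have h1 := heq ht
      simp only [Pi.zero_apply] at h1
      rw [hψ1 t (Ioo_subset_Icc_self ht), mul_one] at h1
      exact pow_eq_zero_iff two_ne_zero |>.mp h1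
    set p : Polynomial ℝ := ∑ k : Fin (q+1), Polynomial.C (c k) * Polynomial.X ^ (k:ℕ) with hp
    have hpe : ∀ t, p.eval t = H t := by
      intro t
      rw [hp, hH, Polynomial.eval_finset_sum]
      simp
    have hp0 : p = 0 := by
      apply p.eq_zero_of_infinite_isRoot
      apply Set.Infinite.mono (s := Ioo (5/4:ℝ) (7/4))
      · intro t ht
        simp only [mem_setOf_eq, Polynomial.IsRoot, hpe]
        exact hH0 t ht
      · exact Set.Ioo_infinite (by norm_num)
    funext k
    have hck := congrArg (fun r => Polynomial.coeff r (k:ℕ)) hp0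
    simp only [hp, Polynomial.finset_sum_coeff, Polynomial.coeff_C_mul,
      Polynomial.coeff_X_pow, Polynomial.coeff_zero, mul_ite, mul_one, mul_zero] at hck
    simp only [Fin.val_inj, Finset.sum_ite_eq, Finset.mem_univ, if_true] at hck
    exact hck
  have hinj : Function.Injective M.mulVecLin :=
    (injective_iff_map_eq_zero _).mpr (fun c hc => key c hc)
  obtain ⟨c, hc⟩ := LinearMap.injective_iff_surjective.mp hinj
    (fun j => if j = (0 : Fin (q+1)) then A else 0)
  rw [Matrix.mulVecLin_apply] at hc
  refine ⟨fun t => (∑ k : Fin (q+1), c k * t ^ (k:ℕ)) * ψ t, ?_, ?_, ?_, ?_⟩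
  · exact (ContDiff.sum fun k _ => contDiff_const.mul (contDiff_id.pow _)).mul ψb.contDiff
  · exact ψb.hasCompactSupport.mul_left
  · intro t ht
    rw [← hψs] at ht
    show (∑ k : Fin (q+1), c k * t ^ (k:ℕ)) * ψ t = 0
    rw [Function.notMem_support.mp ht, mul_zero]
  · intro j hj
    set jf : Fin (q+1) := ⟨j, by omega⟩ with hjf
    have expand2 : ∀ t : ℝ, t ^ j * ((∑ k : Fin (q+1), c k * t ^ (k:ℕ)) * ψ t) =
        ∑ k : Fin (q+1), c k * (t ^ ((jf:ℕ)+(k:ℕ)) * ψ t) := by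
      intro t
      rw [Finset.sum_mul, Finset.mul_sum]
      refine Finset.sum_congr rfl fun k _ => ?_
      have : (jf : ℕ) = j := rfl
      rw [this]
      ring
    rw [MeasureTheory.integral_congr_ae (Filter.Eventually.of_forall expand2)]
    rw [integral_finset_sum]
    case hf =>
      intro k _
      exact (hint (fun t => t ^ ((jf:ℕ)+(k:ℕ))) (continuous_pow _)).const_mul _
    have : ∀ k : Fin (q+1), (∫ t in Set.Ioi (0:ℝ), c k * (t ^ ((jf:ℕ)+(k:ℕ)) * ψ t)) =
        M jf k * c k := by
      intro k
      rw [integral_const_mul, hM]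
      ring
    rw [Finset.sum_congr rfl fun k _ => this k]
    have hjc := congrFun hc jf
    simp only [Matrix.mulVec, dotProduct] at hjc
    rw [hjc]
    have : jf = 0 ↔ j = 0 := by
      rw [Fin.ext_iff]
      exact Iff.rfl
    by_cases h0 : j = 0
    · rw [if_pos h0, if_pos (this.mpr h0)]
    · rw [if_neg h0, if_neg (fun hh => h0 (this.mp hh))]

private lemma polar_moment (n : ℕ) (hn : 1 ≤ n) (g : ℝ → ℝ) (α : Fin n → ℕ) :
    ∫ x : EuclideanSpace ℝ (Fin n), (∏ i, x i ^ α i) * g ‖x‖ =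
      (∫ θ : sphere (0 : EuclideanSpace ℝ (Fin n)) 1,
          (∏ i, (θ : EuclideanSpace ℝ (Fin n)) i ^ α i)
          ∂((volume : Measure (EuclideanSpace ℝ (Fin n))).toSphere)) *
      ∫ r in Set.Ioi (0:ℝ), r ^ (n-1) * (r ^ (∑ i, α i) * g r) := by
  set E := EuclideanSpace ℝ (Fin n) with hE
  haveI : Nonempty (Fin n) := ⟨⟨0, hn⟩⟩
  haveI : Nontrivial E := by
    refine nontrivial_of_ne (EuclideanSpace.single (⟨0, hn⟩ : Fin n) (1:ℝ)) 0 ?_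
    intro h
    have h2 : ‖EuclideanSpace.single (⟨0, hn⟩ : Fin n) (1:ℝ)‖ = 0 := by rw [h, norm_zero]
    rw [EuclideanSpace.norm_single] at h2
    norm_num at h2
  set μ : Measure E := volume with hμ
  set m := ∑ i, α i with hm
  have homog : ∀ (c : ℝ) (y : E), (∏ i, (c • y) i ^ α i) = c ^ m * ∏ i, y i ^ α i := by
    intro c y
    have happ : ∀ i, (c • y) i = c * y i := fun i => rfl
    simp_rw [happ, mul_pow]
    rw [Finset.prod_mul_distrib, Finset.prod_pow_eq_pow_sum]
  have hfr : Module.finrank ℝ E = n := finrank_euclideanSpace_fin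
  have step1 : ∫ x : E, (∏ i, x i ^ α i) * g ‖x‖ ∂μ
      = ∫ x : ({0}ᶜ : Set E), ((∏ i, (x : E) i ^ α i) * g ‖(x : E)‖) ∂(μ.comap (↑)) := by
    calc ∫ x : E, (∏ i, x i ^ α i) * g ‖x‖ ∂μ
        = ∫ x in ({0}ᶜ : Set E), (∏ i, x i ^ α i) * g ‖x‖ ∂μ := by
          rw [MeasureTheory.restrict_compl_singleton]
      _ = _ := (integral_subtype_comap (measurableSet_singleton (0:E)).compl _).symm
  have step2 : ∫ x : ({0}ᶜ : Set E), ((∏ i, (x : E) i ^ α i) * g ‖(x : E)‖) ∂(μ.comap (↑))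
      = ∫ p : sphere (0:E) 1 × Ioi (0:ℝ),
          ((∏ i, (p.1 : E) i ^ α i) * ((p.2 : ℝ) ^ m * g p.2))
          ∂(μ.toSphere.prod (Measure.volumeIoiPow (n-1))) := by
    have hmp := (μ.measurePreserving_homeomorphUnitSphereProd).integral_comp
      (Homeomorph.measurableEmbedding _)
      (fun p : sphere (0:E) 1 × Ioi (0:ℝ) => (∏ i, (p.1 : E) i ^ α i) * ((p.2 : ℝ) ^ m * g p.2))
    rw [hfr] at hmp
    rw [← hmp]
    apply integral_congr_ae
    apply Filter.Eventually.of_forall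
    rintro ⟨x, hx⟩
    have hx0 : x ≠ 0 := hx
    have hnorm : ‖x‖ ≠ 0 := norm_ne_zero_iff.mpr hx0
    simp only [homeomorphUnitSphereProd_apply_fst_coe, homeomorphUnitSphereProd_apply_snd_coe]
    rw [homog]
    rw [inv_pow]
    field_simp
  have step3 : ∫ p : sphere (0:E) 1 × Ioi (0:ℝ),
          ((∏ i, (p.1 : E) i ^ α i) * ((p.2 : ℝ) ^ m * g p.2))
          ∂(μ.toSphere.prod (Measure.volumeIoiPow (n-1)))
      = (∫ θ : sphere (0:E) 1, (∏ i, (θ : E) i ^ α i) ∂μ.toSphere) *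
        ∫ r : Ioi (0:ℝ), ((r : ℝ) ^ m * g r) ∂(Measure.volumeIoiPow (n-1)) :=
    integral_prod_mul (f := fun θ : sphere (0:E) 1 => ∏ i, (θ : E) i ^ α i)
      (g := fun r : Ioi (0:ℝ) => (r : ℝ) ^ m * g r)
  have step4 : (∫ r : Ioi (0:ℝ), ((r : ℝ) ^ m * g r) ∂(Measure.volumeIoiPow (n-1)))
      = ∫ r in Set.Ioi (0:ℝ), r ^ (n-1) * (r ^ m * g r) := by
    simp only [Measure.volumeIoiPow, ENNReal.ofReal]
    rw [integral_withDensity_eq_integral_smul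
      ((measurable_subtype_coe.pow_const _).real_toNNReal)]
    rw [integral_subtype_comap measurableSet_Ioi
      (fun a : ℝ => Real.toNNReal (a ^ (n-1)) • (a ^ m * g a))]
    refine setIntegral_congr_fun measurableSet_Ioi fun x hx => ?_
    rw [NNReal.smul_def, Real.coe_toNNReal _ (pow_nonneg (le_of_lt hx) _), smul_eq_mul]
  rw [step1, step2, step3, step4]

/-- For every `n ≥ 1` and `q ∈ ℕ` there is a smooth compactly supported
`φ₁` on `[0,∞)`, constant near `0`, with `∫₀^∞ s^{j/n} φ₁(s) ds = n/ωₙ` for `j = 0` and `= 0`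
for `j = 1,…,q`.  Consequently `φ(x) := φ₁(‖x‖ⁿ)` is a smooth compactly supported function on
`ℝⁿ` with `∫ φ = 1` and vanishing moments `∫ x^α φ(x) dx = 0` for `1 ≤ |α| ≤ q`. -/
theorem exists_radial_mollifier_with_vanishing_moments (n : ℕ) (hn : 1 ≤ n) (q : ℕ) :
    ∃ φ₁ : ℝ → ℝ, ContDiff ℝ (⊤ : ℕ∞) φ₁ ∧ HasCompactSupport φ₁ ∧
      (∃ δ > (0 : ℝ), ∀ s : ℝ, |s| < δ → φ₁ s = φ₁ 0) ∧
      (∀ j : ℕ, j ≤ q →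
        (∫ s in Set.Ioi (0 : ℝ), s ^ ((j : ℝ) / n) * φ₁ s) =
          if j = 0 then n / sphereArea n else 0) ∧
      ContDiff ℝ (⊤ : ℕ∞) (fun x : EuclideanSpace ℝ (Fin n) => φ₁ (‖x‖ ^ n)) ∧
      HasCompactSupport (fun x : EuclideanSpace ℝ (Fin n) => φ₁ (‖x‖ ^ n)) ∧
      (∫ x : EuclideanSpace ℝ (Fin n), φ₁ (‖x‖ ^ n)) = 1 ∧
      (∀ α : Fin n → ℕ, 1 ≤ ∑ i, α i → ∑ i, α i ≤ q →
        (∫ x : EuclideanSpace ℝ (Fin n), (∏ i, x i ^ α i) * φ₁ (‖x‖ ^ n)) = 0) := by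
  classical
  set E := EuclideanSpace ℝ (Fin n) with hE
  haveI : Nonempty (Fin n) := ⟨⟨0, hn⟩⟩
  haveI : Nontrivial E := by
    refine nontrivial_of_ne (EuclideanSpace.single (⟨0, hn⟩ : Fin n) (1:ℝ)) 0 ?_
    intro h
    have h2 : ‖EuclideanSpace.single (⟨0, hn⟩ : Fin n) (1:ℝ)‖ = 0 := by rw [h, norm_zero]
    rw [EuclideanSpace.norm_single] at h2
    norm_num at h2
  have hnR : (n:ℝ) ≠ 0 := Nat.cast_ne_zero.mpr (by omega)
  have hnRpos : (0:ℝ) < n := by positivity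
  obtain ⟨u, hu_smooth, hu_cs, hu_van, hu_mom⟩ := exists_u ((n:ℝ) / sphereArea n) q
  set χb : ContDiffBump (0:ℝ) := ⟨2^n+1, 2^n+2, by positivity, by linarith⟩ with hχb
  set φ₁ : ℝ → ℝ :=
    fun s => χb s * ((1/(n:ℝ)) * (s ^ ((1:ℝ)/n - 1) * u (s ^ ((1:ℝ)/n)))) with hφ₁
  -- u vanishes on small rpow values
  have h_small : ∀ s : ℝ, |s| < 1 → u (s ^ ((1:ℝ)/n)) = 0 := by
    intro s hs
    apply hu_van
    intro hmem
    have h1 : s ^ ((1:ℝ)/n) ≤ |s ^ ((1:ℝ)/n)| := le_abs_self _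
    have h2 : |s ^ ((1:ℝ)/n)| ≤ |s| ^ ((1:ℝ)/n) := Real.abs_rpow_le_abs_rpow _ _
    have h3 : |s| ^ ((1:ℝ)/n) ≤ 1 :=
      Real.rpow_le_one (abs_nonneg _) (le_of_lt hs) (by positivity)
    have := hmem.1
    linarith
  have hphi_small : ∀ s : ℝ, |s| < 1 → φ₁ s = 0 := by
    intro s hs
    rw [hφ₁]
    simp only
    rw [h_small s hs, mul_zero, mul_zero, mul_zero]
  have hrpow_pow : ∀ x : ℝ, 0 < x → ∀ y : ℝ, ((x^n : ℝ)) ^ y = x ^ ((n:ℝ) * y) := by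
    intro x hx y
    rw [← Real.rpow_natCast x n, ← Real.rpow_mul hx.le]
  have hkey : ∀ x : ℝ, 0 < x → φ₁ (x ^ n) = (1/(n:ℝ)) * (x ^ ((1:ℝ) - n) * u x) := by
    intro x hx
    have e1 : ((x^n : ℝ)) ^ ((1:ℝ)/n) = x := by
      rw [hrpow_pow x hx, mul_one_div_cancel hnR, Real.rpow_one]
    have e2 : ((x^n : ℝ)) ^ ((1:ℝ)/n - 1) = x ^ ((1:ℝ) - n) := by
      rw [hrpow_pow x hx]
      congr 1
      field_simp
    by_cases hux : u x = 0
    · show χb (x^n) * ((1/(n:ℝ)) * ((x^n : ℝ) ^ ((1:ℝ)/n - 1) * u ((x^n : ℝ) ^ ((1:ℝ)/n)))) = _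
      rw [e1, hux]
      ring
    · have hx12 : x ∈ Ioo (1:ℝ) 2 := by
        by_contra hmem
        exact hux (hu_van x hmem)
      have hχ : χb (x^n) = 1 := by
        apply χb.one_of_mem_closedBall
        rw [mem_closedBall, dist_zero_right, Real.norm_eq_abs,
          abs_of_nonneg (by positivity)]
        have h5 : x^n ≤ 2^n := pow_le_pow_left₀ (by linarith [hx12.1]) hx12.2.le n
        have hrIn : χb.rIn = 2^n + 1 := rfl
        rw [hrIn]
        linarith
      show χb (x^n) * ((1/(n:ℝ)) * ((x^n : ℝ) ^ ((1:ℝ)/n - 1) * u ((x^n : ℝ) ^ ((1:ℝ)/n)))) = _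
      rw [hχ, e1, e2, one_mul]
  have hrad : ∀ (k : ℕ) (x : ℝ), 0 < x →
      (x:ℝ) ^ (n-1) * (x ^ k * φ₁ (x^n)) = (1/(n:ℝ)) * (x ^ k * u x) := by
    intro k x hx
    rw [hkey x hx]
    have e3 : (x:ℝ) ^ (n-1) * x ^ ((1:ℝ) - n) = 1 := by
      rw [← Real.rpow_natCast x (n-1), ← Real.rpow_add hx, Nat.cast_sub hn, Nat.cast_one]
      norm_num
    calc (x:ℝ) ^ (n-1) * (x ^ k * ((1/(n:ℝ)) * (x ^ ((1:ℝ) - n) * u x)))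
        = ((x:ℝ) ^ (n-1) * x ^ ((1:ℝ) - n)) * ((1/(n:ℝ)) * (x ^ k * u x)) := by ring
      _ = (1/(n:ℝ)) * (x ^ k * u x) := by rw [e3, one_mul]
  have hphi_smooth : ContDiff ℝ (⊤ : ℕ∞) φ₁ := by
    rw [contDiff_iff_contDiffAt]
    intro s
    rcases eq_or_ne s 0 with rfl | hs
    · have hev : φ₁ =ᶠ[nhds (0:ℝ)] (fun _ => 0) := by
        filter_upwards [Metric.ball_mem_nhds (0:ℝ) one_pos] with y hy
        rw [mem_ball, Real.dist_eq, sub_zero] at hy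
        exact hphi_small y hy
      exact (contDiffAt_const (c := (0:ℝ))).congr_of_eventuallyEq hev
    · have h1 : ContDiffAt ℝ (⊤:ℕ∞) (fun y : ℝ => y ^ ((1:ℝ)/n - 1)) s :=
        Real.contDiffAt_rpow_const_of_ne hs
      have h2 : ContDiffAt ℝ (⊤:ℕ∞) (fun y : ℝ => u (y ^ ((1:ℝ)/n))) s :=
        (hu_smooth.contDiffAt).comp s (Real.contDiffAt_rpow_const_of_ne hs)
      exact (χb.contDiff.contDiffAt).mul (contDiffAt_const.mul (h1.mul h2))
  refine ⟨φ₁, hphi_smooth, ?_, ?_, ?_, ?_, ?_, ?_, ?_⟩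
  · -- compact support of φ₁
    exact χb.hasCompactSupport.mul_right
  · -- constant near zero
    exact ⟨1, one_pos, fun s hs => by
      rw [hphi_small s hs, hphi_small 0 (by norm_num)]⟩
  · -- 1D moments
    intro j hj
    rw [← integral_comp_rpow_Ioi (fun s => s ^ ((j:ℝ)/n) * φ₁ s) hnR]
    rw [setIntegral_congr_fun measurableSet_Ioi
      (g := fun x : ℝ => x ^ j * u x) ?_]
    · exact hu_mom j hj
    · intro x hx
      have hx' : (0:ℝ) < x := hx
      show (|(n:ℝ)| * x ^ ((n:ℝ)-1)) • ((x ^ ((n:ℝ))) ^ ((j:ℝ)/n) * φ₁ (x ^ ((n:ℝ)))) = x ^ j * u x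
      rw [smul_eq_mul, abs_of_pos hnRpos, Real.rpow_natCast x n]
      rw [hkey x hx']
      have e4 : ((x^n : ℝ)) ^ ((j:ℝ)/n) = x ^ (j:ℕ) := by
        rw [hrpow_pow x hx', mul_div_cancel₀ _ hnR, Real.rpow_natCast]
      rw [e4]
      have e5 : x ^ ((n:ℝ)-1) * x ^ ((1:ℝ)-n) = 1 := by
        rw [← Real.rpow_add hx']
        norm_num
      calc (n:ℝ) * x ^ ((n:ℝ)-1) * (x ^ j * ((1/(n:ℝ)) * (x ^ ((1:ℝ)-n) * u x)))
          = ((n:ℝ) * (1/(n:ℝ))) * (x ^ ((n:ℝ)-1) * x ^ ((1:ℝ)-n)) * (x ^ j * u x) := by ring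
        _ = x ^ j * u x := by rw [e5, mul_one_div_cancel hnR]; ring
  · -- smoothness of φ
    rw [contDiff_iff_contDiffAt]
    intro x
    rcases eq_or_ne x 0 with rfl | hx
    · have hev : (fun x : E => φ₁ (‖x‖ ^ n)) =ᶠ[nhds (0:E)] (fun _ => 0) := by
        filter_upwards [Metric.ball_mem_nhds (0:E) one_pos] with y hy
        rw [mem_ball_zero_iff] at hy
        apply hphi_small
        rw [abs_of_nonneg (by positivity)]
        exact pow_lt_one₀ (norm_nonneg _) hy (by omega)
      exact (contDiffAt_const (c := (0:ℝ))).congr_of_eventuallyEq hev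
    · exact (hphi_smooth.contDiffAt).comp x ((contDiffAt_norm (𝕜 := ℝ) hx).pow n)
  · -- compact support of φ
    apply HasCompactSupport.intro (isCompact_closedBall (0:E) (2^n+2))
    intro x hx
    rw [mem_closedBall, dist_zero_right] at hx
    push_neg at hx
    show φ₁ (‖x‖ ^ n) = 0
    by_contra hne
    have h1 : ‖x‖ ^ n < 2^n + 2 := by
      have := χb.support_eq ▸ Function.support_subset_iff.mpr (fun s hs => hs)
      have hsup : χb (‖x‖^n) ≠ 0 := by
        intro h0
        apply hne
        rw [hφ₁]
        simp only
        rw [h0, zero_mul]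
      have hmem := χb.support_eq ▸ Function.mem_support.mpr hsup
      rw [mem_ball, Real.dist_eq, sub_zero,
        abs_of_nonneg (pow_nonneg (norm_nonneg x) n)] at hmem
      have hrOut : χb.rOut = 2^n + 2 := rfl
      rw [hrOut] at hmem
      exact hmem
    have h2 : (2:ℝ)^n + 2 < ‖x‖ ^ n := by
      have hx1 : (1:ℝ) ≤ ‖x‖ := by
        have h6 : (0:ℝ) < 2^n := by positivity
        linarith
      calc (2:ℝ)^n + 2 < ‖x‖ := hx
        _ = ‖x‖ ^ 1 := (pow_one _).symm
        _ ≤ ‖x‖ ^ n := pow_le_pow_right₀ hx1 hn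
    linarith
  · -- total integral
    have htot := integral_fun_norm_addHaar (volume : Measure E) (fun r => φ₁ (r ^ n))
    rw [finrank_euclideanSpace_fin] at htot
    rw [htot]
    have hradint : ∫ y in Ioi (0:ℝ), y ^ (n-1) • φ₁ (y^n)
        = (1/(n:ℝ)) * ((n:ℝ) / sphereArea n) := by
      rw [setIntegral_congr_fun measurableSet_Ioi
        (g := fun y : ℝ => (1/(n:ℝ)) * (y ^ (0:ℕ) * u y)) ?_]
      · rw [integral_const_mul]
        have hm0 := hu_mom 0 (Nat.zero_le q)
        rw [if_pos rfl] at hm0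
        rw [hm0]
      · intro y hy
        have hy' : (0:ℝ) < y := hy
        show y ^ (n-1) • φ₁ (y^n) = _
        rw [smul_eq_mul]
        calc y ^ (n-1) * φ₁ (y^n) = y ^ (n-1) * (y ^ (0:ℕ) * φ₁ (y^n)) := by ring
          _ = _ := hrad 0 y hy'
    rw [hradint]
    rw [nsmul_eq_mul, smul_eq_mul, sphereArea]
    have hV : 0 < (volume (Metric.ball (0 : EuclideanSpace ℝ (Fin n)) 1)).toReal :=
      ENNReal.toReal_pos (measure_ball_pos _ _ one_pos).ne' measure_ball_lt_top.ne
    field_simp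
    rfl
  · -- moments
    intro α hα1 hα2
    rw [polar_moment n hn (fun r => φ₁ (r ^ n)) α]
    have hzero : ∫ r in Ioi (0:ℝ), r ^ (n-1) * (r ^ (∑ i, α i) * φ₁ (r^n)) = 0 := by
      rw [setIntegral_congr_fun measurableSet_Ioi
        (g := fun r : ℝ => (1/(n:ℝ)) * (r ^ (∑ i, α i) * u r))
        (fun r hr => hrad _ r hr)]
      rw [integral_const_mul, hu_mom _ hα2, if_neg (by omega), mul_zero]
    rw [hzero, mul_zero]
end
end

section
/- Let P ∈ D'(ℝ) be the distribution ⟨P, ω⟩ = lim_{δ→0} ∫_δ^∞ t^{n−2}(ω(t) − ω(−t)) dt (for n = 1 this is the principal value of 1/t; for n ≥ 2 it is the locally integrable function sign(t)|t|^{n−2}). Let f be a smooth function on a neighborhood of 0 in ℝ, let χ be a smooth bump function equal to 1 near 0, and let φ(x) = φ₁(|x|ⁿ) with φ₁ as in the moment lemma (∫₀^∞ s^{j/n}φ₁(s)ds = n/ωₙ for j=0 and 0 for 1 ≤ j ≤ q). Then for ε → 0, ⟨P, χ·f·ε^{−n}φ₁(tⁿ/εⁿ)⟩ = (2/ωₙ)·f'(0)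 + O(ε^q). -/
open MeasureTheory

noncomputable section

section AuxLemmas

open Set Filter

lemma aux_iteratedDerivWithin {F : ℝ → ℝ} {U s : Set ℝ} (hU : IsOpen U)
    (hF : ContDiffOn ℝ (⊤ : ℕ∞) F U) (k : ℕ) (hs : UniqueDiffOn ℝ s) (hsU : s ⊆ U)
    {x : ℝ} (hx : x ∈ s) : iteratedDerivWithin k F s x = iteratedDeriv k F x := by
  have h1 : HasFTaylorSeriesUpToOn (⊤ : ℕ∞) F (ftaylorSeriesWithin ℝ F U) U :=
    hF.ftaylorSeriesWithin hU.uniqueDiffOn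
  have h2 := (h1.mono hsU).eq_iteratedFDerivWithin_of_uniqueDiffOn (m := k) (mod_cast le_top) hs hx
  rw [iteratedDerivWithin_eq_iteratedFDerivWithin, iteratedDeriv_eq_iteratedFDeriv, ← h2]
  show (iteratedFDerivWithin ℝ k F U x) (fun _ => 1) = _
  rw [iteratedFDerivWithin_of_isOpen k hU (hsU hx)]

lemma aux_tendsto {H : ℝ → ℝ} (hH : IntegrableOn H (Set.Ioi 0)) :
    Filter.Tendsto (fun δ : ℝ => ∫ t in Set.Ioi δ, H t) (nhdsWithin 0 (Set.Ioi 0))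
      (nhds (∫ t in Set.Ioi (0 : ℝ), H t)) := by
  have h0 : ∀ δ : ℝ, 0 < δ → (∫ t in Set.Ioi δ, H t) =
      ∫ t, (Set.Ioi δ).indicator H t ∂(volume.restrict (Set.Ioi 0)) := by
    intro δ hδ
    rw [integral_indicator measurableSet_Ioi, Measure.restrict_restrict measurableSet_Ioi,
      Set.Ioi_inter_Ioi]
    congr 1
    simp [max_eq_left hδ.le]
  have hmain := MeasureTheory.tendsto_integral_filter_of_dominated_convergence
    (μ := volume.restrict (Set.Ioi (0:ℝ))) (F := fun (δ : ℝ) (t : ℝ) => (Set.Ioi δ).indicator H t)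
    (f := H) (l := nhdsWithin 0 (Set.Ioi (0:ℝ))) (bound := fun t => ‖H t‖)
    (Eventually.of_forall fun δ => hH.aestronglyMeasurable.indicator measurableSet_Ioi)
    (Eventually.of_forall fun δ => Eventually.of_forall fun t =>
      norm_indicator_le_norm_self H t)
    hH.norm
    (by
      filter_upwards [ae_restrict_mem measurableSet_Ioi] with t ht
      have hev : ∀ᶠ δ in nhdsWithin 0 (Set.Ioi (0:ℝ)), (Set.Ioi δ).indicator H t = H t := by
        filter_upwards [Ioo_mem_nhdsGT_of_mem (Set.mem_Ico.mpr ⟨le_refl (0:ℝ), ht⟩)] with δ hδ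
        exact Set.indicator_of_mem (Set.mem_Ioi.mpr hδ.2) H
      exact Filter.Tendsto.congr' (hev.mono fun δ h => h.symm) tendsto_const_nhds)
  refine hmain.congr' ?_
  filter_upwards [self_mem_nhdsWithin] with δ hδ using (h0 δ hδ).symm

lemma aux_moll (φ₁ : ℝ → ℝ) (hcont : Continuous φ₁) {R : ℝ} (hR : 0 < R)
    (hvan : ∀ s : ℝ, R ≤ |s| → φ₁ s = 0) {n : ℕ} (hn : 1 ≤ n) {ε : ℝ} (hε : 0 < ε) (m : ℕ) :
    IntegrableOn (fun t : ℝ => t ^ m * ((ε ^ n)⁻¹ * φ₁ (t ^ n / ε ^ n))) (Set.Ioi 0) ∧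
      (∫ t in Set.Ioi (0 : ℝ), t ^ m * ((ε ^ n)⁻¹ * φ₁ (t ^ n / ε ^ n))) =
        ε ^ (m + 1) * (ε ^ n)⁻¹ * (n : ℝ)⁻¹ *
          ∫ s in Set.Ioi (0 : ℝ), s ^ (((m : ℝ) + 1) / n - 1) * φ₁ s := by
  have hn0 : (n : ℝ) ≠ 0 := Nat.cast_ne_zero.mpr (by omega)
  have hεn : (0 : ℝ) < ε ^ n := pow_pos hε n
  set ρ : ℝ := R ^ ((n : ℝ)⁻¹) with hρdef
  have hρ : 0 < ρ := Real.rpow_pos_of_pos hR _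
  have hρn : ρ ^ n = R := by
    rw [hρdef, ← Real.rpow_natCast (R ^ ((n : ℝ)⁻¹)) n, ← Real.rpow_mul hR.le,
      inv_mul_cancel₀ hn0, Real.rpow_one]
  have hout : ∀ t : ℝ, ρ * ε < |t| → φ₁ (t ^ n / ε ^ n) = 0 := by
    intro t ht
    apply hvan
    have h1 : |t ^ n / ε ^ n| = |t| ^ n / ε ^ n := by
      rw [abs_div, abs_pow, abs_of_pos hεn]
    rw [h1, le_div_iff₀ hεn]
    calc R * ε ^ n = (ρ * ε) ^ n := by rw [mul_pow, hρn]
      _ ≤ |t| ^ n := pow_le_pow_left₀ (by positivity) ht.le n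
  constructor
  · have hc : Continuous (fun t : ℝ => t ^ m * ((ε ^ n)⁻¹ * φ₁ (t ^ n / ε ^ n))) := by
      fun_prop
    have hcs : HasCompactSupport (fun t : ℝ => t ^ m * ((ε ^ n)⁻¹ * φ₁ (t ^ n / ε ^ n))) := by
      apply HasCompactSupport.intro (isCompact_Icc (a := -(ρ * ε)) (b := ρ * ε))
      intro x hx
      have : ρ * ε < |x| := by
        rcases abs_cases x with ⟨h, _⟩ | ⟨h, _⟩ <;> rw [h] <;>
          simp only [Set.mem_Icc, not_and_or, not_le] at hx <;> rcases hx with h' | h' <;> linarith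
      simp [hout x this]
    exact (hc.integrable_of_hasCompactSupport hcs).integrableOn
  · have h1 := integral_comp_mul_left_Ioi
      (fun t : ℝ => t ^ m * ((ε ^ n)⁻¹ * φ₁ (t ^ n / ε ^ n))) 0 hε
    simp only [mul_zero, smul_eq_mul] at h1
    have hL : EqOn (fun x : ℝ => (fun t : ℝ => t ^ m * ((ε ^ n)⁻¹ * φ₁ (t ^ n / ε ^ n))) (ε * x))
        (fun x : ℝ => ε ^ m * ((ε ^ n)⁻¹ * (x ^ m * φ₁ (x ^ n)))) (Set.Ioi 0) := by
      intro x _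
      have hx : (ε * x) ^ n / ε ^ n = x ^ n := by rw [mul_pow]; field_simp
      simp only
      rw [hx, mul_pow]
      ring
    rw [setIntegral_congr_fun measurableSet_Ioi hL] at h1
    have h1' : (∫ x in Set.Ioi (0:ℝ), ε ^ m * ((ε ^ n)⁻¹ * (x ^ m * φ₁ (x ^ n)))) =
        ε ^ m * ((ε ^ n)⁻¹ * ∫ x in Set.Ioi (0:ℝ), x ^ m * φ₁ (x ^ n)) := by
      rw [integral_const_mul, integral_const_mul]
    rw [h1'] at h1
    have h2 := integral_comp_rpow_Ioi
      (fun s : ℝ => (n : ℝ)⁻¹ * (s ^ (((m : ℝ) + 1) / n - 1) * φ₁ s)) (p := (n : ℝ)) hn0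
    have key : EqOn (fun x : ℝ => (|(n : ℝ)| * x ^ ((n : ℝ) - 1)) •
          ((n : ℝ)⁻¹ * ((x ^ ((n : ℝ))) ^ (((m : ℝ) + 1) / n - 1) * φ₁ (x ^ ((n : ℝ))))))
        (fun x : ℝ => x ^ m * φ₁ (x ^ n)) (Set.Ioi 0) := by
      intro x hx
      have hx0 : (0 : ℝ) < x := hx
      have hxn : (x : ℝ) ^ ((n : ℝ)) = x ^ n := Real.rpow_natCast x n
      have hpow : (x ^ ((n : ℝ))) ^ (((m : ℝ) + 1) / n - 1) =
          x ^ ((n : ℝ) * (((m : ℝ) + 1) / n - 1)) := (Real.rpow_mul hx0.le _ _).symm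
      simp only [smul_eq_mul]
      rw [hpow, hxn]
      have hcomb : x ^ ((n : ℝ) - 1) * x ^ ((n : ℝ) * (((m : ℝ) + 1) / n - 1)) =
          x ^ ((m : ℝ)) := by
        rw [← Real.rpow_add hx0]
        congr 1
        field_simp
        ring
      have habs : |(n : ℝ)| = (n : ℝ) := abs_of_nonneg (Nat.cast_nonneg n)
      calc |(n : ℝ)| * x ^ ((n : ℝ) - 1) * ((n : ℝ)⁻¹ *
            (x ^ ((n : ℝ) * (((m : ℝ) + 1) / n - 1)) * φ₁ (x ^ n)))
          = ((n : ℝ) * (n : ℝ)⁻¹) *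
            ((x ^ ((n : ℝ) - 1) * x ^ ((n : ℝ) * (((m : ℝ) + 1) / n - 1))) * φ₁ (x ^ n)) := by
            rw [habs]; ring
        _ = x ^ ((m : ℝ)) * φ₁ (x ^ n) := by
            rw [mul_inv_cancel₀ hn0, hcomb, one_mul]
        _ = x ^ m * φ₁ (x ^ n) := by rw [Real.rpow_natCast]
    have h2' : (∫ x in Set.Ioi (0:ℝ), x ^ m * φ₁ (x ^ n)) =
        (n : ℝ)⁻¹ * ∫ s in Set.Ioi (0:ℝ), s ^ (((m : ℝ) + 1) / n - 1) * φ₁ s := by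
      rw [← setIntegral_congr_fun measurableSet_Ioi key, h2, integral_const_mul]
    rw [h2'] at h1
    have hfinal := h1.symm
    calc (∫ t in Set.Ioi (0:ℝ), t ^ m * ((ε ^ n)⁻¹ * φ₁ (t ^ n / ε ^ n)))
        = ε * (ε⁻¹ * ∫ t in Set.Ioi (0:ℝ), t ^ m * ((ε ^ n)⁻¹ * φ₁ (t ^ n / ε ^ n))) := by
          field_simp
      _ = ε * (ε ^ m * ((ε ^ n)⁻¹ * ((n : ℝ)⁻¹ *
            ∫ s in Set.Ioi (0:ℝ), s ^ (((m : ℝ) + 1) / n - 1) * φ₁ s))) := by rw [← hfinal]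
      _ = ε ^ (m + 1) * (ε ^ n)⁻¹ * (n : ℝ)⁻¹ *
            ∫ s in Set.Ioi (0:ℝ), s ^ (((m : ℝ) + 1) / n - 1) * φ₁ s := by
          rw [pow_succ]; ring

end AuxLemmas

/-- Let `P` be the distribution
`⟨P, ω⟩ = lim_{δ→0} ∫_δ^∞ t^{n−2}(ω(t) − ω(−t)) dt` (for `n = 1` the principal value of `1/t`,
for `n ≥ 2` the function `sign(t)|t|^{n−2}`), `f` smooth near `0`, `χ` a bump function equal to
`1` near `0`, and `φ₁` a mollifier profile with `∫₀^∞ s^{j/n} φ₁(s) ds = n/ωₙ` for `j = 0` and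
`= 0` for `1 ≤ j ≤ q`.  Then for `ε → 0`,
`⟨P, χ·f·ε^{−n}φ₁(tⁿ/εⁿ)⟩ = (2/ωₙ)·f'(0) + O(ε^q)`. -/
theorem principal_value_pairing_asymptotics
    (n : ℕ) (hn : 1 ≤ n) (q : ℕ)
    (φ₁ : ℝ → ℝ) (hφ₁ : ContDiff ℝ (⊤ : ℕ∞) φ₁) (hφ₁supp : HasCompactSupport φ₁)
    (hφ₁const : ∃ δ > (0 : ℝ), ∀ s : ℝ, |s| < δ → φ₁ s = φ₁ 0)
    (hφ₁mom : ∀ j : ℕ, j ≤ q →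
      (∫ s in Set.Ioi (0 : ℝ), s ^ ((j : ℝ) / n) * φ₁ s) =
        if j = 0 then n / sphereArea n else 0)
    (V : Set ℝ) (hV : IsOpen V) (h0V : (0 : ℝ) ∈ V)
    (f : ℝ → ℝ) (hf : ContDiffOn ℝ (⊤ : ℕ∞) f V)
    (χ : ℝ → ℝ) (hχ : ContDiff ℝ (⊤ : ℕ∞) χ) (hχsupp : HasCompactSupport χ)
    (hχV : tsupport χ ⊆ V) (hχ1 : ∃ δ > (0 : ℝ), ∀ t : ℝ, |t| < δ → χ t = 1) :
    ∃ C > (0 : ℝ), ∃ ε₀ > (0 : ℝ), ∀ ε ∈ Set.Ioc (0 : ℝ) ε₀, ∃ L : ℝ,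
      Filter.Tendsto (fun δ : ℝ => ∫ t in Set.Ioi δ,
          (t : ℝ) ^ ((n : ℤ) - 2) *
            ((χ t * f t * (ε ^ n)⁻¹ * φ₁ (|t| ^ n / ε ^ n)) -
              (χ (-t) * f (-t) * (ε ^ n)⁻¹ * φ₁ (|(-t)| ^ n / ε ^ n))))
        (nhdsWithin 0 (Set.Ioi 0)) (nhds L) ∧
      |L - (2 / sphereArea n) * deriv f 0| ≤ C * ε ^ q := by
  classical
  have hn0 : (n : ℝ) ≠ 0 := Nat.cast_ne_zero.mpr (by omega)
  obtain ⟨δχ, hδχ, hχeq⟩ := hχ1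
  obtain ⟨B, hB⟩ := hφ₁supp.exists_bound_of_continuous hφ₁.continuous
  have hB0 : 0 ≤ B := le_trans (norm_nonneg _) (hB 0)
  obtain ⟨r, hr⟩ := hφ₁supp.isBounded.subset_closedBall 0
  set R : ℝ := max r 0 + 1 with hRdef
  have hR : 0 < R := by positivity
  have hvan : ∀ s : ℝ, R ≤ |s| → φ₁ s = 0 := by
    intro s hs
    apply image_eq_zero_of_notMem_tsupport
    intro hmem
    have h1 := hr hmem
    rw [Metric.mem_closedBall, Real.dist_eq, sub_zero] at h1
    have h2 : |s| ≤ max r 0 := le_trans h1 (le_max_left _ _)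
    rw [hRdef] at hs
    linarith
  set ρ : ℝ := R ^ ((n : ℝ)⁻¹) with hρdef
  have hρ : 0 < ρ := Real.rpow_pos_of_pos hR _
  have hρn : ρ ^ n = R := by
    rw [hρdef, ← Real.rpow_natCast (R ^ ((n : ℝ)⁻¹)) n, ← Real.rpow_mul hR.le,
      inv_mul_cancel₀ hn0, Real.rpow_one]
  set U : Set ℝ := V ∩ (fun t : ℝ => -t) ⁻¹' V with hUdef
  have hUopen : IsOpen U := hV.inter (hV.preimage continuous_neg)
  have h0U : (0 : ℝ) ∈ U := ⟨h0V, by simpa using h0V⟩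
  set F : ℝ → ℝ := fun t => f t - f (-t) with hFdef
  have hFU : ContDiffOn ℝ (⊤ : ℕ∞) F U := by
    apply ContDiffOn.sub (hf.mono Set.inter_subset_left)
    exact ContDiffOn.comp hf contDiff_neg.contDiffOn (fun x hx => hx.2)
  obtain ⟨δ', hδ'pos, hδ'U⟩ := Metric.isOpen_iff.mp hUopen 0 h0U
  set δ : ℝ := min (δ' / 2) (δχ / 2) with hδdef
  have hδpos : 0 < δ := lt_min (by linarith) (by linarith)
  have hδU : Set.Icc (-δ) δ ⊆ U := by
    intro x hx
    apply hδ'U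
    rw [Metric.mem_ball, Real.dist_eq, sub_zero]
    have h1 : |x| ≤ δ := abs_le.mpr ⟨hx.1, hx.2⟩
    have h2 : δ ≤ δ' / 2 := min_le_left _ _
    have h3 : |x| < δ' := by linarith
    exact h3
  have hδχ' : δ < δχ := lt_of_le_of_lt (min_le_right _ _) (by linarith)
  have hIccU : Set.Icc (0:ℝ) δ ⊆ U := fun x hx => hδU ⟨by linarith [hx.1], hx.2⟩
  have hFq : ContDiffOn ℝ ((q + 1 : ℕ) + 1) F (Set.Icc 0 δ) :=
    (hFU.of_le (by exact_mod_cast le_top)).mono hIccU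
  obtain ⟨M₀, hM₀⟩ := exists_taylor_mean_remainder_bound hδpos.le hFq
  set M : ℝ := max M₀ 0 with hMdef
  have hM0 : 0 ≤ M := le_max_right _ _
  set c : ℕ → ℝ := fun k => (k.factorial : ℝ)⁻¹ * iteratedDeriv k F 0 with hcdef
  have htaylor : ∀ x : ℝ, taylorWithinEval F (q + 1) (Set.Icc 0 δ) 0 x =
      ∑ k ∈ Finset.range (q + 2), c k * x ^ k := by
    intro x
    rw [taylor_within_apply]
    apply Finset.sum_congr rfl
    intro k _
    rw [aux_iteratedDerivWithin hUopen hFU k (uniqueDiffOn_Icc hδpos) hIccU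
      (Set.left_mem_Icc.mpr hδpos.le)]
    rw [smul_eq_mul, sub_zero, hcdef]
    ring
  set P : ℝ → ℝ := fun x => ∑ k ∈ Finset.range (q + 2), c k * x ^ k with hPdef
  have hRem : ∀ x ∈ Set.Icc (0:ℝ) δ, |F x - P x| ≤ M * x ^ (q + 2) := by
    intro x hx
    have h1 := hM₀ x hx
    rw [htaylor, Real.norm_eq_abs, sub_zero] at h1
    calc |F x - P x| ≤ M₀ * x ^ (q + 2) := h1
      _ ≤ M * x ^ (q + 2) :=
          mul_le_mul_of_nonneg_right (le_max_left _ _) (pow_nonneg hx.1 _)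
  have hc0 : c 0 = 0 := by
    simp [hcdef, hFdef]
  have hd : DifferentiableAt ℝ f 0 :=
    (hf.contDiffAt (hV.mem_nhds h0V)).differentiableAt (by simp)
  have hc1 : c 1 = 2 * deriv f 0 := by
    have h1 : HasDerivAt f (deriv f 0) 0 := hd.hasDerivAt
    have h2 : HasDerivAt (fun t : ℝ => f (-t)) (deriv f 0 * (-1)) 0 := by
      have h3 : HasDerivAt f (deriv f 0) (-(0:ℝ)) := by simpa using h1
      have := HasDerivAt.comp (0:ℝ) h3 (hasDerivAt_neg (0:ℝ))
      simpa [Function.comp_def] using this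
    have h3 : HasDerivAt F (deriv f 0 - deriv f 0 * (-1)) 0 := h1.sub h2
    rw [hcdef]
    simp only [Nat.factorial_one, Nat.cast_one, inv_one, one_mul, iteratedDeriv_one]
    rw [h3.deriv]
    ring
  have hCnonneg : (0:ℝ) ≤ M * B * ρ ^ (n + q + 1) :=
    mul_nonneg (mul_nonneg hM0 hB0) (pow_nonneg hρ.le _)
  refine ⟨M * B * ρ ^ (n + q + 1) + 1, by linarith, min 1 (δ / ρ), lt_min one_pos (by positivity),
    ?_⟩
  rintro ε ⟨hε, hεle⟩
  have hε1 : ε ≤ 1 := le_trans hεle (min_le_left _ _)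
  have hρε : ρ * ε ≤ δ := by
    have h1 := le_trans hεle (min_le_right _ _)
    rw [le_div_iff₀ hρ] at h1
    linarith [h1, mul_comm ε ρ]
  have hεn : (0:ℝ) < ε ^ n := pow_pos hε n
  have hvanψ : ∀ t : ℝ, 0 < t → ρ * ε ≤ t → φ₁ (t ^ n / ε ^ n) = 0 := by
    intro t ht hle
    apply hvan
    have h1 : |t ^ n / ε ^ n| = t ^ n / ε ^ n := abs_of_pos (by positivity)
    rw [h1, le_div_iff₀ hεn]
    calc R * ε ^ n = (ρ * ε) ^ n := by rw [mul_pow, hρn]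
      _ ≤ t ^ n := pow_le_pow_left₀ (by positivity) hle n
  set ψ : ℝ → ℝ := fun t => (ε ^ n)⁻¹ * φ₁ (t ^ n / ε ^ n) with hψdef
  set H : ℝ → ℝ := fun t : ℝ => (t : ℝ) ^ ((n : ℤ) - 2) *
      ((χ t * f t * (ε ^ n)⁻¹ * φ₁ (|t| ^ n / ε ^ n)) -
        (χ (-t) * f (-t) * (ε ^ n)⁻¹ * φ₁ (|(-t)| ^ n / ε ^ n))) with hHdef
  set G : ℕ → ℝ → ℝ := fun k t => c k * (t ^ ((n : ℤ) - 2 + k) * ψ t) with hGdef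
  set W : ℝ → ℝ := fun t => t ^ ((n : ℤ) - 2) * ψ t * (F t - P t) with hWdef
  have hkey : Set.EqOn H (fun t => (∑ k ∈ Finset.range (q + 2), G k t) + W t) (Set.Ioi 0) := by
    intro t ht
    have ht0 : (0:ℝ) < t := ht
    have htne : t ≠ 0 := ne_of_gt ht0
    have habs : |t| = t := abs_of_pos ht0
    have habs2 : |(-t)| = t := by rw [abs_neg, habs]
    simp only [hHdef, hGdef, hWdef, hψdef, habs, habs2]
    by_cases h0 : φ₁ (t ^ n / ε ^ n) = 0
    · simp [h0]
    · have htρ : t < ρ * ε := by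
        by_contra hcon
        push_neg at hcon
        exact h0 (hvanψ t ht0 hcon)
      have hχt : χ t = 1 := hχeq t (by rw [habs]; linarith)
      have hχt' : χ (-t) = 1 := hχeq (-t) (by rw [abs_neg, habs]; linarith)
      rw [hχt, hχt', one_mul, one_mul]
      have hsum : (∑ k ∈ Finset.range (q + 2),
            c k * (t ^ ((n : ℤ) - 2 + (k:ℕ)) * ((ε ^ n)⁻¹ * φ₁ (t ^ n / ε ^ n)))) =
          (∑ k ∈ Finset.range (q + 2), c k * t ^ k) *
            (t ^ ((n : ℤ) - 2) * ((ε ^ n)⁻¹ * φ₁ (t ^ n / ε ^ n))) := by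
        rw [Finset.sum_mul]
        apply Finset.sum_congr rfl
        intro k _
        rw [zpow_add₀ htne, zpow_natCast]
        ring
      rw [hsum, hPdef, hFdef]
      ring
  have hGint : ∀ k ∈ Finset.range (q + 2), IntegrableOn (G k) (Set.Ioi 0) ∧
      (∫ t in Set.Ioi (0:ℝ), G k t) = if k = 1 then 2 * deriv f 0 / sphereArea n else 0 := by
    intro k hk
    rcases Nat.eq_zero_or_pos k with rfl | hkpos
    · have hzero : G 0 = fun _ : ℝ => (0:ℝ) := by
        funext t
        simp [hGdef, hc0]
      rw [hzero]
      exact ⟨integrableOn_zero, by simp⟩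
    · set j : ℕ := k - 1 with hjdef
      have hkj : k = j + 1 := by omega
      have hjq : j ≤ q := by
        have := Finset.mem_range.mp hk
        omega
      set e : ℕ := n - 1 + j with hedef
      have hcast : ((n : ℤ) - 2 + (k:ℕ)) = (e : ℤ) := by
        rw [hedef, hkj]
        push_cast [Nat.cast_sub hn]
        ring
      have hGk : G k = fun t : ℝ => c k * (t ^ e * ((ε ^ n)⁻¹ * φ₁ (t ^ n / ε ^ n))) := by
        funext t
        rw [hGdef]
        simp only [hψdef]
        rw [hcast, zpow_natCast]
      obtain ⟨hint, hval⟩ := aux_moll φ₁ hφ₁.continuous hR hvan hn hε e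
      constructor
      · rw [hGk]
        exact hint.const_mul _
      · rw [hGk]
        rw [integral_const_mul, hval]
        have hexp : ((e : ℝ) + 1) / n - 1 = (j : ℝ) / n := by
          have h1 : (e : ℝ) = (n : ℝ) - 1 + j := by
            rw [hedef]
            push_cast [Nat.cast_sub hn]
            ring
          rw [h1]
          field_simp
          ring
        rw [hexp, hφ₁mom j hjq]
        rcases Nat.eq_zero_or_pos j with hj0 | hjpos
        · have hk1 : k = 1 := by omega
          have he1 : e + 1 = n := by omega
          rw [if_pos hj0, hk1, if_pos rfl, hc1, he1]
          field_simp
        · have hk1 : k ≠ 1 := by omega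
          have hj0 : j ≠ 0 := by omega
          rw [if_neg hj0, if_neg hk1]
          ring
  set K : ℝ := M * B * (ε ^ n)⁻¹ * (ρ * ε) ^ (n + q) with hKdef
  have hKnonneg : 0 ≤ K := by
    rw [hKdef]
    exact mul_nonneg (mul_nonneg (mul_nonneg hM0 hB0) (by positivity)) (by positivity)
  have hWbound : ∀ t ∈ Set.Ioc (0:ℝ) (ρ * ε), |W t| ≤ K := by
    intro t ht
    obtain ⟨ht0, htle⟩ := ht
    have hzp : (0:ℝ) < t ^ ((n : ℤ) - 2) := zpow_pos ht0 _
    have h1 : |t ^ ((n : ℤ) - 2)| = t ^ ((n : ℤ) - 2) := abs_of_pos hzp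
    have h2 : |ψ t| ≤ (ε ^ n)⁻¹ * B := by
      rw [hψdef]
      simp only
      rw [abs_mul, abs_inv, abs_of_pos hεn]
      exact mul_le_mul_of_nonneg_left
        (by simpa [Real.norm_eq_abs] using hB (t ^ n / ε ^ n)) (by positivity)
    have h3 : |F t - P t| ≤ M * t ^ (q + 2) := hRem t ⟨ht0.le, le_trans htle hρε⟩
    have h4 : t ^ ((n : ℤ) - 2) * t ^ (q + 2) = t ^ (n + q) := by
      rw [← zpow_natCast t (q + 2), ← zpow_add₀ (ne_of_gt ht0), ← zpow_natCast t (n + q)]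
      congr 1
      push_cast
      omega
    calc |W t| = |t ^ ((n : ℤ) - 2)| * |ψ t| * |F t - P t| := by
          rw [hWdef]; simp only; rw [abs_mul, abs_mul]
      _ ≤ t ^ ((n : ℤ) - 2) * ((ε ^ n)⁻¹ * B) * (M * t ^ (q + 2)) := by
          rw [h1]
          apply mul_le_mul _ h3 (abs_nonneg _)
            (mul_nonneg hzp.le (mul_nonneg (by positivity) hB0))
          exact mul_le_mul_of_nonneg_left h2 hzp.le
      _ = M * B * (ε ^ n)⁻¹ * (t ^ ((n : ℤ) - 2) * t ^ (q + 2)) := by ring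
      _ = M * B * (ε ^ n)⁻¹ * t ^ (n + q) := by rw [h4]
      _ ≤ K := by
          rw [hKdef]
          exact mul_le_mul_of_nonneg_left (pow_le_pow_left₀ ht0.le htle _)
            (mul_nonneg (mul_nonneg hM0 hB0) (by positivity))
  have hWcont : ContinuousOn W (Set.Ioc 0 (ρ * ε)) := by
    rw [hWdef]
    apply ContinuousOn.mul
    · apply ContinuousOn.mul
      · intro t ht
        exact (continuousAt_zpow₀ t ((n:ℤ)-2) (Or.inl (ne_of_gt ht.1))).continuousWithinAt
      · apply Continuous.continuousOn
        rw [hψdef]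
        exact continuous_const.mul (hφ₁.continuous.comp (by fun_prop))
    · apply ContinuousOn.sub
      · exact (hFU.continuousOn).mono
          (fun x hx => hIccU ⟨hx.1.le, le_trans hx.2 hρε⟩)
      · apply Continuous.continuousOn
        rw [hPdef]
        exact continuous_finset_sum _ (fun k _ => continuous_const.mul (continuous_pow k))
  have hWIoc : IntegrableOn W (Set.Ioc 0 (ρ * ε)) := by
    have hmeas : AEStronglyMeasurable W (volume.restrict (Set.Ioc 0 (ρ * ε))) :=
      hWcont.aestronglyMeasurable measurableSet_Ioc
    apply Integrable.mono'
      (integrableOn_const measure_Ioc_lt_top.ne : IntegrableOn (fun _ => K) _ _)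
      hmeas
    filter_upwards [ae_restrict_mem measurableSet_Ioc] with t ht
    simpa [Real.norm_eq_abs] using hWbound t ht
  have hWeq : Set.EqOn W ((Set.Ioc 0 (ρ * ε)).indicator W) (Set.Ioi 0) := by
    intro t ht
    by_cases h : t ∈ Set.Ioc 0 (ρ * ε)
    · rw [Set.indicator_of_mem h]
    · rw [Set.indicator_of_notMem h]
      have hlt : ρ * ε < t := by
        simp only [Set.mem_Ioc, not_and_or, not_le, not_lt] at h
        rcases h with h' | h'
        · exact absurd ht (by simpa using h'.not_gt)
        · exact h'
      rw [hWdef]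
      simp only [hψdef]
      rw [hvanψ t ht hlt.le]
      ring
  have hWint : IntegrableOn W (Set.Ioi 0) := by
    have h1 : IntegrableOn ((Set.Ioc 0 (ρ * ε)).indicator W) (Set.Ioi 0) :=
      ((hWIoc.integrable_indicator measurableSet_Ioc)).integrableOn
    exact h1.congr_fun (fun t ht => (hWeq ht).symm) measurableSet_Ioi
  have hWvol : (volume (Set.Ioc (0:ℝ) (ρ * ε))).toReal = ρ * ε := by
    rw [Real.volume_Ioc, sub_zero, ENNReal.toReal_ofReal (by positivity)]
  have hWval : |∫ t in Set.Ioi (0:ℝ), W t| ≤ K * (ρ * ε) := by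
    have h1 : (∫ t in Set.Ioi (0:ℝ), W t) = ∫ t in Set.Ioc (0:ℝ) (ρ * ε), W t := by
      rw [setIntegral_congr_fun measurableSet_Ioi hWeq,
        setIntegral_indicator measurableSet_Ioc]
      congr 1
      rw [Set.inter_eq_right.mpr Set.Ioc_subset_Ioi_self]
    rw [h1]
    have h2 := norm_setIntegral_le_of_norm_le_const (μ := volume)
      (s := Set.Ioc (0:ℝ) (ρ*ε)) (f := W) measure_Ioc_lt_top
      (fun x hx => by simpa [Real.norm_eq_abs] using hWbound x hx)
    rw [Real.norm_eq_abs] at h2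
    rw [Measure.real, hWvol] at h2
    exact h2
  have hSint : IntegrableOn (fun t => ∑ k ∈ Finset.range (q + 2), G k t) (Set.Ioi 0) :=
    integrable_finset_sum _ (fun k hk => (hGint k hk).1)
  have hSWint : IntegrableOn (fun t => (∑ k ∈ Finset.range (q + 2), G k t) + W t)
      (Set.Ioi 0) := hSint.add hWint
  have hHint : IntegrableOn H (Set.Ioi 0) :=
    hSWint.congr_fun (fun t ht => (hkey ht).symm) measurableSet_Ioi
  refine ⟨∫ t in Set.Ioi (0:ℝ), H t, aux_tendsto hHint, ?_⟩
  have hLval : (∫ t in Set.Ioi (0:ℝ), H t) =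
      2 * deriv f 0 / sphereArea n + ∫ t in Set.Ioi (0:ℝ), W t := by
    rw [setIntegral_congr_fun measurableSet_Ioi hkey, integral_add hSint hWint]
    congr 1
    rw [integral_finset_sum _ (fun k hk => (hGint k hk).1)]
    rw [Finset.sum_congr rfl (fun k hk => (hGint k hk).2)]
    rw [Finset.sum_ite_eq' (Finset.range (q+2)) 1 (fun _ => 2 * deriv f 0 / sphereArea n)]
    simp
  rw [hLval]
  have hsimp : 2 * deriv f 0 / sphereArea n + (∫ t in Set.Ioi (0:ℝ), W t) -
      2 / sphereArea n * deriv f 0 = ∫ t in Set.Ioi (0:ℝ), W t := by ring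
  rw [hsimp]
  calc |∫ t in Set.Ioi (0:ℝ), W t| ≤ K * (ρ * ε) := hWval
    _ = M * B * ρ ^ (n + q + 1) * ε ^ (q + 1) * ((ε ^ n)⁻¹ * ε ^ n) := by
        rw [hKdef, mul_pow]
        ring
    _ = M * B * ρ ^ (n + q + 1) * ε ^ (q + 1) := by
        rw [inv_mul_cancel₀ (ne_of_gt hεn), mul_one]
    _ ≤ (M * B * ρ ^ (n + q + 1) + 1) * ε ^ q := by
        have h1 : ε ^ (q + 1) = ε ^ q * ε := pow_succ ε q
        have h2 : (0:ℝ) ≤ ε ^ q := pow_nonneg hε.le q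
        nlinarith [mul_nonneg (mul_nonneg hCnonneg h2) (sub_nonneg.mpr hε1)]
end
end
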